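/- arXiv:1405.0431 — 9 statements merged into one kernel-verified Lean document; each statement's English description precedes it below -/
import Mathlib

section
/- Let (Ω, F, μ) be a measure space and let 1 < p ≤ 2. Then for all f, g : Ω → ℂ with f, g ∈ L^p(μ), one has ‖f+g‖_p² + ‖f−g‖_p² ≥ 2‖f‖_p² + 2(p−1)‖g‖_p². -/
open MeasureTheory

open Real Set
open scoped ENNReal

namespace BCLaux

variable {p : ℝ}

lemma claim1 {r : ℝ} (hp2 : p ≤ 2) (h1 : (0:ℝ) < 1 + r) (h2 : (0:ℝ) < 1 - r) :
    2 ≤ (1 + r) ^ (p - 2) + (1 - r) ^ (p - 2) := by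
  set a := (1 + r) ^ (p - 2) with ha'
  set b := (1 - r) ^ (p - 2) with hb'
  have ha : 0 < a := rpow_pos_of_pos h1 _
  have hb : 0 < b := rpow_pos_of_pos h2 _
  have hab : 1 ≤ a * b := by
    rw [ha', hb', ← mul_rpow h1.le h2.le]
    rcases eq_or_lt_of_le (show (1+r)*(1-r) ≤ 1 by nlinarith [sq_nonneg r]) with h | h
    · rw [h, one_rpow]
    · exact one_le_rpow_of_pos_of_le_one_of_nonpos (by nlinarith) h.le (by linarith)
  nlinarith [sq_nonneg (a - b)]

lemma claim2 {r : ℝ} (hp1 : 1 < p) (hp2 : p ≤ 2) :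
    (1 + (p-1)*r^2) ^ (p/2 - 2) * (1 + (p-1)^2*r^2) ≤ 1 := by
  have hc0 : 0 < p - 1 := by linarith
  have hcr : 0 ≤ (p-1)*r^2 := by positivity
  have hX : (0:ℝ) < 1 + (p-1)*r^2 := by linarith
  have hbern : 1 + (p-1)^2*r^2 ≤ (1 + (p-1)*r^2) ^ (2 - p/2) := by
    have h := one_add_mul_self_le_rpow_one_add (s := (p-1)*r^2) (by linarith)
      (p := 2 - p/2) (by linarith)
    have h2 : (p-1)^2*r^2 ≤ (2 - p/2)*((p-1)*r^2) := by
      have h3 : (0:ℝ) ≤ (2 - p/2 - (p-1)) * ((p-1)*r^2) :=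
        mul_nonneg (by linarith) hcr
      nlinarith
    linarith
  have hXpos : 0 < (1 + (p-1)*r^2) ^ (2 - p/2) := rpow_pos_of_pos hX _
  have heq : (1 + (p-1)*r^2) ^ (p/2 - 2) = ((1 + (p-1)*r^2) ^ (2 - p/2))⁻¹ := by
    rw [← rpow_neg hX.le]; ring_nf
  rw [heq, inv_mul_le_iff₀ hXpos, mul_one]
  exact hbern

/-- The real core inequality. -/
lemma coreR (hp1 : 1 < p) (hp2 : p ≤ 2) {r : ℝ} (hr0 : 0 ≤ r) (hr1 : r ≤ 1) :
    2 * (1 + (p-1)*r^2) ^ (p/2) ≤ (1+r)^p + (1-r)^p := by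
  have hp0 : (0:ℝ) < p := by linarith
  set c := p - 1 with hc
  have hc0 : 0 < c := by linarith
  set φ : ℝ → ℝ := fun y => (1+y)^p + (1-y)^p - 2*(1+c*y^2)^(p/2) with hφ
  set D1 : ℝ → ℝ := fun y =>
    p*(1+y)^(p-1) - p*(1-y)^(p-1) - 2*p*c*(y*(1+c*y^2)^(p/2-1)) with hD1def
  set D2 : ℝ → ℝ := fun y =>
    p*(p-1)*(1+y)^(p-2) + p*(p-1)*(1-y)^(p-2)
      - 2*p*c*((1+c*y^2)^(p/2-1) + (p-2)*(c*y^2)*(1+c*y^2)^(p/2-2)) with hD2def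
  have hXpos : ∀ y : ℝ, (0:ℝ) < 1 + c*y^2 := fun y => by positivity
  have hIX : ∀ x : ℝ, HasDerivAt (fun y => 1 + c*y^2) (c * (2*x^1)) x := by
    intro x
    exact ((hasDerivAt_pow 2 x).const_mul c).const_add 1
  have hD1 : ∀ x ∈ Ioo (-1:ℝ) 1, HasDerivAt φ (D1 x) x := by
    rintro x ⟨hx1, hx2⟩
    have h1 : (0:ℝ) < 1 + x := by linarith
    have h2 : (0:ℝ) < 1 - x := by linarith
    have f1 : HasDerivAt (fun y : ℝ => (1+y)^p) (1 * p * (1+x)^(p-1)) x :=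
      (((hasDerivAt_id x).const_add 1)).rpow_const (Or.inr hp1.le)
    have f2 : HasDerivAt (fun y : ℝ => (1-y)^p) ((-1) * p * (1-x)^(p-1)) x :=
      ((hasDerivAt_id x).const_sub 1).rpow_const (Or.inr hp1.le)
    have f3 : HasDerivAt (fun y : ℝ => (1+c*y^2)^(p/2))
        ((c*(2*x^1)) * (p/2) * (1+c*x^2)^(p/2-1)) x :=
      (hIX x).rpow_const (Or.inl (hXpos x).ne')
    have h := (f1.add f2).sub (f3.const_mul 2)
    refine h.congr_deriv ?_
    simp only [hD1def]; ring
  have hD2 : ∀ x ∈ Ioo (-1:ℝ) 1, HasDerivAt D1 (D2 x) x := by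
    rintro x ⟨hx1, hx2⟩
    have h1 : (0:ℝ) < 1 + x := by linarith
    have h2 : (0:ℝ) < 1 - x := by linarith
    have g1 : HasDerivAt (fun y : ℝ => (1+y)^(p-1)) (1 * (p-1) * (1+x)^(p-1-1)) x :=
      ((hasDerivAt_id x).const_add 1).rpow_const (Or.inl h1.ne')
    have g2 : HasDerivAt (fun y : ℝ => (1-y)^(p-1)) ((-1) * (p-1) * (1-x)^(p-1-1)) x :=
      ((hasDerivAt_id x).const_sub 1).rpow_const (Or.inl h2.ne')
    have g3i : HasDerivAt (fun y : ℝ => (1+c*y^2)^(p/2-1))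
        ((c*(2*x^1)) * (p/2-1) * (1+c*x^2)^(p/2-1-1)) x :=
      (hIX x).rpow_const (Or.inl (hXpos x).ne')
    have g3 : HasDerivAt (fun y : ℝ => y*(1+c*y^2)^(p/2-1))
        (1 * ((1+c*x^2)^(p/2-1)) + x * ((c*(2*x^1)) * (p/2-1) * (1+c*x^2)^(p/2-1-1))) x :=
      (hasDerivAt_id x).mul g3i
    have h := ((g1.const_mul p).sub (g2.const_mul p)).sub (g3.const_mul (2*p*c))
    rw [show p - 1 - 1 = p - 2 by ring, show p/2 - 1 - 1 = p/2 - 2 by ring] at h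
    refine h.congr_deriv ?_
    simp only [hD2def]; ring
  have hD2pos : ∀ x ∈ Ioo (-1:ℝ) 1, 0 ≤ D2 x := by
    rintro x ⟨hx1, hx2⟩
    have h1 : (0:ℝ) < 1 + x := by linarith
    have h2 : (0:ℝ) < 1 - x := by linarith
    have hcl1 := claim1 (r := x) hp2 h1 h2
    have hcl2 := claim2 (r := x) hp1 hp2
    have hX := hXpos x
    have hbr : (1+c*x^2)^(p/2-1) + (p-2)*(c*x^2)*(1+c*x^2)^(p/2-2)
        = (1+c*x^2)^(p/2-2) * (1 + (p-1)^2*x^2) := by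
      have hsplit : (1+c*x^2)^(p/2-1) = (1+c*x^2)^(p/2-2) * (1+c*x^2) := by
        rw [← Real.rpow_add_one hX.ne']
        ring_nf
      rw [hsplit, hc]
      ring
    have hle1 : (1+c*x^2)^(p/2-1) + (p-2)*(c*x^2)*(1+c*x^2)^(p/2-2) ≤ 1 := by
      rw [hbr, hc]; exact hcl2
    simp only [hD2def]
    have hpc : 0 < p * (p-1) := by nlinarith
    nlinarith [hpc]
  -- D1 is nonneg on [0,1)
  have hD1zero : D1 0 = 0 := by
    simp only [hD1def]
    norm_num
  have hD1nonneg : ∀ x : ℝ, 0 ≤ x → x < 1 → 0 ≤ D1 x := by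
    intro x hx0 hx1
    have hsub : Icc (0:ℝ) x ⊆ Ioo (-1:ℝ) 1 := fun z hz =>
      ⟨by linarith [hz.1], lt_of_le_of_lt hz.2 hx1⟩
    have hmono : MonotoneOn D1 (Icc 0 x) := by
      apply monotoneOn_of_deriv_nonneg (convex_Icc 0 x)
      · intro z hz
        exact (hD2 z (hsub hz)).continuousAt.continuousWithinAt
      · intro z hz
        rw [interior_Icc] at hz
        exact (hD2 z (hsub (Ioo_subset_Icc_self hz))).differentiableAt.differentiableWithinAt
      · intro z hz
        rw [interior_Icc] at hz
        rw [(hD2 z (hsub (Ioo_subset_Icc_self hz))).deriv]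
        exact hD2pos z (hsub (Ioo_subset_Icc_self hz))
    have := hmono (left_mem_Icc.2 hx0) (right_mem_Icc.2 hx0) hx0
    rwa [hD1zero] at this
  have hφzero : φ 0 = 0 := by
    simp only [hφ]
    norm_num
  have key : ∀ s : ℝ, 0 ≤ s → s < 1 → 0 ≤ φ s := by
    intro s hs0 hs1
    have hsub : Icc (0:ℝ) s ⊆ Ioo (-1:ℝ) 1 := fun z hz =>
      ⟨by linarith [hz.1], lt_of_le_of_lt hz.2 hs1⟩
    have hmono : MonotoneOn φ (Icc 0 s) := by
      apply monotoneOn_of_deriv_nonneg (convex_Icc 0 s)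
      · intro z hz
        exact (hD1 z (hsub hz)).continuousAt.continuousWithinAt
      · intro z hz
        rw [interior_Icc] at hz
        exact (hD1 z (hsub (Ioo_subset_Icc_self hz))).differentiableAt.differentiableWithinAt
      · intro z hz
        rw [interior_Icc] at hz
        rw [(hD1 z (hsub (Ioo_subset_Icc_self hz))).deriv]
        exact hD1nonneg z hz.1.le (lt_of_lt_of_le hz.2 (by linarith [hs1.le]))
    have := hmono (left_mem_Icc.2 hs0) (right_mem_Icc.2 hs0) hs0
    rwa [hφzero] at this
  rcases lt_or_eq_of_le hr1 with hlt | heq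
  · have := key r hr0 hlt
    simp only [hφ] at this
    linarith
  · -- r = 1 : limit argument
    subst heq
    have hcont : ContinuousAt φ 1 := by
      have c1 : ContinuousAt (fun y : ℝ => (1+y)^p) 1 := by
        apply ContinuousAt.rpow_const (by fun_prop)
        left; norm_num
      have c2 : ContinuousAt (fun y : ℝ => (1-y)^p) 1 := by
        apply ContinuousAt.rpow_const (by fun_prop)
        right; linarith
      have c3 : ContinuousAt (fun y : ℝ => (1+c*y^2)^(p/2)) 1 :=
        ContinuousAt.rpow_const (by fun_prop) (Or.inl (hXpos 1).ne')
      exact (c1.add c2).sub (continuousAt_const.mul c3)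
    have htend : Filter.Tendsto φ (nhdsWithin 1 (Iio 1)) (nhds (φ 1)) :=
      hcont.continuousWithinAt.tendsto
    have hev : ∀ᶠ y in nhdsWithin 1 (Iio 1), 0 ≤ φ y := by
      filter_upwards [Ioo_mem_nhdsLT_of_mem (by norm_num : (1:ℝ) ∈ Ioc 0 1)] with y hy
      exact key y hy.1.le hy.2
    have h0 : 0 ≤ φ 1 := ge_of_tendsto htend hev
    simp only [hφ] at h0
    linarith

lemma concave_four {φ : ℝ → ℝ} (hφ : ConcaveOn ℝ (Ici 0) φ)
    {a b c d : ℝ} (ha : 0 ≤ a) (hab : a ≤ b) (hbd : b ≤ d) (habcd : a + d = b + c) :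
    φ a + φ d ≤ φ b + φ c := by
  rcases eq_or_lt_of_le (hab.trans hbd) with heq | had
  · have hb : b = a := le_antisymm (heq ▸ hbd) hab
    have hc : c = a := by linarith
    have hd : d = a := heq.symm
    rw [hb, hc, hd]
  · have hda : 0 < d - a := by linarith
    have hd0 : 0 ≤ d := by linarith
    set lam := (d - b)/(d - a) with hlam
    set mu := (b - a)/(d - a) with hmu
    have hl0 : 0 ≤ lam := div_nonneg (by linarith) hda.le
    have hm0 : 0 ≤ mu := div_nonneg (by linarith) hda.le
    have hlm : lam + mu = 1 := by rw [hlam, hmu]; field_simp; ring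
    have hb' : lam * a + mu * d = b := by rw [hlam, hmu]; field_simp; ring
    have hc' : mu * a + lam * d = c := by
      have hcval : c = a + d - b := by linarith
      rw [hcval, hlam, hmu]; field_simp; ring
    have h1 := hφ.2 (mem_Ici.2 ha) (mem_Ici.2 hd0) hl0 hm0 hlm
    have h2 := hφ.2 (mem_Ici.2 ha) (mem_Ici.2 hd0) hm0 hl0 (by linarith)
    simp only [smul_eq_mul] at h1 h2
    rw [hb'] at h1
    rw [hc'] at h2
    have hexp : φ a + φ d = (lam * φ a + mu * φ d) + (mu * φ a + lam * φ d) := by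
      have hlm' : lam = 1 - mu := by linarith
      rw [hlm']; ring
    linarith [h1, h2]

lemma coreR2' (hp1 : 1 < p) (hp2 : p ≤ 2) {x y : ℝ} (hy : 0 ≤ y) (hyx : y ≤ x) :
    2 * (x^2 + (p-1)*y^2) ^ (p/2) ≤ (x+y)^p + (x-y)^p := by
  have hx : 0 ≤ x := hy.trans hyx
  rcases eq_or_lt_of_le hx with heq | hxpos
  · have hy0 : y = 0 := le_antisymm (heq ▸ hyx) hy
    rw [← heq, hy0]
    norm_num
    rw [Real.zero_rpow (by positivity : p/2 ≠ 0), Real.zero_rpow (by positivity : p ≠ 0)]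
    norm_num
  · have hr := coreR hp1 hp2 (r := y/x) (div_nonneg hy hxpos.le) ((div_le_one hxpos).2 hyx)
    have hxp : (0:ℝ) < x ^ p := rpow_pos_of_pos hxpos p
    have hx2p : (x^2 : ℝ) ^ (p/2) = x ^ p := by
      rw [← Real.rpow_natCast x 2, ← Real.rpow_mul hxpos.le]
      congr 1
      push_cast; ring
    have eq1 : x^p * (1+y/x)^p = (x+y)^p := by
      rw [← mul_rpow hxpos.le (by have := div_nonneg hy hxpos.le; linarith)]
      congr 1
      field_simp
    have eq2 : x^p * (1-y/x)^p = (x-y)^p := by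
      have h1 : (0:ℝ) ≤ 1 - y/x := by
        rw [sub_nonneg]; exact (div_le_one hxpos).2 hyx
      rw [← mul_rpow hxpos.le h1]
      congr 1
      field_simp
    have hpy : (0:ℝ) ≤ (p-1)*(y/x)^2 := mul_nonneg (by linarith) (sq_nonneg _)
    have hpy2 : (0:ℝ) ≤ (p-1)*y^2 := mul_nonneg (by linarith) (sq_nonneg _)
    have eq3 : x^p * (1+(p-1)*(y/x)^2)^(p/2) = (x^2+(p-1)*y^2)^(p/2) := by
      rw [← hx2p, ← mul_rpow (by positivity) (by linarith)]
      congr 1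
      field_simp
    have := mul_le_mul_of_nonneg_left hr hxp.le
    calc 2 * (x^2 + (p-1)*y^2) ^ (p/2) = x^p * (2 * (1+(p-1)*(y/x)^2)^(p/2)) := by
          rw [← eq3]; ring
      _ ≤ x^p * ((1+y/x)^p + (1-y/x)^p) := this
      _ = (x+y)^p + (x-y)^p := by rw [mul_add, eq1, eq2]

lemma coreR2 (hp1 : 1 < p) (hp2 : p ≤ 2) {x y : ℝ} (hx : 0 ≤ x) (hy : 0 ≤ y) :
    2 * (x^2 + (p-1)*y^2) ^ (p/2) ≤ (x+y)^p + |x-y|^p := by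
  rcases le_total y x with h | h
  · rw [abs_of_nonneg (by linarith)]
    exact coreR2' hp1 hp2 hy h
  · rw [abs_of_nonpos (by linarith), neg_sub]
    have h1 := coreR2' hp1 hp2 hx h
    have h2 : (x^2 + (p-1)*y^2 : ℝ) ≤ y^2 + (p-1)*x^2 := by
      have h4 : (0:ℝ) ≤ (2-p)*(y^2-x^2) := mul_nonneg (by linarith) (by nlinarith)
      linarith
    have hpy2 : (0:ℝ) ≤ (p-1)*y^2 := mul_nonneg (by linarith) (sq_nonneg _)
    have h3 : (x^2 + (p-1)*y^2 : ℝ) ^ (p/2) ≤ (y^2 + (p-1)*x^2) ^ (p/2) :=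
      rpow_le_rpow (by have := sq_nonneg x; linarith) h2 (by positivity)
    calc 2 * (x^2 + (p-1)*y^2) ^ (p/2) ≤ 2 * (y^2 + (p-1)*x^2) ^ (p/2) := by linarith
      _ ≤ (y+x)^p + (y-x)^p := coreR2' hp1 hp2 hx h
      _ = (x+y)^p + (y-x)^p := by rw [add_comm y x]

lemma coreC (hp1 : 1 < p) (hp2 : p ≤ 2) (a b : ℂ) :
    2 * (‖a‖ ^ 2 + (p-1) * ‖b‖ ^ 2) ^ (p/2)
      ≤ ‖a+b‖ ^ p + ‖a-b‖ ^ p := by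
  have hq0 : (0:ℝ) ≤ p/2 := by linarith
  have hq1 : p/2 ≤ 1 := by linarith
  have hconc := Real.concaveOn_rpow hq0 hq1
  set A := ‖a‖ ^ 2 + ‖b‖ ^ 2 with hA
  set B := 2 * (a * (starRingEnd ℂ) b).re with hB
  have habs : |B| ≤ 2 * (‖a‖ * ‖b‖) := by
    rw [hB, abs_mul, abs_two]
    have h1 : |(a * (starRingEnd ℂ) b).re| ≤ ‖a * (starRingEnd ℂ) b‖ :=
      Complex.abs_re_le_norm _
    rw [norm_mul, Complex.norm_conj] at h1
    linarith
  have hA2m : A - 2 * (‖a‖ * ‖b‖) = (‖a‖ - ‖b‖)^2 := by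
    rw [hA]; ring
  have hA2p : A + 2 * (‖a‖ * ‖b‖) = (‖a‖ + ‖b‖)^2 := by
    rw [hA]; ring
  have hsq : ∀ t : ℝ, 0 ≤ t → (t^2 : ℝ) ^ (p/2) = t ^ p := by
    intro t ht
    rcases eq_or_lt_of_le ht with h | h
    · rw [← h]
      norm_num
      rw [Real.zero_rpow (by positivity : p/2 ≠ 0), Real.zero_rpow (by positivity : p ≠ 0)]
    · rw [← Real.rpow_natCast t 2, ← Real.rpow_mul h.le]
      congr 1
      push_cast; ring
  have hfour : ((‖a‖ - ‖b‖)^2 : ℝ) ^ (p/2)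
        + ((‖a‖ + ‖b‖)^2 : ℝ) ^ (p/2)
      ≤ (A - |B|) ^ (p/2) + (A + |B|) ^ (p/2) := by
    rw [← hA2m, ← hA2p]
    exact concave_four hconc (by rw [hA2m]; positivity) (by linarith) (by linarith [abs_nonneg B, mul_nonneg (norm_nonneg a) (norm_nonneg b)]) (by ring)
  have hplus : A + B = ‖a+b‖ ^ 2 := by
    rw [hA, hB, Complex.sq_norm, Complex.sq_norm, Complex.sq_norm, Complex.normSq_add]
  have hminus : A - B = ‖a-b‖ ^ 2 := by
    rw [hA, hB, Complex.sq_norm, Complex.sq_norm, Complex.sq_norm, Complex.normSq_sub]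
  have hABs : (A - |B|) ^ (p/2) + (A + |B|) ^ (p/2)
      = ‖a+b‖ ^ p + ‖a-b‖ ^ p := by
    rcases abs_cases B with ⟨h1, _⟩ | ⟨h1, _⟩
    · rw [h1, hplus, hminus, hsq _ (norm_nonneg _), hsq _ (norm_nonneg _)]
      ring
    · rw [h1]
      have e1 : A - -B = A + B := by ring
      have e2 : A + -B = A - B := by ring
      rw [e1, e2, hplus, hminus, hsq _ (norm_nonneg _), hsq _ (norm_nonneg _)]
  have e4 : ((‖a‖ - ‖b‖)^2 : ℝ)^(p/2)
      = |‖a‖ - ‖b‖| ^ p := by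
    rw [← sq_abs, hsq _ (abs_nonneg _)]
  have e5 : ((‖a‖ + ‖b‖)^2 : ℝ)^(p/2)
      = (‖a‖ + ‖b‖) ^ p :=
    hsq _ (by positivity)
  calc 2 * (‖a‖ ^ 2 + (p-1) * ‖b‖ ^ 2) ^ (p/2)
      ≤ (‖a‖ + ‖b‖)^p + |‖a‖ - ‖b‖|^p :=
        coreR2 hp1 hp2 (norm_nonneg a) (norm_nonneg b)
    _ = ((‖a‖ - ‖b‖)^2 : ℝ)^(p/2)
        + ((‖a‖ + ‖b‖)^2 : ℝ)^(p/2) := by rw [e4, e5]; ring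
    _ ≤ (A - |B|) ^ (p/2) + (A + |B|) ^ (p/2) := hfour
    _ = ‖a+b‖ ^ p + ‖a-b‖ ^ p := hABs


open ENNReal MeasureTheory in
lemma coreE (hp1 : 1 < p) (hp2 : p ≤ 2) (a b : ℂ) :
    2 * ((‖a‖₊ : ℝ≥0∞) ^ (2:ℝ) + ENNReal.ofReal (p-1) * (‖b‖₊ : ℝ≥0∞) ^ (2:ℝ)) ^ (p/2)
      ≤ (‖a+b‖₊ : ℝ≥0∞) ^ p + (‖a-b‖₊ : ℝ≥0∞) ^ p := by
  have hp0 : (0:ℝ) < p := by linarith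
  have hsq : ∀ z : ℂ, ((‖z‖₊ : ℝ≥0∞)) ^ (2:ℝ) = ENNReal.ofReal (‖z‖ ^ 2) := by
    intro z
    rw [← enorm_eq_nnnorm, ← ofReal_norm, ENNReal.ofReal_rpow_of_nonneg (norm_nonneg z) (by norm_num),
      Real.rpow_two]
  have hpw : ∀ z : ℂ, ((‖z‖₊ : ℝ≥0∞)) ^ p = ENNReal.ofReal (‖z‖ ^ p) := by
    intro z
    rw [← enorm_eq_nnnorm, ← ofReal_norm, ENNReal.ofReal_rpow_of_nonneg (norm_nonneg z) hp0.le]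
  have hb2 : (0:ℝ) ≤ (p-1) * ‖b‖ ^ 2 := mul_nonneg (by linarith) (sq_nonneg _)
  calc 2 * ((‖a‖₊ : ℝ≥0∞) ^ (2:ℝ) + ENNReal.ofReal (p-1) * (‖b‖₊ : ℝ≥0∞) ^ (2:ℝ)) ^ (p/2)
      = ENNReal.ofReal (2 * (‖a‖ ^ 2 + (p-1) * ‖b‖ ^ 2) ^ (p/2)) := by
        rw [hsq, hsq, ← ENNReal.ofReal_mul (by linarith),
          ← ENNReal.ofReal_add (sq_nonneg _) hb2,
          ENNReal.ofReal_rpow_of_nonneg (by positivity) (by positivity),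
          ENNReal.ofReal_mul (by norm_num), ENNReal.ofReal_ofNat]
    _ ≤ ENNReal.ofReal (‖a+b‖ ^ p + ‖a-b‖ ^ p) :=
        ENNReal.ofReal_le_ofReal (coreC hp1 hp2 a b)
    _ = (‖a+b‖₊ : ℝ≥0∞) ^ p + (‖a-b‖₊ : ℝ≥0∞) ^ p := by
        rw [ENNReal.ofReal_add (by positivity) (by positivity), hpw, hpw]

open MeasureTheory in
lemma revMink {Ω : Type*} [MeasurableSpace Ω] (μ : Measure Ω) {u v : Ω → ℝ≥0∞}
    (hu : AEMeasurable u μ) (hv : AEMeasurable v μ) {q : ℝ} (hq0 : 0 < q) (hq1 : q ≤ 1) :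
    (∫⁻ x, (u x) ^ q ∂μ) ^ (1/q) + (∫⁻ x, (v x) ^ q ∂μ) ^ (1/q)
      ≤ (∫⁻ x, (u x + v x) ^ q ∂μ) ^ (1/q) := by
  have h1q : 0 < 1/q := by positivity
  set Iu := ∫⁻ x, (u x) ^ q ∂μ with hIu
  set Iv := ∫⁻ x, (v x) ^ q ∂μ with hIv
  set Iw := ∫⁻ x, (u x + v x) ^ q ∂μ with hIw
  have hmonu : Iu ≤ Iw := lintegral_mono fun x => ENNReal.rpow_le_rpow le_self_add hq0.le
  have hmonv : Iv ≤ Iw := lintegral_mono fun x => ENNReal.rpow_le_rpow le_add_self hq0.le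
  -- zero cases
  rcases eq_or_ne Iu 0 with hu0 | hu0
  · have huz : u =ᵐ[μ] 0 := by
      have h := (lintegral_eq_zero_iff' (hu.pow aemeasurable_const)).1 hu0
      filter_upwards [h] with x hx
      simpa [ENNReal.rpow_eq_zero_iff, hq0, hq0.not_gt] using hx
    have : Iw = Iv := by
      apply lintegral_congr_ae
      filter_upwards [huz] with x hx
      simp [hx]
    rw [hu0, this, ENNReal.zero_rpow_of_pos h1q, zero_add]
  rcases eq_or_ne Iv 0 with hv0 | hv0
  · have hvz : v =ᵐ[μ] 0 := by
      have h := (lintegral_eq_zero_iff' (hv.pow aemeasurable_const)).1 hv0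
      filter_upwards [h] with x hx
      simpa [ENNReal.rpow_eq_zero_iff, hq0, hq0.not_gt] using hx
    have : Iw = Iu := by
      apply lintegral_congr_ae
      filter_upwards [hvz] with x hx
      simp [hx]
    rw [hv0, this, ENNReal.zero_rpow_of_pos h1q, add_zero]
  rcases eq_or_ne Iu ∞ with hut | hut
  · have : Iw = ∞ := eq_top_mono hmonu hut
    rw [this, ENNReal.top_rpow_of_pos h1q]
    exact le_top
  rcases eq_or_ne Iv ∞ with hvt | hvt
  · have : Iw = ∞ := eq_top_mono hmonv hvt
    rw [this, ENNReal.top_rpow_of_pos h1q]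
    exact le_top
  -- main case
  set α := Iu ^ (1/q) with hα
  set β := Iv ^ (1/q) with hβ
  have hα0 : α ≠ 0 := by simp [hα, ENNReal.rpow_eq_zero_iff, hu0, hut, h1q, h1q.not_gt]
  have hαt : α ≠ ∞ := by simp [hα, ENNReal.rpow_eq_top_iff, hu0, hut, h1q, h1q.not_gt]
  have hβ0 : β ≠ 0 := by simp [hβ, ENNReal.rpow_eq_zero_iff, hv0, hvt, h1q, h1q.not_gt]
  have hβt : β ≠ ∞ := by simp [hβ, ENNReal.rpow_eq_top_iff, hv0, hvt, h1q, h1q.not_gt]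
  have hαq : α ^ q = Iu := by
    rw [hα, ← ENNReal.rpow_mul, one_div, inv_mul_cancel₀ hq0.ne', ENNReal.rpow_one]
  have hβq : β ^ q = Iv := by
    rw [hβ, ← ENNReal.rpow_mul, one_div, inv_mul_cancel₀ hq0.ne', ENNReal.rpow_one]
  have hs0 : α + β ≠ 0 := by simp [hα0]
  have hst : α + β ≠ ∞ := by simp [hαt, hβt]
  have hw : α/(α+β) + β/(α+β) = 1 := by
    rw [ENNReal.div_add_div_same, ENNReal.div_self hs0 hst]
  have hpoint : ∀ x : Ω, α/(α+β) * (u x/α) ^ q + β/(α+β) * (v x/β) ^ q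
      ≤ ((u x + v x)/(α+β)) ^ q := by
    intro x
    have h1 := ENNReal.rpow_arith_mean_le_arith_mean2_rpow (α/(α+β)) (β/(α+β))
      ((u x/α) ^ q) ((v x/β) ^ q) hw (p := 1/q) (by rw [le_div_iff₀ hq0]; linarith)
    rw [← ENNReal.rpow_mul, ← ENNReal.rpow_mul, mul_one_div_cancel hq0.ne',
      ENNReal.rpow_one, ENNReal.rpow_one] at h1
    have h2 : α/(α+β) * (u x/α) + β/(α+β) * (v x/β) = (u x + v x)/(α+β) := by
      rw [div_eq_mul_inv α, div_eq_mul_inv β, div_eq_mul_inv (u x), div_eq_mul_inv (v x),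
        div_eq_mul_inv (u x + v x)]
      calc α * (α+β)⁻¹ * (u x * α⁻¹) + β * (α+β)⁻¹ * (v x * β⁻¹)
          = (α * α⁻¹) * (u x * (α+β)⁻¹) + (β * β⁻¹) * (v x * (α+β)⁻¹) := by ring
        _ = (u x + v x) * (α+β)⁻¹ := by
            rw [ENNReal.mul_inv_cancel hα0 hαt, ENNReal.mul_inv_cancel hβ0 hβt]
            ring
    calc α/(α+β) * (u x/α) ^ q + β/(α+β) * (v x/β) ^ q
        = ((α/(α+β) * (u x/α) ^ q + β/(α+β) * (v x/β) ^ q) ^ (1/q)) ^ q := by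
          rw [← ENNReal.rpow_mul, one_div, inv_mul_cancel₀ hq0.ne', ENNReal.rpow_one]
      _ ≤ (α/(α+β) * (u x/α) + β/(α+β) * (v x/β)) ^ q := ENNReal.rpow_le_rpow h1 hq0.le
      _ = ((u x + v x)/(α+β)) ^ q := by rw [h2]
  have hInt : (1:ℝ≥0∞) ≤ Iw / (α+β) ^ q := by
    have hint1 : ∫⁻ x, (α/(α+β) * (u x/α) ^ q + β/(α+β) * (v x/β) ^ q) ∂μ
        = α/(α+β) + β/(α+β) := by
      have hmu : AEMeasurable (fun x => (u x/α) ^ q) μ :=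
        (hu.div_const α).pow aemeasurable_const
      have hmv : AEMeasurable (fun x => (v x/β) ^ q) μ :=
        (hv.div_const β).pow aemeasurable_const
      rw [lintegral_add_left' (by exact (aemeasurable_const (b := α/(α+β))).mul hmu :
          AEMeasurable (fun x => α/(α+β) * (u x/α) ^ q) μ) _,
        lintegral_const_mul'' _ hmu, lintegral_const_mul'' _ hmv]
      have e1 : ∫⁻ x, (u x/α) ^ q ∂μ = 1 := by
        simp_rw [ENNReal.div_rpow_of_nonneg _ _ hq0.le, div_eq_mul_inv]
        rw [lintegral_mul_const'' _ (hu.pow aemeasurable_const), hαq,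
          ENNReal.mul_inv_cancel hu0 hut]
      have e2 : ∫⁻ x, (v x/β) ^ q ∂μ = 1 := by
        simp_rw [ENNReal.div_rpow_of_nonneg _ _ hq0.le, div_eq_mul_inv]
        rw [lintegral_mul_const'' _ (hv.pow aemeasurable_const), hβq,
          ENNReal.mul_inv_cancel hv0 hvt]
      rw [e1, e2, mul_one, mul_one]
    have hint2 : ∫⁻ x, ((u x + v x)/(α+β)) ^ q ∂μ = Iw / (α+β) ^ q := by
      simp_rw [ENNReal.div_rpow_of_nonneg _ _ hq0.le, div_eq_mul_inv]
      rw [lintegral_mul_const'' _ (by exact (hu.add hv).pow aemeasurable_const :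
        AEMeasurable (fun x => (u x + v x) ^ q) μ), ← div_eq_mul_inv]
    calc (1:ℝ≥0∞) = α/(α+β) + β/(α+β) := hw.symm
      _ = ∫⁻ x, (α/(α+β) * (u x/α) ^ q + β/(α+β) * (v x/β) ^ q) ∂μ := hint1.symm
      _ ≤ ∫⁻ x, ((u x + v x)/(α+β)) ^ q ∂μ := lintegral_mono hpoint
      _ = Iw / (α+β) ^ q := hint2
  have hb0 : (α+β) ^ q ≠ 0 := by
    simp [ENNReal.rpow_eq_zero_iff, hs0, hst, hq0.not_gt]
  have hbt : (α+β) ^ q ≠ ∞ := ENNReal.rpow_ne_top_of_nonneg hq0.le hst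
  have hfin : (α+β) ^ q ≤ Iw := by
    have h := (ENNReal.le_div_iff_mul_le (Or.inl hb0) (Or.inl hbt)).1 hInt
    rwa [one_mul] at h
  calc α + β = ((α+β) ^ q) ^ (1/q) := by
        rw [← ENNReal.rpow_mul, mul_one_div_cancel hq0.ne', ENNReal.rpow_one]
    _ ≤ Iw ^ (1/q) := ENNReal.rpow_le_rpow hfin h1q.le

end BCLaux


open MeasureTheory in
/-- **Ball–Carlen–Lieb convexity inequality**, commutative (measure-space) case,
`1 < p ≤ 2`: for `f, g ∈ L^p(μ)`,
`‖f+g‖_p² + ‖f−g‖_p² ≥ 2‖f‖_p² + 2(p−1)‖g‖_p²`. -/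
theorem bcl_convexity_le_two {Ω : Type*} [MeasurableSpace Ω] (μ : Measure Ω)
    (p : ℝ) (hp1 : 1 < p) (hp2 : p ≤ 2) (f g : Ω → ℂ)
    (hf : MemLp f (ENNReal.ofReal p) μ) (hg : MemLp g (ENNReal.ofReal p) μ) :
    (eLpNorm (f + g) (ENNReal.ofReal p) μ).toReal ^ 2
      + (eLpNorm (f - g) (ENNReal.ofReal p) μ).toReal ^ 2
    ≥ 2 * (eLpNorm f (ENNReal.ofReal p) μ).toReal ^ 2
      + 2 * (p - 1) * (eLpNorm g (ENNReal.ofReal p) μ).toReal ^ 2 := by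
  have hp0 : (0:ℝ) < p := by linarith
  set q0 : ℝ≥0∞ := ENNReal.ofReal p with hq0def
  have hq0ne : q0 ≠ 0 := by
    simp only [hq0def, ne_eq, ENNReal.ofReal_eq_zero, not_le]
    linarith
  have hq0top : q0 ≠ ∞ := ENNReal.ofReal_ne_top
  have hqr : q0.toReal = p := ENNReal.toReal_ofReal hp0.le
  have hfg : MemLp (f+g) q0 μ := hf.add hg
  have hfg' : MemLp (f-g) q0 μ := hf.sub hg
  set c : ℝ≥0∞ := ENNReal.ofReal (p-1) with hcdef
  set I1 := ∫⁻ x, ((‖(f+g) x‖₊ : ℝ≥0∞)) ^ p ∂μ with hI1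
  set I2 := ∫⁻ x, ((‖(f-g) x‖₊ : ℝ≥0∞)) ^ p ∂μ with hI2
  set If := ∫⁻ x, ((‖f x‖₊ : ℝ≥0∞)) ^ p ∂μ with hIf
  set Ig := ∫⁻ x, ((‖g x‖₊ : ℝ≥0∞)) ^ p ∂μ with hIg
  set u : Ω → ℝ≥0∞ := fun x => (‖f x‖₊ : ℝ≥0∞) ^ (2:ℝ) with hu
  set v : Ω → ℝ≥0∞ := fun x => c * (‖g x‖₊ : ℝ≥0∞) ^ (2:ℝ) with hv
  set J := ∫⁻ x, (u x + v x) ^ (p/2) ∂μ with hJ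
  have hq2 : (0:ℝ) < p/2 := by linarith
  have hsn : ∀ h : Ω → ℂ, eLpNorm h q0 μ = (∫⁻ x, ((‖h x‖₊ : ℝ≥0∞)) ^ p ∂μ) ^ (1/p) := by
    intro h
    rw [eLpNorm_eq_lintegral_rpow_enorm_toReal hq0ne hq0top, hqr]; rfl
  have hmf : AEMeasurable u μ := hf.aestronglyMeasurable.enorm.pow aemeasurable_const
  have hmg : AEMeasurable v μ :=
    aemeasurable_const.mul (hg.aestronglyMeasurable.enorm.pow aemeasurable_const)
  have step1 : 2 * J ≤ I1 + I2 := by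
    rw [hJ, ← lintegral_const_mul' _ _ (by norm_num : (2:ℝ≥0∞) ≠ ∞)]
    have hle : ∀ x, 2 * (u x + v x) ^ (p/2)
        ≤ (‖(f+g) x‖₊ : ℝ≥0∞) ^ p + (‖(f-g) x‖₊ : ℝ≥0∞) ^ p := by
      intro x
      have h := BCLaux.coreE hp1 hp2 (f x) (g x)
      simpa [hu, hv, hcdef] using h
    calc ∫⁻ x, 2 * (u x + v x) ^ (p/2) ∂μ
        ≤ ∫⁻ x, ((‖(f+g) x‖₊ : ℝ≥0∞) ^ p + (‖(f-g) x‖₊ : ℝ≥0∞) ^ p) ∂μ := lintegral_mono hle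
      _ = I1 + I2 :=
          lintegral_add_left' (hfg.aestronglyMeasurable.enorm.pow aemeasurable_const) _
  have hIfJ : If ^ (2/p) + c * Ig ^ (2/p) ≤ J ^ (2/p) := by
    have h := BCLaux.revMink μ hmf hmg hq2 (by linarith : p/2 ≤ 1)
    have e0 : 1/(p/2) = 2/p := by
      field_simp
    have e1 : ∫⁻ x, (u x) ^ (p/2) ∂μ = If := by
      simp only [hu]
      simp_rw [← ENNReal.rpow_mul, show (2:ℝ)*(p/2) = p by ring]
      rw [hIf]
    have e2 : ∫⁻ x, (v x) ^ (p/2) ∂μ = c ^ (p/2) * Ig := by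
      simp only [hv]
      simp_rw [ENNReal.mul_rpow_of_nonneg _ _ hq2.le, ← ENNReal.rpow_mul,
        show (2:ℝ)*(p/2) = p by ring]
      rw [lintegral_const_mul' _ _ (ENNReal.rpow_ne_top_of_nonneg hq2.le ENNReal.ofReal_ne_top)]
    rw [e0, e1, e2] at h
    have e3 : (c ^ (p/2) * Ig) ^ (2/p) = c * Ig ^ (2/p) := by
      rw [ENNReal.mul_rpow_of_nonneg _ _ (by positivity : (0:ℝ) ≤ 2/p), ← ENNReal.rpow_mul,
        show (p/2)*(2/p) = 1 by field_simp, ENNReal.rpow_one]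
    rwa [e3] at h
  have hs1 : (1:ℝ) ≤ 2/p := by
    rw [le_div_iff₀ hp0]; linarith
  have pm : 2 * ((I1 + I2)/2) ^ (2/p) ≤ I1 ^ (2/p) + I2 ^ (2/p) := by
    have h := ENNReal.rpow_arith_mean_le_arith_mean2_rpow (1/2) (1/2) I1 I2
      (ENNReal.add_halves 1 ▸ by norm_num) hs1
    have h12 : (1/2 : ℝ≥0∞) * I1 + (1/2) * I2 = (I1 + I2)/2 := by
      rw [one_div, div_eq_mul_inv, add_mul]
      ring
    rw [h12] at h
    have := mul_le_mul_right h (2 : ℝ≥0∞)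
    refine this.trans (le_of_eq ?_)
    rw [mul_add, ← mul_assoc, ← mul_assoc, show (2:ℝ≥0∞) * (1/2) = 1 by
      rw [one_div, ENNReal.mul_inv_cancel (by norm_num) (by norm_num)], one_mul, one_mul]
  have hJle : J ≤ (I1+I2)/2 := by
    rw [ENNReal.le_div_iff_mul_le (Or.inl (by norm_num)) (Or.inl (by norm_num))]
    rw [mul_comm]
    exact step1
  have main_e : 2 * If^(2/p) + 2 * (c * Ig^(2/p)) ≤ I1^(2/p) + I2^(2/p) := by
    calc 2 * If^(2/p) + 2 * (c * Ig^(2/p)) = 2 * (If^(2/p) + c * Ig^(2/p)) := by ring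
      _ ≤ 2 * J^(2/p) := mul_le_mul_right hIfJ 2
      _ ≤ 2 * ((I1+I2)/2)^(2/p) :=
          mul_le_mul_right (ENNReal.rpow_le_rpow hJle (by positivity)) 2
      _ ≤ I1^(2/p) + I2^(2/p) := pm
  -- translate to eLpNorms
  have hsq : ∀ (h : Ω → ℂ) (I : ℝ≥0∞), eLpNorm h q0 μ = I ^ (1/p) →
      (eLpNorm h q0 μ) ^ (2:ℝ) = I ^ (2/p) := by
    intro h I hI
    rw [hI, ← ENNReal.rpow_mul, show (1/p)*2 = 2/p by ring]
  have hn1 : (eLpNorm (f+g) q0 μ) ^ (2:ℝ) = I1 ^ (2/p) := hsq _ _ (hsn (f+g))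
  have hn2 : (eLpNorm (f-g) q0 μ) ^ (2:ℝ) = I2 ^ (2/p) := hsq _ _ (hsn (f-g))
  have hnf : (eLpNorm f q0 μ) ^ (2:ℝ) = If ^ (2/p) := hsq _ _ (hsn f)
  have hng : (eLpNorm g q0 μ) ^ (2:ℝ) = Ig ^ (2/p) := hsq _ _ (hsn g)
  rw [← hn1, ← hn2, ← hnf, ← hng] at main_e
  -- finiteness
  have hN1 : eLpNorm (f+g) q0 μ ≠ ∞ := hfg.eLpNorm_ne_top
  have hN2 : eLpNorm (f-g) q0 μ ≠ ∞ := hfg'.eLpNorm_ne_top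
  have hNf : eLpNorm f q0 μ ≠ ∞ := hf.eLpNorm_ne_top
  have hNg : eLpNorm g q0 μ ≠ ∞ := hg.eLpNorm_ne_top
  have hfin : (eLpNorm (f+g) q0 μ) ^ (2:ℝ) + (eLpNorm (f-g) q0 μ) ^ (2:ℝ) ≠ ∞ :=
    ENNReal.add_ne_top.2 ⟨ENNReal.rpow_ne_top_of_nonneg (by norm_num) hN1,
      ENNReal.rpow_ne_top_of_nonneg (by norm_num) hN2⟩
  have final := ENNReal.toReal_mono hfin main_e
  rw [ge_iff_le]
  have t1 : ((eLpNorm (f+g) q0 μ) ^ (2:ℝ) + (eLpNorm (f-g) q0 μ) ^ (2:ℝ)).toReal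
      = (eLpNorm (f+g) q0 μ).toReal ^ 2 + (eLpNorm (f-g) q0 μ).toReal ^ 2 := by
    rw [ENNReal.toReal_add (ENNReal.rpow_ne_top_of_nonneg (by norm_num) hN1)
      (ENNReal.rpow_ne_top_of_nonneg (by norm_num) hN2),
      ← ENNReal.toReal_rpow, ← ENNReal.toReal_rpow, Real.rpow_two, Real.rpow_two]
  have t2 : (2 * (eLpNorm f q0 μ) ^ (2:ℝ) + 2 * (c * (eLpNorm g q0 μ) ^ (2:ℝ))).toReal
      = 2 * (eLpNorm f q0 μ).toReal ^ 2 + 2 * (p-1) * (eLpNorm g q0 μ).toReal ^ 2 := by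
    have m1 : (2 : ℝ≥0∞) * (eLpNorm f q0 μ) ^ (2:ℝ) ≠ ∞ :=
      ENNReal.mul_ne_top (by norm_num) (ENNReal.rpow_ne_top_of_nonneg (by norm_num) hNf)
    have m2 : (2 : ℝ≥0∞) * (c * (eLpNorm g q0 μ) ^ (2:ℝ)) ≠ ∞ :=
      ENNReal.mul_ne_top (by norm_num)
        (ENNReal.mul_ne_top ENNReal.ofReal_ne_top
          (ENNReal.rpow_ne_top_of_nonneg (by norm_num) hNg))
    rw [ENNReal.toReal_add m1 m2, ENNReal.toReal_mul, ENNReal.toReal_mul, ENNReal.toReal_mul,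
      ← ENNReal.toReal_rpow, ← ENNReal.toReal_rpow, Real.rpow_two, Real.rpow_two,
      ENNReal.toReal_ofNat, hcdef, ENNReal.toReal_ofReal (by linarith : (0:ℝ) ≤ p - 1)]
    ring
  rw [t1, t2] at final
  exact final
end

section
/- Let (Ω, F, μ) be a measure space and let 2 < p < ∞. Then for all f, g : Ω → ℂ with f, g ∈ L^p(μ), one has ‖f+g‖_p² + ‖f−g‖_p² ≤ 2‖f‖_p² + 2(p−1)‖g‖_p². -/
open MeasureTheory
open Real Set
open scoped ENNReal NNReal

section BCLAux

lemma pow_mean_two {x y r s : ℝ} (hx : 0 ≤ x) (hy : 0 ≤ y) (hr : 0 < r) (hrs : r ≤ s) :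
    x ^ r + y ^ r ≤ 2 * ((x ^ s + y ^ s) / 2) ^ (r / s) := by
  have hs : 0 < s := hr.trans_le hrs
  have key := Real.arith_mean_le_rpow_mean (Finset.univ : Finset (Fin 2))
    (fun _ => (1:ℝ)/2) (fun i => if i = 0 then x ^ r else y ^ r)
    (by intro i _; norm_num) (by simp [Finset.sum_const])
    (by intro i _; split <;> positivity) (p := s / r) (by
      rw [le_div_iff₀ hr]; linarith)
  simp only [Fin.sum_univ_two, if_pos rfl] at key
  norm_num at key
  have e1 : (x ^ r) ^ (s / r) = x ^ s := by
    rw [← Real.rpow_mul hx]; congr 1; field_simp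
  have e2 : (y ^ r) ^ (s / r) = y ^ s := by
    rw [← Real.rpow_mul hy]; congr 1; field_simp
  have e3 : (x ^ s + y ^ s) / 2 = 1/2 * (x ^ r) ^ (s / r) + 1/2 * (y ^ r) ^ (s / r) := by
    rw [e1, e2]; ring
  rw [e3]; linarith [key]

lemma shift_mono {c s u v : ℝ} (hc : 1 ≤ c) (hu0 : 0 ≤ u) (huv : u ≤ v) (hvs : v ≤ s) :
    (s + u) ^ c + (s - u) ^ c ≤ (s + v) ^ c + (s - v) ^ c := by
  rcases eq_or_lt_of_le (hu0.trans huv) with hv0 | hv0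
  · have : u = 0 := le_antisymm (huv.trans hv0.symm.le) hu0
    rw [this, ← hv0]
  · have hs : (0:ℝ) ≤ s := (hu0.trans huv).trans hvs
    have hsv : (0:ℝ) ≤ s - v := by linarith
    have hsv' : (0:ℝ) ≤ s + v := by linarith
    have cvx := convexOn_rpow hc
    set θ : ℝ := (v + u) / (2 * v) with hθ
    have hθ0 : 0 ≤ θ := by positivity
    have hθ1 : 0 ≤ 1 - θ := by
      rw [hθ, sub_nonneg, div_le_one (by linarith)]; linarith
    have hsum : θ + (1 - θ) = 1 := by ring
    have h1 : (θ • (s + v) + (1 - θ) • (s - v)) ^ c ≤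
        θ • ((s + v) ^ c) + (1 - θ) • ((s - v) ^ c) :=
      cvx.2 (mem_Ici.2 hsv') (mem_Ici.2 hsv) hθ0 hθ1 hsum
    have h2 : ((1 - θ) • (s + v) + θ • (s - v)) ^ c ≤
        (1 - θ) • ((s + v) ^ c) + θ • ((s - v) ^ c) :=
      cvx.2 (mem_Ici.2 hsv') (mem_Ici.2 hsv) hθ1 hθ0 (by ring)
    have e1 : θ • (s + v) + (1 - θ) • (s - v) = s + u := by
      simp only [smul_eq_mul, hθ]; field_simp; ring
    have e2 : (1 - θ) • (s + v) + θ • (s - v) = s - u := by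
      simp only [smul_eq_mul, hθ]; field_simp; ring
    rw [e1] at h1; rw [e2] at h2
    simp only [smul_eq_mul] at h1 h2
    nlinarith [h1, h2]

lemma core_ineq {p : ℝ} (hp : 2 < p) {t : ℝ} (ht0 : 0 ≤ t) (ht1 : t ≤ 1) :
    (1 + t) ^ p + (1 - t) ^ p ≤ 2 * (1 + (p - 1) * t ^ 2) ^ (p / 2) := by
  have hp0 : (0:ℝ) < p := by linarith
  have hp1 : (1:ℝ) ≤ p := by linarith
  have hp1' : (1:ℝ) ≤ p - 1 := by linarith
  set φ : ℝ → ℝ := fun s => ((1 + s) ^ p + (1 - s) ^ p) / 2 with hφdef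
  set h : ℝ → ℝ := fun s => φ s ^ (2 / p) with hhdef
  -- positivity of φ on [0,1]
  have hφpos : ∀ s ∈ Icc (0:ℝ) 1, 0 < φ s := by
    intro s hs
    have h1 : (0:ℝ) < 1 + s := by linarith [hs.1]
    have h2 : (0:ℝ) ≤ 1 - s := by linarith [hs.2]
    have := Real.rpow_pos_of_pos h1 p
    have := Real.rpow_nonneg h2 p
    simp only [hφdef]
    positivity
  -- derivative of φ
  have hDφ : ∀ s ∈ Icc (0:ℝ) 1, HasDerivAt φ
      ((p * (1 + s) ^ (p - 1) - p * (1 - s) ^ (p - 1)) / 2) s := by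
    intro s hs
    have h1 : (1:ℝ) + s ≠ 0 := by have := hs.1; intro h; linarith [hs.1]
    have d1 : HasDerivAt (fun u : ℝ => (1 + u) ^ p) (p * (1 + s) ^ (p - 1)) s := by
      have := (Real.hasDerivAt_rpow_const (x := 1 + s) (p := p) (Or.inl h1)).comp s
        ((hasDerivAt_id s).const_add 1)
      exact this.congr_deriv (by ring)
    have d2 : HasDerivAt (fun u : ℝ => (1 - u) ^ p) (-(p * (1 - s) ^ (p - 1))) s := by
      have := (Real.hasDerivAt_rpow_const (x := 1 - s) (p := p) (Or.inr hp1)).comp s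
        ((hasDerivAt_id s).const_sub 1)
      exact this.congr_deriv (by ring)
    have := (d1.add d2).div_const 2
    rw [show (p * (1 + s) ^ (p - 1) - p * (1 - s) ^ (p - 1)) / 2
      = (p * (1 + s) ^ (p - 1) + -(p * (1 - s) ^ (p - 1))) / 2 by ring]
    exact this
  -- derivative of h on [0,1]
  have hDh : ∀ s ∈ Icc (0:ℝ) 1, HasDerivAt h
      (φ s ^ (2 / p - 1) * ((1 + s) ^ (p - 1) - (1 - s) ^ (p - 1))) s := by
    intro s hs
    have hφs := hφpos s hs
    have := (Real.hasDerivAt_rpow_const (x := φ s) (p := 2 / p) (Or.inl hφs.ne')).comp s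
      (hDφ s hs)
    have h2 : h = (fun x : ℝ => x ^ (2 / p)) ∘ φ := rfl
    rw [h2]
    exact this.congr_deriv (by field_simp)
  -- the function G = ψ' and its derivative
  set G : ℝ → ℝ := fun s => 2 * (p - 1) * s -
      φ s ^ (2 / p - 1) * ((1 + s) ^ (p - 1) - (1 - s) ^ (p - 1)) with hGdef
  have hDG : ∀ s ∈ Icc (0:ℝ) 1, HasDerivAt G
      (2 * (p - 1) -
        ((2 / p - 1) * φ s ^ (2 / p - 1 - 1) *
            ((p * (1 + s) ^ (p - 1) - p * (1 - s) ^ (p - 1)) / 2) *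
            ((1 + s) ^ (p - 1) - (1 - s) ^ (p - 1)) +
          φ s ^ (2 / p - 1) *
            ((p - 1) * (1 + s) ^ (p - 1 - 1) + (p - 1) * (1 - s) ^ (p - 1 - 1)))) s := by
    intro s hs
    have hφs := hφpos s hs
    have h1 : (1:ℝ) + s ≠ 0 := by intro h; linarith [hs.1]
    have dpow : HasDerivAt (fun u : ℝ => φ u ^ (2 / p - 1))
        ((2 / p - 1) * φ s ^ (2 / p - 1 - 1) *
          ((p * (1 + s) ^ (p - 1) - p * (1 - s) ^ (p - 1)) / 2)) s := by
      have := (Real.hasDerivAt_rpow_const (x := φ s) (p := 2 / p - 1)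
        (Or.inl hφs.ne')).comp s (hDφ s hs)
      exact this
    have dX : HasDerivAt (fun u : ℝ => (1 + u) ^ (p - 1))
        ((p - 1) * (1 + s) ^ (p - 1 - 1)) s := by
      have := (Real.hasDerivAt_rpow_const (x := 1 + s) (p := p - 1) (Or.inl h1)).comp s
        ((hasDerivAt_id s).const_add 1)
      exact this.congr_deriv (by ring)
    have dY : HasDerivAt (fun u : ℝ => (1 - u) ^ (p - 1))
        (-((p - 1) * (1 - s) ^ (p - 1 - 1))) s := by
      have := (Real.hasDerivAt_rpow_const (x := 1 - s) (p := p - 1) (Or.inr hp1')).comp s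
        ((hasDerivAt_id s).const_sub 1)
      exact this.congr_deriv (by ring)
    have dM := dpow.mul (dX.sub dY)
    have dlin : HasDerivAt (fun u : ℝ => 2 * (p - 1) * u) (2 * (p - 1)) s := by
      simpa using (hasDerivAt_id s).const_mul (2 * (p - 1))
    have := dlin.sub dM
    exact this.congr_deriv (by simp only [Pi.sub_apply]; ring)
  -- the derivative of G is nonneg on [0,1]
  have hG'nonneg : ∀ s ∈ Icc (0:ℝ) 1,
      0 ≤ 2 * (p - 1) -
        ((2 / p - 1) * φ s ^ (2 / p - 1 - 1) *
            ((p * (1 + s) ^ (p - 1) - p * (1 - s) ^ (p - 1)) / 2) *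
            ((1 + s) ^ (p - 1) - (1 - s) ^ (p - 1)) +
          φ s ^ (2 / p - 1) *
            ((p - 1) * (1 + s) ^ (p - 1 - 1) + (p - 1) * (1 - s) ^ (p - 1 - 1))) := by
    intro s hs
    have hφs := hφpos s hs
    have h1 : (0:ℝ) ≤ 1 + s := by linarith [hs.1]
    have h2 : (0:ℝ) ≤ 1 - s := by linarith [hs.2]
    set X1 := (1 + s) ^ (p - 1)
    set Y1 := (1 - s) ^ (p - 1)
    have hb : (0:ℝ) ≤ φ s ^ (2 / p - 1 - 1) := (Real.rpow_pos_of_pos hφs _).le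
    have ha : (0:ℝ) < φ s ^ (2 / p - 1) := Real.rpow_pos_of_pos hφs _
    -- first term is nonpositive
    have hterm1 : (2 / p - 1) * φ s ^ (2 / p - 1 - 1) *
        ((p * X1 - p * Y1) / 2) * (X1 - Y1) ≤ 0 := by
      have e : (2 / p - 1) * φ s ^ (2 / p - 1 - 1) * ((p * X1 - p * Y1) / 2) * (X1 - Y1)
          = ((2 / p - 1) * (p / 2)) * (φ s ^ (2 / p - 1 - 1) * (X1 - Y1) ^ 2) := by ring
      rw [e]
      apply mul_nonpos_of_nonpos_of_nonneg
      · have h2p : 2 / p - 1 ≤ 0 := by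
          have : 2 / p ≤ 1 := by rw [div_le_one hp0]; linarith
          linarith
        exact mul_nonpos_of_nonpos_of_nonneg h2p (by positivity)
      · exact mul_nonneg hb (sq_nonneg _)
    -- second term is at most 2(p-1)
    have hpm := pow_mean_two (x := 1 + s) (y := 1 - s) (r := p - 2) (s := p)
      h1 h2 (by linarith) (by linarith)
    have hexp : p - 1 - 1 = p - 2 := by ring
    have hterm2 : φ s ^ (2 / p - 1) *
        ((p - 1) * (1 + s) ^ (p - 1 - 1) + (p - 1) * (1 - s) ^ (p - 1 - 1))
        ≤ 2 * (p - 1) := by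
      rw [hexp]
      have step1 : (1 + s) ^ (p - 2) + (1 - s) ^ (p - 2)
          ≤ 2 * φ s ^ ((p - 2) / p) := hpm
      have hzero : φ s ^ (2 / p - 1) * φ s ^ ((p - 2) / p) = 1 := by
        rw [← Real.rpow_add hφs]
        have : 2 / p - 1 + (p - 2) / p = 0 := by field_simp; ring
        rw [this, Real.rpow_zero]
      calc φ s ^ (2 / p - 1) *
            ((p - 1) * (1 + s) ^ (p - 2) + (p - 1) * (1 - s) ^ (p - 2))
          = (p - 1) * (φ s ^ (2 / p - 1) * ((1 + s) ^ (p - 2) + (1 - s) ^ (p - 2))) := by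
            ring
        _ ≤ (p - 1) * (φ s ^ (2 / p - 1) * (2 * φ s ^ ((p - 2) / p))) := by
            apply mul_le_mul_of_nonneg_left _ (by linarith)
            exact mul_le_mul_of_nonneg_left step1 ha.le
        _ = (p - 1) * 2 * (φ s ^ (2 / p - 1) * φ s ^ ((p - 2) / p)) := by ring
        _ = 2 * (p - 1) := by rw [hzero]; ring
    linarith [hterm1, hterm2]
  -- G is monotone on [0,1], hence nonneg
  have hGmono : MonotoneOn G (Icc 0 1) := by
    apply monotoneOn_of_deriv_nonneg (convex_Icc 0 1)
    · intro s hs; exact (hDG s hs).continuousAt.continuousWithinAt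
    · rw [interior_Icc]
      intro s hs
      exact ((hDG s (Ioo_subset_Icc_self hs)).differentiableAt).differentiableWithinAt
    · rw [interior_Icc]
      intro s hs
      rw [(hDG s (Ioo_subset_Icc_self hs)).deriv]
      exact hG'nonneg s (Ioo_subset_Icc_self hs)
  have hG0 : G 0 = 0 := by
    simp [hGdef]
  have hGnonneg : ∀ s ∈ Icc (0:ℝ) 1, 0 ≤ G s := by
    intro s hs
    have := hGmono (left_mem_Icc.2 zero_le_one) hs hs.1
    rw [hG0] at this; exact this
  -- ψ
  set ψ : ℝ → ℝ := fun s => 1 + (p - 1) * s ^ 2 - h s with hψdef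
  have hDψ : ∀ s ∈ Icc (0:ℝ) 1, HasDerivAt ψ (G s) s := by
    intro s hs
    have dq : HasDerivAt (fun u : ℝ => 1 + (p - 1) * u ^ 2) (2 * (p - 1) * s) s := by
      have := ((hasDerivAt_pow 2 s).const_mul (p - 1)).const_add 1
      exact this.congr_deriv (by simp; ring)
    have := dq.sub (hDh s hs)
    exact this
  have hψmono : MonotoneOn ψ (Icc 0 1) := by
    apply monotoneOn_of_deriv_nonneg (convex_Icc 0 1)
    · intro s hs; exact (hDψ s hs).continuousAt.continuousWithinAt
    · rw [interior_Icc]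
      intro s hs
      exact ((hDψ s (Ioo_subset_Icc_self hs)).differentiableAt).differentiableWithinAt
    · rw [interior_Icc]
      intro s hs
      rw [(hDψ s (Ioo_subset_Icc_self hs)).deriv]
      exact hGnonneg s (Ioo_subset_Icc_self hs)
  have hψ0 : ψ 0 = 0 := by
    have : φ 0 = 1 := by simp [hφdef]
    simp [hψdef, hhdef, this]
  have htIcc : t ∈ Icc (0:ℝ) 1 := ⟨ht0, ht1⟩
  have hψt : 0 ≤ ψ t := by
    have := hψmono (left_mem_Icc.2 zero_le_one) htIcc ht0
    rw [hψ0] at this; exact this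
  -- conclude
  have hht : h t ≤ 1 + (p - 1) * t ^ 2 := by
    simp only [hψdef] at hψt; linarith
  have hφt := hφpos t htIcc
  have hfin : φ t ≤ (1 + (p - 1) * t ^ 2) ^ (p / 2) := by
    have h0 : (0:ℝ) ≤ h t := (Real.rpow_pos_of_pos hφt _).le
    have := Real.rpow_le_rpow h0 hht (by positivity : (0:ℝ) ≤ p / 2)
    have e : (h t) ^ (p / 2) = φ t := by
      simp only [hhdef]
      rw [← Real.rpow_mul hφt.le]
      have : 2 / p * (p / 2) = 1 := by field_simp
      rw [this, Real.rpow_one]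
    rwa [e] at this
  have : φ t = ((1 + t) ^ p + (1 - t) ^ p) / 2 := rfl
  linarith

lemma scalar_aux {p : ℝ} (hp : 2 < p) {a b : ℝ} (hb : 0 ≤ b) (hba : b ≤ a) (ha0 : 0 < a) :
    (a + b) ^ p + (a - b) ^ p ≤ 2 * (a ^ 2 + (p - 1) * b ^ 2) ^ (p / 2) := by
  have hp0 : (0:ℝ) < p := by linarith
  set t := b / a with htdef
  have ht0 : 0 ≤ t := div_nonneg hb ha0.le
  have ht1 : t ≤ 1 := (div_le_one ha0).2 hba
  have key := core_ineq hp ht0 ht1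
  have hap : 0 < a ^ p := Real.rpow_pos_of_pos ha0 p
  have h1t : (0:ℝ) ≤ 1 + t := by linarith
  have h2t : (0:ℝ) ≤ 1 - t := by linarith
  have hM : (0:ℝ) ≤ 1 + (p - 1) * t ^ 2 := by nlinarith
  have e1 : a ^ p * (1 + t) ^ p = (a + b) ^ p := by
    rw [← Real.mul_rpow ha0.le h1t]
    congr 1
    rw [htdef]
    field_simp
  have e2 : a ^ p * (1 - t) ^ p = (a - b) ^ p := by
    rw [← Real.mul_rpow ha0.le h2t]
    congr 1
    rw [htdef]
    field_simp
  have e3 : a ^ p * (1 + (p - 1) * t ^ 2) ^ (p / 2)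
      = (a ^ 2 + (p - 1) * b ^ 2) ^ (p / 2) := by
    have ea : a ^ p = (a ^ 2) ^ (p / 2) := by
      rw [← Real.rpow_natCast a 2, ← Real.rpow_mul ha0.le]
      congr 1
      push_cast
      ring
    rw [ea, ← Real.mul_rpow (by positivity) hM]
    congr 1
    rw [htdef]
    field_simp
  have := mul_le_mul_of_nonneg_left key hap.le
  calc (a + b) ^ p + (a - b) ^ p
      = a ^ p * (1 + t) ^ p + a ^ p * (1 - t) ^ p := by rw [e1, e2]
    _ = a ^ p * ((1 + t) ^ p + (1 - t) ^ p) := by ring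
    _ ≤ a ^ p * (2 * (1 + (p - 1) * t ^ 2) ^ (p / 2)) := this
    _ = 2 * (a ^ p * (1 + (p - 1) * t ^ 2) ^ (p / 2)) := by ring
    _ = 2 * (a ^ 2 + (p - 1) * b ^ 2) ^ (p / 2) := by rw [e3]

lemma scalar_ineq {p : ℝ} (hp : 2 < p) {a b : ℝ} (ha : 0 ≤ a) (hb : 0 ≤ b) :
    (a + b) ^ p + |a - b| ^ p ≤ 2 * (a ^ 2 + (p - 1) * b ^ 2) ^ (p / 2) := by
  have hp0 : (0:ℝ) < p := by linarith
  rcases le_total b a with hba | hab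
  · rcases ha.lt_or_eq with ha0 | ha0
    · rw [abs_of_nonneg (by linarith)]
      exact scalar_aux hp hb hba ha0
    · have hb0 : b = 0 := le_antisymm (hba.trans ha0.symm.le) hb
      have h1 : (0:ℝ) ^ p = 0 := Real.zero_rpow hp0.ne'
      have h2 : (0:ℝ) ^ (p / 2) = 0 := Real.zero_rpow (by positivity : (0:ℝ) < p / 2).ne'
      rw [← ha0, hb0]
      simp [h1, h2]
  · rcases hb.lt_or_eq with hb0 | hb0
    · rw [abs_of_nonpos (by linarith), neg_sub]
      have := scalar_aux hp ha hab hb0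
      have hmono : (b ^ 2 + (p - 1) * a ^ 2) ^ (p / 2)
          ≤ (a ^ 2 + (p - 1) * b ^ 2) ^ (p / 2) := by
        apply Real.rpow_le_rpow (by nlinarith [sq_nonneg a, sq_nonneg b])
          (by nlinarith [mul_self_le_mul_self ha hab, sq_nonneg a, sq_nonneg b]) (by positivity)
      have h2 : (a + b) ^ p = (b + a) ^ p := by rw [add_comm]
      linarith [this, hmono, h2]
    · have ha0 : a = 0 := le_antisymm (hab.trans hb0.symm.le) ha
      have h1 : (0:ℝ) ^ p = 0 := Real.zero_rpow hp0.ne'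
      have h2 : (0:ℝ) ^ (p / 2) = 0 := Real.zero_rpow (by positivity : (0:ℝ) < p / 2).ne'
      rw [← hb0, ha0]
      simp [h1, h2]

lemma sq_rpow_half {x p : ℝ} (hx : 0 ≤ x) : (x ^ 2) ^ (p / 2) = x ^ p := by
  rw [← Real.rpow_natCast x 2, ← Real.rpow_mul hx]
  congr 1
  push_cast
  ring

lemma complex_ineq {p : ℝ} (hp : 2 < p) (z w : ℂ) :
    ‖z + w‖ ^ p + ‖z - w‖ ^ p
      ≤ 2 * (‖z‖ ^ 2 + (p - 1) * ‖w‖ ^ 2) ^ (p / 2) := by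
  set a := ‖z‖ with hadef
  set b := ‖w‖ with hbdef
  have ha : 0 ≤ a := norm_nonneg z
  have hb : 0 ≤ b := norm_nonneg w
  set s : ℝ := a ^ 2 + b ^ 2 with hsdef
  set u : ℝ := 2 * (z.re * w.re + z.im * w.im) with hudef
  have hc : (1:ℝ) ≤ p / 2 := by linarith
  have ea2 : a ^ 2 = z.re ^ 2 + z.im ^ 2 := by
    rw [hadef, Complex.sq_norm, Complex.normSq_apply]; ring
  have eb2 : b ^ 2 = w.re ^ 2 + w.im ^ 2 := by
    rw [hbdef, Complex.sq_norm, Complex.normSq_apply]; ring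
  have habs1 : ‖z + w‖ ^ 2 = s + u := by
    rw [Complex.sq_norm, Complex.normSq_apply, hsdef, hudef, ea2, eb2]
    simp [Complex.add_re, Complex.add_im]
    ring
  have habs2 : ‖z - w‖ ^ 2 = s - u := by
    rw [Complex.sq_norm, Complex.normSq_apply, hsdef, hudef, ea2, eb2]
    simp [Complex.sub_re, Complex.sub_im]
    ring
  have hCS : |u| ≤ 2 * a * b := by
    rw [abs_le]
    constructor <;> nlinarith [sq_nonneg (z.re * w.im - z.im * w.re),
      sq_nonneg (z.re * w.im + z.im * w.re), sq_nonneg (z.re * w.re + z.im * w.im),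
      sq_nonneg (z.re * w.re - z.im * w.im), mul_nonneg ha hb, ea2, eb2,
      sq_nonneg (a * b + (z.re * w.re + z.im * w.im)),
      sq_nonneg (a * b - (z.re * w.re + z.im * w.im)), sq_nonneg a, sq_nonneg b]
  have h2ab : 2 * a * b ≤ s := by nlinarith [sq_nonneg (a - b)]
  -- convert p-powers to (p/2)-powers of squares
  have ep1 : ‖z + w‖ ^ p = (s + u) ^ (p / 2) := by
    rw [← habs1, sq_rpow_half (norm_nonneg _)]
  have ep2 : ‖z - w‖ ^ p = (s - u) ^ (p / 2) := by
    rw [← habs2, sq_rpow_half (norm_nonneg _)]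
  have hstep : (s + u) ^ (p / 2) + (s - u) ^ (p / 2)
      ≤ (s + 2 * a * b) ^ (p / 2) + (s - 2 * a * b) ^ (p / 2) := by
    rcases le_or_gt 0 u with hu | hu
    · exact shift_mono hc hu (by rw [abs_of_nonneg hu] at hCS; exact hCS) h2ab
    · have := shift_mono hc (neg_nonneg.2 hu.le)
        (by rw [abs_of_neg hu] at hCS; exact hCS) h2ab
      simp only [sub_neg_eq_add, ← sub_eq_add_neg] at this
      linarith
  have efin : (s + 2 * a * b) ^ (p / 2) + (s - 2 * a * b) ^ (p / 2)
      = (a + b) ^ p + |a - b| ^ p := by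
    have e1 : s + 2 * a * b = (a + b) ^ 2 := by rw [hsdef]; ring
    have e2 : s - 2 * a * b = |a - b| ^ 2 := by rw [hsdef, sq_abs]; ring
    rw [e1, e2, sq_rpow_half (by positivity), sq_rpow_half (abs_nonneg _)]
  calc ‖z + w‖ ^ p + ‖z - w‖ ^ p
      = (s + u) ^ (p / 2) + (s - u) ^ (p / 2) := by rw [ep1, ep2]
    _ ≤ (s + 2 * a * b) ^ (p / 2) + (s - 2 * a * b) ^ (p / 2) := hstep
    _ = (a + b) ^ p + |a - b| ^ p := efin
    _ ≤ 2 * (a ^ 2 + (p - 1) * b ^ 2) ^ (p / 2) := scalar_ineq hp ha hb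

end BCLAux

/-- **Ball–Carlen–Lieb convexity inequality**, reversed commutative (measure-space) case,
`2 < p < ∞`: for `f, g ∈ L^p(μ)`,
`‖f+g‖_p² + ‖f−g‖_p² ≤ 2‖f‖_p² + 2(p−1)‖g‖_p²`. -/
theorem bcl_convexity_gt_two {Ω : Type*} [MeasurableSpace Ω] (μ : Measure Ω)
    (p : ℝ) (hp : 2 < p) (f g : Ω → ℂ)
    (hf : MemLp f (ENNReal.ofReal p) μ) (hg : MemLp g (ENNReal.ofReal p) μ) :
    (eLpNorm (f + g) (ENNReal.ofReal p) μ).toReal ^ 2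
      + (eLpNorm (f - g) (ENNReal.ofReal p) μ).toReal ^ 2
    ≤ 2 * (eLpNorm f (ENNReal.ofReal p) μ).toReal ^ 2
      + 2 * (p - 1) * (eLpNorm g (ENNReal.ofReal p) μ).toReal ^ 2 := by
  have hp0 : (0:ℝ) < p := by linarith
  set pe := ENNReal.ofReal p with hpe
  have hpe0 : pe ≠ 0 := by
    rw [hpe, Ne, ENNReal.ofReal_eq_zero]; push_neg; exact hp0
  have hpet : pe ≠ ⊤ := ENNReal.ofReal_ne_top
  have htR : pe.toReal = p := ENNReal.toReal_ofReal hp0.le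
  set c := ENNReal.ofReal (p - 1) with hc
  have hcne : c ≠ ⊤ := ENNReal.ofReal_ne_top
  have hcR : c.toReal = p - 1 := ENNReal.toReal_ofReal (by linarith)
  set A := ∫⁻ a, (‖(f + g) a‖₊ : ℝ≥0∞) ^ p ∂μ with hA
  set B := ∫⁻ a, (‖(f - g) a‖₊ : ℝ≥0∞) ^ p ∂μ with hB
  set Fq := ∫⁻ a, (‖f a‖₊ : ℝ≥0∞) ^ p ∂μ with hFq
  set Gq := ∫⁻ a, (‖g a‖₊ : ℝ≥0∞) ^ p ∂μ with hGq
  have eN : ∀ h : Ω → ℂ, eLpNorm h pe μ = (∫⁻ a, (‖h a‖₊ : ℝ≥0∞) ^ p ∂μ) ^ (1/p) := by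
    intro h
    rw [eLpNorm_eq_lintegral_rpow_enorm_toReal hpe0 hpet, htR]; rfl
  have hFqt : Fq ≠ ⊤ := by
    have := lintegral_rpow_enorm_lt_top_of_eLpNorm_lt_top hpe0 hpet hf.eLpNorm_lt_top
    rw [htR] at this; exact this.ne
  have hGqt : Gq ≠ ⊤ := by
    have := lintegral_rpow_enorm_lt_top_of_eLpNorm_lt_top hpe0 hpet hg.eLpNorm_lt_top
    rw [htR] at this; exact this.ne
  have hAt : A ≠ ⊤ := by
    have := lintegral_rpow_enorm_lt_top_of_eLpNorm_lt_top hpe0 hpet (hf.add hg).eLpNorm_lt_top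
    rw [htR] at this; exact this.ne
  have hBt : B ≠ ⊤ := by
    have := lintegral_rpow_enorm_lt_top_of_eLpNorm_lt_top hpe0 hpet (hf.sub hg).eLpNorm_lt_top
    rw [htR] at this; exact this.ne
  set U : Ω → ℝ≥0∞ := fun a => (‖f a‖₊ : ℝ≥0∞) ^ (2:ℝ) with hU
  set V : Ω → ℝ≥0∞ := fun a => c * (‖g a‖₊ : ℝ≥0∞) ^ (2:ℝ) with hV
  have hUm : AEMeasurable U μ := hf.1.enorm.pow_const _
  have hVm : AEMeasurable V μ := (hg.1.enorm.pow_const _).const_mul c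
  -- pointwise inequality
  have hpt : ∀ a, (‖(f + g) a‖₊ : ℝ≥0∞) ^ p + (‖(f - g) a‖₊ : ℝ≥0∞) ^ p
      ≤ 2 * (U a + V a) ^ (p / 2) := by
    intro a
    have key := complex_ineq hp (f a) (g a)
    have e0 : ∀ z : ℂ, (‖z‖₊ : ℝ≥0∞) = ENNReal.ofReal (‖z‖) := fun z => by
      exact (ofReal_norm z).symm
    have habs : ∀ z : ℂ, (0:ℝ) ≤ ‖z‖ := fun z => norm_nonneg z
    have eL : (‖(f + g) a‖₊ : ℝ≥0∞) ^ p + (‖(f - g) a‖₊ : ℝ≥0∞) ^ p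
        = ENNReal.ofReal (‖f a + g a‖ ^ p + ‖f a - g a‖ ^ p) := by
      rw [Pi.add_apply, Pi.sub_apply, e0, e0,
        ENNReal.ofReal_rpow_of_nonneg (habs _) hp0.le,
        ENNReal.ofReal_rpow_of_nonneg (habs _) hp0.le,
        ← ENNReal.ofReal_add (by positivity) (by positivity)]
    have eR : 2 * (U a + V a) ^ (p / 2)
        = ENNReal.ofReal (2 * (‖f a‖ ^ 2 + (p - 1) * ‖g a‖ ^ 2)
            ^ (p / 2)) := by
      have hM1 : (0:ℝ) ≤ ‖f a‖ ^ 2 + (p - 1) * ‖g a‖ ^ 2 := by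
        have h1 := sq_nonneg (‖f a‖)
        have h2 := sq_nonneg (‖g a‖)
        nlinarith
      have eU : U a = ENNReal.ofReal (‖f a‖ ^ 2) := by
        simp only [hU]
        rw [e0, ENNReal.ofReal_rpow_of_nonneg (habs _) (by norm_num : (0:ℝ) ≤ 2)]
        congr 1
        rw [← Real.rpow_natCast (‖f a‖) 2]
        norm_num
      have eV : V a = ENNReal.ofReal ((p - 1) * ‖g a‖ ^ 2) := by
        simp only [hV, hc]
        rw [e0, ENNReal.ofReal_rpow_of_nonneg (habs _) (by norm_num : (0:ℝ) ≤ 2),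
          ← ENNReal.ofReal_mul (by linarith)]
        congr 2
        rw [← Real.rpow_natCast (‖g a‖) 2]
        norm_num
      rw [eU, eV, ← ENNReal.ofReal_add (by positivity)
          (by nlinarith [sq_nonneg (‖g a‖)]),
        ENNReal.ofReal_rpow_of_nonneg hM1 (by positivity),
        ← ENNReal.ofReal_ofNat 2, ← ENNReal.ofReal_mul (by norm_num)]
    rw [eL, eR]
    exact ENNReal.ofReal_le_ofReal key
  -- integrate
  have hABm : AEMeasurable (fun a => (‖(f + g) a‖₊ : ℝ≥0∞) ^ p) μ :=
    (hf.add hg).1.enorm.pow_const _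
  have hint : A + B ≤ 2 * ∫⁻ a, (U a + V a) ^ (p / 2) ∂μ := by
    rw [hA, hB, ← lintegral_add_left' hABm, ← lintegral_const_mul' 2 _ (by simp)]
    exact lintegral_mono hpt
  -- Minkowski
  have hq1 : (1:ℝ) ≤ p / 2 := by linarith
  have mink := ENNReal.lintegral_Lp_add_le hUm hVm hq1
  have eUint : (∫⁻ a, U a ^ (p / 2) ∂μ) = Fq := by
    rw [hFq]
    refine lintegral_congr fun a => ?_
    rw [hU, ← ENNReal.rpow_mul, show (2:ℝ) * (p / 2) = p by ring]
  have eVint : (∫⁻ a, V a ^ (p / 2) ∂μ) = c ^ (p / 2) * Gq := by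
    have e1 : ∀ a, V a ^ (p / 2) = c ^ (p / 2) * (‖g a‖₊ : ℝ≥0∞) ^ p := by
      intro a
      rw [hV, ENNReal.mul_rpow_of_nonneg _ _ (by positivity), ← ENNReal.rpow_mul,
        show (2:ℝ) * (p / 2) = p by ring]
    rw [lintegral_congr e1,
      lintegral_const_mul' _ _ (ENNReal.rpow_ne_top_of_nonneg (by positivity) hcne)]
  set S := Fq ^ (2 / p) + c * Gq ^ (2 / p) with hS
  have hmink2 : (∫⁻ a, (U a + V a) ^ (p / 2) ∂μ) ≤ S ^ (p / 2) := by
    have h1 : (∫⁻ a, (U a + V a) ^ (p / 2) ∂μ) ^ (1 / (p / 2))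
        ≤ Fq ^ (1 / (p / 2)) + (c ^ (p / 2) * Gq) ^ (1 / (p / 2)) := by
      rw [← eUint, ← eVint]
      exact mink
    have e2p : 1 / (p / 2) = 2 / p := by
      rw [one_div, div_eq_mul_inv, mul_inv, inv_inv]; ring
    rw [e2p] at h1
    have e3 : (c ^ (p / 2) * Gq) ^ (2 / p) = c * Gq ^ (2 / p) := by
      rw [ENNReal.mul_rpow_of_nonneg _ _ (by positivity), ← ENNReal.rpow_mul,
        show (p / 2) * (2 / p) = 1 by field_simp, ENNReal.rpow_one]
    rw [e3] at h1
    have h2 := ENNReal.rpow_le_rpow h1 (by positivity : (0:ℝ) ≤ p / 2)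
    rwa [← ENNReal.rpow_mul, show (2 / p) * (p / 2) = 1 by field_simp,
      ENNReal.rpow_one] at h2
  have hfinal : A + B ≤ 2 * S ^ (p / 2) := by
    calc A + B ≤ 2 * ∫⁻ a, (U a + V a) ^ (p / 2) ∂μ := hint
      _ ≤ 2 * S ^ (p / 2) := by
          exact mul_le_mul_right hmink2 2
  -- pass to real numbers
  have hSne : S ≠ ⊤ := by
    rw [hS]
    exact ENNReal.add_ne_top.2 ⟨ENNReal.rpow_ne_top_of_nonneg (by positivity) hFqt,
      ENNReal.mul_ne_top hcne (ENNReal.rpow_ne_top_of_nonneg (by positivity) hGqt)⟩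
  have h2Sne : 2 * S ^ (p / 2) ≠ ⊤ :=
    ENNReal.mul_ne_top (by simp) (ENNReal.rpow_ne_top_of_nonneg (by positivity) hSne)
  have hrealAB : A.toReal + B.toReal ≤ 2 * S.toReal ^ (p / 2) := by
    have := ENNReal.toReal_mono h2Sne hfinal
    rwa [ENNReal.toReal_add hAt hBt, ENNReal.toReal_mul, ENNReal.toReal_ofNat,
      ← ENNReal.toReal_rpow] at this
  set x := (eLpNorm (f + g) pe μ).toReal with hx
  set y := (eLpNorm (f - g) pe μ).toReal with hy
  set Fn := (eLpNorm f pe μ).toReal with hFn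
  set Gn := (eLpNorm g pe μ).toReal with hGn
  have hx0 : 0 ≤ x := ENNReal.toReal_nonneg
  have hy0 : 0 ≤ y := ENNReal.toReal_nonneg
  have exA : x = A.toReal ^ (1 / p) := by rw [hx, eN (f + g), ← ENNReal.toReal_rpow]
  have eyB : y = B.toReal ^ (1 / p) := by rw [hy, eN (f - g), ← ENNReal.toReal_rpow]
  have eFn : Fn = Fq.toReal ^ (1 / p) := by rw [hFn, eN f, ← ENNReal.toReal_rpow]
  have eGn : Gn = Gq.toReal ^ (1 / p) := by rw [hGn, eN g, ← ENNReal.toReal_rpow]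
  have hxp : x ^ p = A.toReal := by
    rw [exA, ← Real.rpow_mul ENNReal.toReal_nonneg, show 1 / p * p = 1 by field_simp,
      Real.rpow_one]
  have hyp : y ^ p = B.toReal := by
    rw [eyB, ← Real.rpow_mul ENNReal.toReal_nonneg, show 1 / p * p = 1 by field_simp,
      Real.rpow_one]
  have eFn2 : Fn ^ 2 = Fq.toReal ^ (2 / p) := by
    rw [eFn, ← Real.rpow_natCast (Fq.toReal ^ (1 / p)) 2, ← Real.rpow_mul ENNReal.toReal_nonneg]
    norm_num
    congr 1
    ring
  have eGn2 : Gn ^ 2 = Gq.toReal ^ (2 / p) := by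
    rw [eGn, ← Real.rpow_natCast (Gq.toReal ^ (1 / p)) 2, ← Real.rpow_mul ENNReal.toReal_nonneg]
    norm_num
    congr 1
    ring
  have eS : S.toReal = Fn ^ 2 + (p - 1) * Gn ^ 2 := by
    rw [hS, ENNReal.toReal_add (ENNReal.rpow_ne_top_of_nonneg (by positivity) hFqt)
        (ENNReal.mul_ne_top hcne (ENNReal.rpow_ne_top_of_nonneg (by positivity) hGqt)),
      ENNReal.toReal_mul, hcR, ← ENNReal.toReal_rpow, ← ENNReal.toReal_rpow, ← eFn2, ← eGn2]
  set M := Fn ^ 2 + (p - 1) * Gn ^ 2 with hM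
  have hM0 : 0 ≤ M := by
    have : 0 ≤ (p - 1) * Gn ^ 2 := mul_nonneg (by linarith) (sq_nonneg _)
    have := sq_nonneg Fn
    rw [hM]; linarith
  have hkey : x ^ p + y ^ p ≤ 2 * M ^ (p / 2) := by
    rw [hxp, hyp, ← eS]; rw [eS]; rw [← hM] at *
    rw [eS, ← hM] at hrealAB
    exact hrealAB
  -- final power mean step
  have pm := pow_mean_two hx0 hy0 (by norm_num : (0:ℝ) < 2) hp.le
  have hmid : ((x ^ p + y ^ p) / 2) ^ (2 / p) ≤ M := by
    have h1 : (x ^ p + y ^ p) / 2 ≤ M ^ (p / 2) := by linarith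
    have h2 := Real.rpow_le_rpow (by positivity) h1 (by positivity : (0:ℝ) ≤ 2 / p)
    rwa [← Real.rpow_mul hM0, show (p / 2) * (2 / p) = 1 by field_simp,
      Real.rpow_one] at h2
  have hfin2 : x ^ (2:ℝ) + y ^ (2:ℝ) ≤ 2 * M := by
    calc x ^ (2:ℝ) + y ^ (2:ℝ) ≤ 2 * ((x ^ p + y ^ p) / 2) ^ ((2:ℝ) / p) := pm
      _ ≤ 2 * M := by linarith
  have ex2 : x ^ (2:ℝ) = x ^ 2 := by
    rw [← Real.rpow_natCast x 2]; norm_num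
  have ey2 : y ^ (2:ℝ) = y ^ 2 := by
    rw [← Real.rpow_natCast y 2]; norm_num
  rw [ex2, ey2] at hfin2
  rw [hM] at hfin2
  have hexp : 2 * Fn ^ 2 + 2 * (p - 1) * Gn ^ 2 = 2 * (Fn ^ 2 + (p - 1) * Gn ^ 2) := by ring
  rw [hexp]
  exact hfin2
end

section
/- Let I ⊆ ℝ be an open interval and let f : I → ℝ be continuous. For t ∈ I define the second-order pseudo-derivative D²f(t) := liminf_{h→0⁺} (f(t+h) + f(t−h) − 2f(t))/h². If D²f(t) ≥ 0 for every t ∈ I, then f is convex on I. -/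
open Filter

/-- Auxiliary: if `g` is continuous on a convex set `I ⊆ ℝ` and at every point `t ∈ I`
the second difference `g (t+h) + g (t-h) - 2 g t` is positive for arbitrarily small `h > 0`,
then `g` is convex on `I`. -/
private lemma aux_convexOn (I : Set ℝ) (hI_conv : Convex ℝ I) (g : ℝ → ℝ)
    (hg : ContinuousOn g I)
    (key : ∀ t ∈ I, ∀ δ > (0:ℝ), ∃ h : ℝ, 0 < h ∧ h < δ ∧
      0 < g (t + h) + g (t - h) - 2 * g t) :
    ConvexOn ℝ I g := by
  have main : ∀ x ∈ I, ∀ y ∈ I, x < y → ∀ z ∈ Set.Icc x y,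
      g z ≤ g x + (g y - g x) / (y - x) * (z - x) := by
    intro x hx y hy hxy z hz
    set L : ℝ → ℝ := fun s => g x + (g y - g x) / (y - x) * (s - x) with hL
    have hxy' : y - x ≠ 0 := sub_ne_zero.mpr hxy.ne'
    have hIcc : Set.Icc x y ⊆ I := hI_conv.ordConnected.out hx hy
    have hLcont : Continuous L := by
      apply Continuous.add continuous_const
      exact Continuous.mul continuous_const (by continuity)
    have hφcont : ContinuousOn (fun s => g s - L s) (Set.Icc x y) :=
      (hg.mono hIcc).sub hLcont.continuousOn
    obtain ⟨t₀, ht₀, hmax⟩ := isCompact_Icc.exists_isMaxOn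
      (Set.nonempty_Icc.mpr hxy.le) hφcont
    have hmax' : ∀ s ∈ Set.Icc x y, g s - L s ≤ g t₀ - L t₀ := fun s hs => hmax hs
    have hLx : L x = g x := by simp [hL]
    have hLy : L y = g y := by
      simp only [hL]
      field_simp
      ring
    have hφt₀ : g t₀ - L t₀ ≤ 0 := by
      by_contra hpos
      push_neg at hpos
      have ht₀x : t₀ ≠ x := by
        intro h; rw [h, hLx] at hpos; simp at hpos
      have ht₀y : t₀ ≠ y := by
        intro h; rw [h, hLy] at hpos; simp at hpos
      have ht₀' : t₀ ∈ Set.Ioo x y :=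
        ⟨lt_of_le_of_ne ht₀.1 (Ne.symm ht₀x), lt_of_le_of_ne ht₀.2 ht₀y⟩
      have hδ : 0 < min (t₀ - x) (y - t₀) :=
        lt_min (sub_pos.mpr ht₀'.1) (sub_pos.mpr ht₀'.2)
      obtain ⟨h, hh0, hhδ, hhpos⟩ := key t₀ (hIcc ht₀) _ hδ
      have hmem₁ : t₀ + h ∈ Set.Icc x y := by
        constructor
        · linarith [ht₀.1]
        · have := hhδ.trans_le (min_le_right _ _); linarith
      have hmem₂ : t₀ - h ∈ Set.Icc x y := by
        constructor
        · have := hhδ.trans_le (min_le_left _ _); linarith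
        · linarith [ht₀.2]
      have h₁ := hmax' _ hmem₁
      have h₂ := hmax' _ hmem₂
      have hLlin : L (t₀ + h) + L (t₀ - h) - 2 * L t₀ = 0 := by
        simp only [hL]; ring
      linarith
    have hz' := hmax' z hz
    simp only [hL] at hz' hφt₀ ⊢
    linarith
  refine ⟨hI_conv, fun x hx y hy a b ha hb hab => ?_⟩
  simp only [smul_eq_mul]
  rcases lt_trichotomy x y with hxy | hxy | hxy
  · have hb' : 0 ≤ b * (y - x) := mul_nonneg hb (by linarith)
    have ha' : 0 ≤ a * (y - x) := mul_nonneg ha (by linarith)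
    have e1 : a * x + b * y - x = b * (y - x) := by linear_combination x * hab
    have e2 : y - (a * x + b * y) = a * (y - x) := by linear_combination (-y) * hab
    have hzmem : a * x + b * y ∈ Set.Icc x y := ⟨by linarith, by linarith⟩
    have H := main x hx y hy hxy _ hzmem
    have hzx : a * x + b * y - x = b * (y - x) := by linear_combination x * hab
    rw [hzx] at H
    have hxy' : y - x ≠ 0 := sub_ne_zero.mpr hxy.ne'
    have hdiv : (g y - g x) / (y - x) * (b * (y - x)) = b * (g y - g x) := by
      field_simp
    rw [hdiv] at H
    calc g (a * x + b * y) ≤ g x + b * (g y - g x) := H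
      _ = a * g x + b * g y := by linear_combination (-(g x)) * hab
  · subst hxy
    have h1 : a * x + b * x = x := by linear_combination x * hab
    rw [h1, ← add_mul, hab, one_mul]
  · have hb' : 0 ≤ a * (x - y) := mul_nonneg ha (by linarith)
    have ha' : 0 ≤ b * (x - y) := mul_nonneg hb (by linarith)
    have e1 : a * x + b * y - y = a * (x - y) := by linear_combination y * hab
    have e2 : x - (a * x + b * y) = b * (x - y) := by linear_combination (-x) * hab
    have hzmem : a * x + b * y ∈ Set.Icc y x := ⟨by linarith, by linarith⟩
    have H := main y hy x hx hxy _ hzmem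
    have hzy : a * x + b * y - y = a * (x - y) := by linear_combination y * hab
    rw [hzy] at H
    have hxy' : x - y ≠ 0 := sub_ne_zero.mpr hxy.ne'
    have hdiv : (g x - g y) / (x - y) * (a * (x - y)) = a * (g x - g y) := by
      field_simp
    rw [hdiv] at H
    calc g (a * x + b * y) ≤ g y + a * (g x - g y) := H
      _ = a * g x + b * g y := by linear_combination (-(g y)) * hab

/-- If a continuous function `f` on an open interval `I ⊆ ℝ` has nonnegative second-order
pseudo-derivative `D²f(t) = liminf_{h→0⁺} (f(t+h) + f(t−h) − 2f(t))/h²` at every point of `I`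
(the `liminf` being computed in `EReal` to handle unbounded difference quotients),
then `f` is convex on `I`. An open interval is a convex open subset of `ℝ`. -/
theorem convex_of_pseudo_second_deriv_nonneg (I : Set ℝ) (hI_open : IsOpen I)
    (hI_conv : Convex ℝ I) (f : ℝ → ℝ) (hf : ContinuousOn f I)
    (hD2 : ∀ t ∈ I,
      (0 : EReal) ≤ liminf
        (fun h : ℝ => (((f (t + h) + f (t - h) - 2 * f t) / h ^ 2 : ℝ) : EReal))
        (nhdsWithin 0 (Set.Ioi 0))) :
    ConvexOn ℝ I f := by
  have key : ∀ ε > (0:ℝ), ConvexOn ℝ I (fun t => f t + ε * t ^ 2) := by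
    intro ε hε
    apply aux_convexOn I hI_conv _ (hf.add (Continuous.continuousOn (by continuity)))
    intro t ht δ hδ
    by_contra hcon
    push_neg at hcon
    have hev : ∀ᶠ h in nhdsWithin (0:ℝ) (Set.Ioi 0),
        (((f (t + h) + f (t - h) - 2 * f t) / h ^ 2 : ℝ) : EReal)
          ≤ ((-(2 * ε) : ℝ) : EReal) := by
      filter_upwards [Ioo_mem_nhdsGT_of_mem (Set.left_mem_Ico.mpr hδ)] with h hh
      obtain ⟨hh0, hhδ⟩ := hh
      have h2 : (0:ℝ) < h ^ 2 := by positivity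
      have hN : f (t + h) + f (t - h) - 2 * f t ≤ -(2 * ε) * h ^ 2 := by
        have := hcon h hh0 hhδ
        simp only [Pi.add_apply] at this
        nlinarith [this]
      rw [EReal.coe_le_coe_iff]
      have := (div_le_div_iff_of_pos_right h2).mpr hN
      calc (f (t + h) + f (t - h) - 2 * f t) / h ^ 2
          ≤ (-(2 * ε) * h ^ 2) / h ^ 2 := this
        _ = -(2 * ε) := by field_simp
    have hlim := liminf_le_of_frequently_le' hev.frequently
    have h0 := (hD2 t ht).trans hlim
    rw [show (0 : EReal) = ((0 : ℝ) : EReal) from rfl, EReal.coe_le_coe_iff] at h0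
    linarith
  refine ⟨hI_conv, fun x hx y hy a b ha hb hab => ?_⟩
  simp only [smul_eq_mul]
  set z := a * x + b * y with hz
  have hC : z ^ 2 ≤ a * x ^ 2 + b * y ^ 2 := by
    have := (Even.convexOn_pow (𝕜 := ℝ) even_two).2 (Set.mem_univ x) (Set.mem_univ y)
      ha hb hab
    simpa [smul_eq_mul] using this
  set C : ℝ := a * x ^ 2 + b * y ^ 2 - z ^ 2 with hCdef
  have hC0 : 0 ≤ C := by simp only [hCdef]; linarith
  have step : ∀ ε > (0:ℝ), f z ≤ a * f x + b * f y + ε * C := by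
    intro ε hε
    have := (key ε hε).2 hx hy ha hb hab
    simp only [smul_eq_mul] at this
    have : f z + ε * z ^ 2 ≤ a * (f x + ε * x ^ 2) + b * (f y + ε * y ^ 2) := this
    simp only [hCdef]
    nlinarith
  by_contra hcon
  push_neg at hcon
  set δ := f z - (a * f x + b * f y) with hδdef
  have hδ : 0 < δ := by simp only [hδdef]; linarith
  have hε : 0 < δ / (C + 1) := by positivity
  have := step _ hε
  have hle : δ / (C + 1) * C < δ := by
    rw [div_mul_eq_mul_div, div_lt_iff₀ (by linarith)]
    nlinarith
  linarith [hδdef]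
end

section
/- Let (Ω, F, μ) be a measure space, let 1 < p ≤ 2, and let f, g : Ω → ℂ with f, g ∈ L^p(μ). Then the function t ↦ ‖f + t·g‖_p² − (p−1)·t²·‖g‖_p² is convex on ℝ. -/
open MeasureTheory Real Set

/-- weighted concavity pointwise: `l^(1-s) x^s + m^(1-s) y^s ≤ (x+y)^s`. -/
lemma bcl_rpow_weight {s x y l m : ℝ} (hs0 : 0 < s) (hs1 : s ≤ 1)
    (hx : 0 ≤ x) (hy : 0 ≤ y) (hl : 0 ≤ l) (hm : 0 ≤ m) (hlm : l + m = 1) :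
    l ^ (1 - s) * x ^ s + m ^ (1 - s) * y ^ s ≤ (x + y) ^ s := by
  rcases eq_or_lt_of_le (by positivity : (0:ℝ) ≤ x + y) with hT | hT
  · have hx0 : x = 0 := by linarith [hx, hy]
    have hy0 : y = 0 := by linarith [hx, hy]
    simp [hx0, hy0, Real.zero_rpow hs0.ne']
  · have h1 := Real.geom_mean_le_arith_mean2_weighted (by linarith : (0:ℝ) ≤ 1 - s) hs0.le
      hl (by positivity : 0 ≤ x / (x+y)) (by ring : (1-s) + s = 1)
    have h2 := Real.geom_mean_le_arith_mean2_weighted (by linarith : (0:ℝ) ≤ 1 - s) hs0.le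
      hm (by positivity : 0 ≤ y / (x+y)) (by ring : (1-s) + s = 1)
    have hsum : l ^ (1-s) * (x/(x+y)) ^ s + m ^ (1-s) * (y/(x+y)) ^ s ≤ 1 := by
      have : x/(x+y) + y/(x+y) = 1 := by field_simp
      nlinarith [h1, h2]
    have hdx : (x/(x+y)) ^ s = x ^ s / (x+y) ^ s := Real.div_rpow hx (by positivity : (0:ℝ) ≤ x+y) s
    have hdy : (y/(x+y)) ^ s = y ^ s / (x+y) ^ s := Real.div_rpow hy (by positivity : (0:ℝ) ≤ x+y) s
    rw [hdx, hdy] at hsum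
    have hTs : (0:ℝ) < (x+y) ^ s := Real.rpow_pos_of_pos hT _
    calc l ^ (1 - s) * x ^ s + m ^ (1 - s) * y ^ s
        = (l ^ (1-s) * (x ^ s / (x+y)^s) + m ^ (1-s) * (y ^ s / (x+y)^s)) * (x+y)^s := by
          field_simp
      _ ≤ 1 * (x+y)^s := by apply mul_le_mul_of_nonneg_right hsum hTs.le
      _ = (x+y)^s := one_mul _

/-- `(1+r)^q - (1-r)^q ≥ 2qr` for `0 < q ≤ 1`, `r ∈ [0,1]`. -/
lemma bcl_odd_ineq {q r : ℝ} (hq0 : 0 < q) (hq1 : q ≤ 1) (hr0 : 0 ≤ r) (hr1 : r ≤ 1) :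
    2 * q * r ≤ (1 + r) ^ q - (1 - r) ^ q := by
  set G : ℝ → ℝ := fun t => (1 + t) ^ q - (1 - t) ^ q - 2 * q * t with hG
  have hcont : ContinuousOn G (Icc 0 1) := by
    apply ContinuousOn.sub
    apply ContinuousOn.sub
    · exact fun t ht => ((Real.continuousAt_rpow_const _ _ (Or.inr hq0.le)).comp
        (by continuity : Continuous fun t : ℝ => 1 + t).continuousAt).continuousWithinAt
    · exact fun t ht => ((Real.continuousAt_rpow_const _ _ (Or.inr hq0.le)).comp
        (by continuity : Continuous fun t : ℝ => 1 - t).continuousAt).continuousWithinAt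
    · exact (continuous_const.mul continuous_id).continuousOn
  have hderiv : ∀ t ∈ Ioo (0:ℝ) 1, HasDerivAt G
      (q * (1 + t) ^ (q - 1) + q * (1 - t) ^ (q - 1) - 2 * q) t := by
    intro t ht
    have h1 : HasDerivAt (fun t : ℝ => (1 + t) ^ q) (1 * q * (1 + t) ^ (q - 1)) t :=
      (HasDerivAt.const_add (1:ℝ) (hasDerivAt_id t)).rpow_const (Or.inl (by nlinarith [ht.1] : (1:ℝ) + t ≠ 0))
    have h2 : HasDerivAt (fun t : ℝ => (1 - t) ^ q) ((-1) * q * (1 - t) ^ (q - 1)) t :=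
      (HasDerivAt.const_sub (1:ℝ) (hasDerivAt_id t)).rpow_const (Or.inl (by nlinarith [ht.2] : (1:ℝ) - t ≠ 0))
    have h3 : HasDerivAt (fun t : ℝ => 2 * q * t) (2 * q) t := by
      simpa using (hasDerivAt_id t).const_mul (2*q)
    have := (h1.sub h2).sub h3
    exact this.congr_deriv (by ring)
  have hmono : MonotoneOn G (Icc (0:ℝ) 1) := by
    apply monotoneOn_of_deriv_nonneg (convex_Icc 0 1) hcont
    · rw [interior_Icc]
      exact fun t ht => ((hderiv t ht).differentiableAt).differentiableWithinAt
    · rw [interior_Icc]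
      intro t ht
      rw [(hderiv t ht).deriv]
      have h1t : (0:ℝ) < 1 + t := by linarith [ht.1]
      have h2t : (0:ℝ) < 1 - t := by linarith [ht.2]
      set a := (1 + t) ^ (q - 1)
      set b := (1 - t) ^ (q - 1)
      have ha : 0 < a := Real.rpow_pos_of_pos h1t _
      have hb : 0 < b := Real.rpow_pos_of_pos h2t _
      have hab : 1 ≤ a * b := by
        have : a * b = ((1+t) * (1-t)) ^ (q-1) := (Real.mul_rpow h1t.le h2t.le).symm
        rw [this]
        apply Real.one_le_rpow_of_pos_of_le_one_of_nonpos
        · nlinarith [sq_nonneg t]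
        · nlinarith [sq_nonneg t]
        · linarith
      have h2ab : 2 ≤ a + b := by nlinarith [sq_nonneg (a - b), sq_nonneg (a + b - 2)]
      nlinarith
  have h0 : G 0 = 0 := by simp [hG]
  have := hmono (left_mem_Icc.2 zero_le_one) (mem_Icc.2 ⟨hr0, hr1⟩) hr0
  rw [h0] at this
  simp only [hG] at this
  linarith

/-- core scalar inequality: `(1+(p-1)r²)^(p/2) ≤ ((1+r)^p+(1-r)^p)/2`. -/
lemma bcl_core {p r : ℝ} (hp1 : 1 < p) (hp2 : p ≤ 2) (hr0 : 0 ≤ r) (hr1 : r ≤ 1) :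
    (1 + (p - 1) * r ^ 2) ^ (p / 2) ≤ ((1 + r) ^ p + (1 - r) ^ p) / 2 := by
  have hp0 : 0 < p := by linarith
  set Ψ : ℝ → ℝ := fun t => ((1 + t) ^ p + (1 - t) ^ p) / 2 - (1 + (p - 1) * t ^ 2) ^ (p / 2)
    with hΨ
  have hbase : ∀ t : ℝ, (0:ℝ) < 1 + (p - 1) * t ^ 2 := fun t => by nlinarith [sq_nonneg t]
  have hcont : ContinuousOn Ψ (Icc 0 1) := by
    apply ContinuousOn.sub
    · apply ContinuousOn.div_const
      apply ContinuousOn.add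
      · exact fun t ht => ((Real.continuousAt_rpow_const _ _ (Or.inr hp0.le)).comp
          (by continuity : Continuous fun t : ℝ => 1 + t).continuousAt).continuousWithinAt
      · exact fun t ht => ((Real.continuousAt_rpow_const _ _ (Or.inr hp0.le)).comp
          (by continuity : Continuous fun t : ℝ => 1 - t).continuousAt).continuousWithinAt
    · exact fun t ht => ((Real.continuousAt_rpow_const _ _ (Or.inr (by positivity))).comp
        (by continuity : Continuous fun t : ℝ => 1 + (p-1) * t^2).continuousAt).continuousWithinAt
  have hderiv : ∀ t ∈ Ioo (0:ℝ) 1, HasDerivAt Ψ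
      ((p * (1 + t) ^ (p - 1) - p * (1 - t) ^ (p - 1)) / 2
        - (p - 1) * (2 * t) * (p / 2) * (1 + (p - 1) * t ^ 2) ^ (p / 2 - 1)) t := by
    intro t ht
    have h1 : HasDerivAt (fun t : ℝ => (1 + t) ^ p) (1 * p * (1 + t) ^ (p - 1)) t :=
      (HasDerivAt.const_add (1:ℝ) (hasDerivAt_id t)).rpow_const
        (Or.inl (by nlinarith [ht.1] : (1:ℝ) + t ≠ 0))
    have h2 : HasDerivAt (fun t : ℝ => (1 - t) ^ p) ((-1) * p * (1 - t) ^ (p - 1)) t :=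
      (HasDerivAt.const_sub (1:ℝ) (hasDerivAt_id t)).rpow_const
        (Or.inl (by nlinarith [ht.2] : (1:ℝ) - t ≠ 0))
    have h3 : HasDerivAt (fun t : ℝ => 1 + (p - 1) * t ^ 2) ((p - 1) * (2 * t)) t := by
      have : HasDerivAt (fun t : ℝ => t ^ 2) (2 * t) t := by
        simpa using (hasDerivAt_pow 2 t)
      simpa using (this.const_mul (p-1)).const_add 1
    have h4 : HasDerivAt (fun t : ℝ => (1 + (p - 1) * t ^ 2) ^ (p / 2))
        ((p - 1) * (2 * t) * (p / 2) * (1 + (p - 1) * t ^ 2) ^ (p / 2 - 1)) t :=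
      h3.rpow_const (Or.inl (hbase t).ne')
    have := ((h1.add h2).div_const 2).sub h4
    exact this.congr_deriv (by ring)
  have hmono : MonotoneOn Ψ (Icc (0:ℝ) 1) := by
    apply monotoneOn_of_deriv_nonneg (convex_Icc 0 1) hcont
    · rw [interior_Icc]
      exact fun t ht => ((hderiv t ht).differentiableAt).differentiableWithinAt
    · rw [interior_Icc]
      intro t ht
      rw [(hderiv t ht).deriv]
      have key : 2 * (p - 1) * t ≤ (1 + t) ^ (p - 1) - (1 - t) ^ (p - 1) :=
        bcl_odd_ineq (by linarith) (by linarith) ht.1.le ht.2.le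
      have hfac : (1 + (p - 1) * t ^ 2) ^ (p / 2 - 1) ≤ 1 :=
        Real.rpow_le_one_of_one_le_of_nonpos (by nlinarith [sq_nonneg t]) (by linarith)
      have hfacpos : (0:ℝ) < (1 + (p - 1) * t ^ 2) ^ (p / 2 - 1) :=
        Real.rpow_pos_of_pos (hbase t) _
      have ht0 : 0 ≤ t := ht.1.le
      nlinarith [mul_le_mul_of_nonneg_left hfac (mul_nonneg (mul_nonneg (by linarith : (0:ℝ) ≤ p-1) (by linarith : (0:ℝ) ≤ 2*t)) (by linarith : (0:ℝ) ≤ p/2))]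
  have h0 : Ψ 0 = 0 := by norm_num [hΨ]
  have := hmono (left_mem_Icc.2 zero_le_one) (mem_Icc.2 ⟨hr0, hr1⟩) hr0
  rw [h0] at this
  simp only [hΨ] at this
  linarith

lemma bcl_rpow_sq {x s : ℝ} (hx : 0 ≤ x) : (x ^ 2) ^ s = x ^ (2 * s) := by
  rw [← Real.rpow_natCast x 2, ← Real.rpow_mul hx]
  norm_num

/-- `x ↦ (x+d)^s - x^s` is antitone for `0 < s ≤ 1`. -/
lemma bcl_rpow_diff {s d a b : ℝ} (hs0 : 0 < s) (hs1 : s ≤ 1) (hd : 0 ≤ d)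
    (ha : 0 ≤ a) (hab : a ≤ b) :
    (b + d) ^ s - b ^ s ≤ (a + d) ^ s - a ^ s := by
  rcases eq_or_lt_of_le hd with rfl | hd
  · simp
  set f : ℝ → ℝ := fun x => (x + d) ^ s - x ^ s with hf
  have hcont : ContinuousOn f (Ici 0) := by
    apply ContinuousOn.sub
    · exact fun t ht => ((Real.continuousAt_rpow_const _ _ (Or.inr hs0.le)).comp
        (by continuity : Continuous fun t : ℝ => t + d).continuousAt).continuousWithinAt
    · exact fun t ht => ((Real.continuousAt_rpow_const _ _ (Or.inr hs0.le)).comp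
        continuous_id.continuousAt).continuousWithinAt
  have hderiv : ∀ t ∈ Ioi (0:ℝ), HasDerivAt f
      (s * (t + d) ^ (s - 1) - s * t ^ (s - 1)) t := by
    intro t ht
    have h1 : HasDerivAt (fun t : ℝ => (t + d) ^ s) (1 * s * (t + d) ^ (s - 1)) t :=
      (HasDerivAt.add_const d (hasDerivAt_id t)).rpow_const
        (Or.inl (ne_of_gt (add_pos (mem_Ioi.1 ht) hd)))
    have h2 : HasDerivAt (fun t : ℝ => t ^ s) (1 * s * t ^ (s - 1)) t :=
      (hasDerivAt_id t).rpow_const (Or.inl (ne_of_gt ht))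
    have := h1.sub h2
    exact this.congr_deriv (by ring)
  have hanti : AntitoneOn f (Ici (0:ℝ)) := by
    apply antitoneOn_of_deriv_nonpos (convex_Ici 0) hcont
    · rw [interior_Ici]
      exact fun t ht => ((hderiv t ht).differentiableAt).differentiableWithinAt
    · rw [interior_Ici]
      intro t ht
      rw [(hderiv t ht).deriv]
      have : (t + d) ^ (s - 1) ≤ t ^ (s - 1) :=
        Real.rpow_le_rpow_of_nonpos ht (by linarith) (by linarith)
      nlinarith
  exact hanti (mem_Ici.2 ha) (mem_Ici.2 (le_trans ha hab)) hab

/-- real two-point inequality -/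
lemma bcl_real_twopoint {p m n : ℝ} (hp1 : 1 < p) (hp2 : p ≤ 2) (hn : 0 ≤ n) (hnm : n ≤ m) :
    (m ^ 2 + (p - 1) * n ^ 2) ^ (p / 2) ≤ ((m + n) ^ p + (m - n) ^ p) / 2 := by
  have hp0 : 0 < p := by linarith
  rcases eq_or_lt_of_le (le_trans hn hnm) with hm | hm
  · have hn0 : n = 0 := le_antisymm (by linarith) hn
    rw [← hm, hn0]
    norm_num [Real.zero_rpow (by positivity : p/2 ≠ 0), Real.zero_rpow hp0.ne']
  · have hr0 : 0 ≤ n / m := by positivity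
    have hr1 : n / m ≤ 1 := by rw [div_le_one hm]; exact hnm
    have hcore := bcl_core hp1 hp2 hr0 hr1
    have hmp : (0:ℝ) < m ^ p := Real.rpow_pos_of_pos hm p
    have e1 : ((m ^ 2 : ℝ)) ^ (p/2) * (1 + (p-1) * (n/m)^2) ^ (p/2)
        = (m ^ 2 + (p-1) * n ^ 2) ^ (p/2) := by
      rw [← Real.mul_rpow (by positivity) (by nlinarith [sq_nonneg (n/m)])]
      congr 1
      field_simp
    have e2 : m ^ p * (1 + n/m) ^ p = (m + n) ^ p := by
      rw [← Real.mul_rpow hm.le (by positivity)]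
      congr 1
      field_simp
    have e3 : m ^ p * (1 - n/m) ^ p = (m - n) ^ p := by
      rw [← Real.mul_rpow hm.le (by rw [sub_nonneg, div_le_one hm]; exact hnm)]
      congr 1
      field_simp
    have hms : ((m ^ 2 : ℝ)) ^ (p/2) = m ^ p := by
      rw [bcl_rpow_sq hm.le]
      congr 1
      ring
    calc (m ^ 2 + (p - 1) * n ^ 2) ^ (p / 2)
        = m ^ p * (1 + (p-1) * (n/m)^2) ^ (p/2) := by rw [← e1, hms]
      _ ≤ m ^ p * (((1 + n/m) ^ p + (1 - n/m) ^ p) / 2) := by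
          apply mul_le_mul_of_nonneg_left hcore hmp.le
      _ = ((m + n) ^ p + (m - n) ^ p) / 2 := by rw [mul_div_assoc', mul_add, e2, e3]

/-- rearrangement step: with `A ≤ B`, square-sum fixed, product larger, the `p`-sum is larger. -/
lemma bcl_rearrange {p A B m n : ℝ} (hp1 : 1 < p) (hp2 : p ≤ 2)
    (hA : 0 ≤ A) (hAB : A ≤ B) (hn : 0 ≤ n) (hnm : n ≤ m)
    (hsum : A ^ 2 + B ^ 2 = 2 * m ^ 2 + 2 * n ^ 2)
    (hprod : (m ^ 2 - n ^ 2) ^ 2 ≤ A ^ 2 * B ^ 2) :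
    (m + n) ^ p + (m - n) ^ p ≤ A ^ p + B ^ p := by
  have hB : 0 ≤ B := le_trans hA hAB
  have hs0 : 0 < p / 2 := by linarith
  have hs1 : p / 2 ≤ 1 := by linarith
  obtain ⟨c, hc⟩ : ∃ c : ℝ, c = A ^ 2 + B ^ 2 := ⟨_, rfl⟩
  obtain ⟨u, hu⟩ : ∃ u : ℝ, u = A ^ 2 := ⟨_, rfl⟩
  obtain ⟨u₁, hu1⟩ : ∃ u₁ : ℝ, u₁ = (m - n) ^ 2 := ⟨_, rfl⟩
  have hcu1 : c - u₁ = (m + n) ^ 2 := by rw [hc, hsum, hu1]; ring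
  have hu₁c : u₁ ≤ c - u₁ := by rw [hcu1, hu1]; nlinarith
  have huc : u ≤ c - u := by rw [hc, hu]; nlinarith
  have hu1u : u₁ ≤ u := by
    by_contra hcon
    push_neg at hcon
    have h1 : u * (c - u) < u₁ * (c - u₁) := by nlinarith
    have h2 : u₁ * (c - u₁) ≤ u * (c - u) := by
      have : u * (c - u) = A ^ 2 * B ^ 2 := by rw [hu, hc]; ring
      rw [this, hcu1, hu1]
      nlinarith
    linarith
  have hkey := bcl_rpow_diff hs0 hs1 (by linarith : (0:ℝ) ≤ u - u₁)
    (by rw [hu1]; positivity : (0:ℝ) ≤ u₁) (by linarith : u₁ ≤ c - u)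
  have e0 : u₁ + (u - u₁) = u := by ring
  have e0' : c - u + (u - u₁) = c - u₁ := by ring
  rw [e0, e0'] at hkey
  -- hkey : (c - u₁)^s - (c-u)^s ≤ u^s - u₁^s
  have eA : u ^ (p/2) = A ^ p := by rw [hu, bcl_rpow_sq hA]; congr 1; ring
  have eB : (c - u) ^ (p/2) = B ^ p := by
    have : c - u = B ^ 2 := by rw [hc, hu]; ring
    rw [this, bcl_rpow_sq hB]; congr 1; ring
  have em : (c - u₁) ^ (p/2) = (m + n) ^ p := by
    rw [hcu1, bcl_rpow_sq (by linarith : (0:ℝ) ≤ m + n)]; congr 1; ring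
  have en : u₁ ^ (p/2) = (m - n) ^ p := by
    rw [hu1, bcl_rpow_sq (by linarith : (0:ℝ) ≤ m - n)]; congr 1; ring
  rw [eA, eB, em, en] at hkey
  linarith

/-- complex two-point inequality -/
lemma bcl_complex_twopoint {p : ℝ} (hp1 : 1 < p) (hp2 : p ≤ 2) (x y : ℂ) :
    (‖x‖ ^ 2 + (p - 1) * ‖y‖ ^ 2) ^ (p / 2) ≤ (‖x + y‖ ^ p + ‖x - y‖ ^ p) / 2 := by
  have hnsq : ∀ z : ℂ, ‖z‖ ^ 2 = z.re ^ 2 + z.im ^ 2 := by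
    intro z
    rw [Complex.sq_norm, Complex.normSq_apply]
    ring
  set m : ℝ := max ‖x‖ ‖y‖ with hm
  set n : ℝ := min ‖x‖ ‖y‖ with hn
  have hn0 : 0 ≤ n := le_min (norm_nonneg x) (norm_nonneg y)
  have hnm : n ≤ m := min_le_max
  have hsum0 : ‖x + y‖ ^ 2 + ‖x - y‖ ^ 2 = 2 * m ^ 2 + 2 * n ^ 2 := by
    have h1 := hnsq (x + y)
    have h2 := hnsq (x - y)
    have h3 := hnsq x
    have h4 := hnsq y
    have hmn : m ^ 2 + n ^ 2 = ‖x‖ ^ 2 + ‖y‖ ^ 2 := by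
      rcases le_total ‖x‖ ‖y‖ with h | h
      · rw [hm, hn, max_eq_right h, min_eq_left h]; try ring
      · rw [hm, hn, max_eq_left h, min_eq_right h]; try ring
    simp only [Complex.add_re, Complex.add_im, Complex.sub_re, Complex.sub_im] at h1 h2
    nlinarith [h1, h2, h3, h4, hmn]
  have hprod0 : (m ^ 2 - n ^ 2) ^ 2 ≤ ‖x + y‖ ^ 2 * ‖x - y‖ ^ 2 := by
    have h1 := hnsq (x + y)
    have h2 := hnsq (x - y)
    have h3 := hnsq x
    have h4 := hnsq y
    have hmn2 : (m ^ 2 - n ^ 2) ^ 2 = (‖x‖ ^ 2 - ‖y‖ ^ 2) ^ 2 := by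
      rcases le_total ‖x‖ ‖y‖ with h | h
      · rw [hm, hn, max_eq_right h, min_eq_left h]; try ring
      · rw [hm, hn, max_eq_left h, min_eq_right h]; try ring
    simp only [Complex.add_re, Complex.add_im, Complex.sub_re, Complex.sub_im] at h1 h2
    rw [hmn2, h1, h2, h3, h4]
    nlinarith [sq_nonneg (x.re * y.im - x.im * y.re), sq_nonneg (x.re * y.re + x.im * y.im)]
  have hstep1 : ‖x‖ ^ 2 + (p - 1) * ‖y‖ ^ 2 ≤ m ^ 2 + (p - 1) * n ^ 2 := by
    rcases le_total ‖x‖ ‖y‖ with h | h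
    · rw [hm, hn, max_eq_right h, min_eq_left h]
      nlinarith [pow_le_pow_left₀ (norm_nonneg x) h 2, hp2]
    · rw [hm, hn, max_eq_left h, min_eq_right h]
  have hstep2 : (m + n) ^ p + (m - n) ^ p ≤ ‖x + y‖ ^ p + ‖x - y‖ ^ p := by
    rcases le_total ‖x + y‖ ‖x - y‖ with h | h
    · exact bcl_rearrange hp1 hp2 (norm_nonneg _) h hn0 hnm hsum0 hprod0
    · have := bcl_rearrange hp1 hp2 (norm_nonneg (x - y)) h hn0 hnm
        (by linarith [hsum0] : ‖x - y‖ ^ 2 + ‖x + y‖ ^ 2 = 2 * m ^ 2 + 2 * n ^ 2)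
        (by nlinarith [hprod0] : (m ^ 2 - n ^ 2) ^ 2 ≤ ‖x - y‖ ^ 2 * ‖x + y‖ ^ 2)
      linarith
  calc (‖x‖ ^ 2 + (p - 1) * ‖y‖ ^ 2) ^ (p / 2)
      ≤ (m ^ 2 + (p - 1) * n ^ 2) ^ (p / 2) := by
        apply Real.rpow_le_rpow (by nlinarith [norm_nonneg x, norm_nonneg y, sq_nonneg ‖x‖, sq_nonneg ‖y‖]) hstep1 (by linarith)
    _ ≤ ((m + n) ^ p + (m - n) ^ p) / 2 := bcl_real_twopoint hp1 hp2 hn0 hnm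
    _ ≤ (‖x + y‖ ^ p + ‖x - y‖ ^ p) / 2 := by linarith

section
variable {Ω : Type*} [MeasurableSpace Ω] {μ : MeasureTheory.Measure Ω}

/-- reverse Minkowski inequality for exponent `s ≤ 1`. -/
lemma bcl_revMink {F G : Ω → ℝ} {s : ℝ} (hs0 : 0 < s) (hs1 : s ≤ 1)
    (hF0 : ∀ ω, 0 ≤ F ω) (hG0 : ∀ ω, 0 ≤ G ω)
    (hFs : Integrable (fun ω => F ω ^ s) μ) (hGs : Integrable (fun ω => G ω ^ s) μ)
    (hFGs : Integrable (fun ω => (F ω + G ω) ^ s) μ) :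
    (∫ ω, F ω ^ s ∂μ) ^ s⁻¹ + (∫ ω, G ω ^ s ∂μ) ^ s⁻¹
      ≤ (∫ ω, (F ω + G ω) ^ s ∂μ) ^ s⁻¹ := by
  have hIF0 : 0 ≤ ∫ ω, F ω ^ s ∂μ :=
    integral_nonneg fun ω => Real.rpow_nonneg (hF0 ω) s
  have hIG0 : 0 ≤ ∫ ω, G ω ^ s ∂μ :=
    integral_nonneg fun ω => Real.rpow_nonneg (hG0 ω) s
  have hIFG0 : 0 ≤ ∫ ω, (F ω + G ω) ^ s ∂μ :=
    integral_nonneg fun ω => Real.rpow_nonneg (add_nonneg (hF0 ω) (hG0 ω)) s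
  have hFmono : (∫ ω, F ω ^ s ∂μ) ≤ ∫ ω, (F ω + G ω) ^ s ∂μ :=
    integral_mono hFs hFGs fun ω =>
      Real.rpow_le_rpow (hF0 ω) (le_add_of_nonneg_right (hG0 ω)) hs0.le
  have hGmono : (∫ ω, G ω ^ s ∂μ) ≤ ∫ ω, (F ω + G ω) ^ s ∂μ :=
    integral_mono hGs hFGs fun ω =>
      Real.rpow_le_rpow (hG0 ω) (le_add_of_nonneg_left (hF0 ω)) hs0.le
  rcases eq_or_lt_of_le hIF0 with hIF | hIF
  · rw [← hIF, Real.zero_rpow (by positivity : s⁻¹ ≠ 0), zero_add]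
    exact Real.rpow_le_rpow hIG0 hGmono (by positivity)
  rcases eq_or_lt_of_le hIG0 with hIG | hIG
  · rw [← hIG, Real.zero_rpow (by positivity : s⁻¹ ≠ 0), add_zero]
    exact Real.rpow_le_rpow hIF0 hFmono (by positivity)
  obtain ⟨L, hL⟩ : ∃ L : ℝ, L = (∫ ω, F ω ^ s ∂μ) ^ s⁻¹ := ⟨_, rfl⟩
  obtain ⟨M, hM⟩ : ∃ M : ℝ, M = (∫ ω, G ω ^ s ∂μ) ^ s⁻¹ := ⟨_, rfl⟩
  have hLpos : 0 < L := hL ▸ Real.rpow_pos_of_pos hIF _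
  have hMpos : 0 < M := hM ▸ Real.rpow_pos_of_pos hIG _
  have hLM : 0 < L + M := by linarith
  have hLs : L ^ s = ∫ ω, F ω ^ s ∂μ := by
    rw [hL, ← Real.rpow_mul hIF0, inv_mul_cancel₀ hs0.ne', Real.rpow_one]
  have hMs : M ^ s = ∫ ω, G ω ^ s ∂μ := by
    rw [hM, ← Real.rpow_mul hIG0, inv_mul_cancel₀ hs0.ne', Real.rpow_one]
  -- pointwise weighted inequality
  have hptw : ∀ ω, (L/(L+M)) ^ (1-s) * F ω ^ s + (M/(L+M)) ^ (1-s) * G ω ^ s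
      ≤ (F ω + G ω) ^ s := fun ω =>
    bcl_rpow_weight hs0 hs1 (hF0 ω) (hG0 ω) (by positivity) (by positivity)
      (by field_simp)
  have hint : (L/(L+M)) ^ (1-s) * (∫ ω, F ω ^ s ∂μ)
      + (M/(L+M)) ^ (1-s) * (∫ ω, G ω ^ s ∂μ) ≤ ∫ ω, (F ω + G ω) ^ s ∂μ := by
    have hi := integral_mono ((hFs.const_mul _).add (hGs.const_mul _)) hFGs hptw
    simp only [Pi.add_apply] at hi
    rwa [integral_add (hFs.const_mul _) (hGs.const_mul _),
      integral_const_mul, integral_const_mul] at hi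
  have hcomb : (L + M) ^ s ≤ ∫ ω, (F ω + G ω) ^ s ∂μ := by
    have he : (L/(L+M)) ^ (1-s) * L ^ s + (M/(L+M)) ^ (1-s) * M ^ s = (L+M) ^ s := by
      rw [Real.div_rpow hLpos.le hLM.le, Real.div_rpow hMpos.le hLM.le,
        div_mul_eq_mul_div, div_mul_eq_mul_div, ← add_div,
        ← Real.rpow_add hLpos, ← Real.rpow_add hMpos, sub_add_cancel,
        Real.rpow_one, Real.rpow_one, div_eq_iff (Real.rpow_pos_of_pos hLM (1-s)).ne',
        ← Real.rpow_add hLM, show s + (1 - s) = 1 by ring, Real.rpow_one]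
    rw [← he, hLs, hMs]
    exact hint
  calc (∫ ω, F ω ^ s ∂μ) ^ s⁻¹ + (∫ ω, G ω ^ s ∂μ) ^ s⁻¹
      = L + M := by rw [hL, hM]
    _ = ((L + M) ^ s) ^ s⁻¹ := by
        rw [← Real.rpow_mul hLM.le, mul_inv_cancel₀ hs0.ne', Real.rpow_one]
    _ ≤ (∫ ω, (F ω + G ω) ^ s ∂μ) ^ s⁻¹ :=
        Real.rpow_le_rpow (Real.rpow_nonneg hLM.le s) hcomb (by positivity)

/-- main midpoint inequality in `L^p`. -/
lemma bcl_key {p : ℝ} (hp1 : 1 < p) (hp2 : p ≤ 2) {u v : Ω → ℂ}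
    (hu : MemLp u (ENNReal.ofReal p) μ) (hv : MemLp v (ENNReal.ofReal p) μ) :
    (eLpNorm u (ENNReal.ofReal p) μ).toReal ^ 2
      + (p - 1) * (eLpNorm v (ENNReal.ofReal p) μ).toReal ^ 2
    ≤ ((eLpNorm (fun ω => u ω + v ω) (ENNReal.ofReal p) μ).toReal ^ 2
      + (eLpNorm (fun ω => u ω - v ω) (ENNReal.ofReal p) μ).toReal ^ 2) / 2 := by
  have hp0 : 0 < p := by linarith
  have hP0 : (ENNReal.ofReal p) ≠ 0 := by
    simp [ENNReal.ofReal_eq_zero, not_le, hp0]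
  have hPt : (ENNReal.ofReal p) ≠ ⊤ := ENNReal.ofReal_ne_top
  have hPtoReal : (ENNReal.ofReal p).toReal = p := ENNReal.toReal_ofReal hp0.le
  have huv : MemLp (fun ω => u ω + v ω) (ENNReal.ofReal p) μ := hu.add hv
  have huv' : MemLp (fun ω => u ω - v ω) (ENNReal.ofReal p) μ := hu.sub hv
  -- integrability of p-th powers
  have iu : Integrable (fun ω => ‖u ω‖ ^ p) μ := by
    simpa [hPtoReal] using hu.integrable_norm_rpow hP0 hPt
  have iv : Integrable (fun ω => ‖v ω‖ ^ p) μ := by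
    simpa [hPtoReal] using hv.integrable_norm_rpow hP0 hPt
  have iuv : Integrable (fun ω => ‖u ω + v ω‖ ^ p) μ := by
    simpa [hPtoReal] using huv.integrable_norm_rpow hP0 hPt
  have iuv' : Integrable (fun ω => ‖u ω - v ω‖ ^ p) μ := by
    simpa [hPtoReal] using huv'.integrable_norm_rpow hP0 hPt
  -- norms as integrals
  have hα0 : 0 ≤ ∫ ω, ‖u ω‖ ^ p ∂μ := integral_nonneg fun ω => by positivity
  have hβ0 : 0 ≤ ∫ ω, ‖v ω‖ ^ p ∂μ := integral_nonneg fun ω => by positivity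
  have ha0 : 0 ≤ ∫ ω, ‖u ω + v ω‖ ^ p ∂μ := integral_nonneg fun ω => by positivity
  have hb0 : 0 ≤ ∫ ω, ‖u ω - v ω‖ ^ p ∂μ := integral_nonneg fun ω => by positivity
  have eNu : (eLpNorm u (ENNReal.ofReal p) μ).toReal = (∫ ω, ‖u ω‖ ^ p ∂μ) ^ p⁻¹ := by
    rw [hu.eLpNorm_eq_integral_rpow_norm hP0 hPt, ENNReal.toReal_ofReal (by positivity), hPtoReal]
  have eNv : (eLpNorm v (ENNReal.ofReal p) μ).toReal = (∫ ω, ‖v ω‖ ^ p ∂μ) ^ p⁻¹ := by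
    rw [hv.eLpNorm_eq_integral_rpow_norm hP0 hPt, ENNReal.toReal_ofReal (by positivity), hPtoReal]
  have eNuv : (eLpNorm (fun ω => u ω + v ω) (ENNReal.ofReal p) μ).toReal
      = (∫ ω, ‖u ω + v ω‖ ^ p ∂μ) ^ p⁻¹ := by
    rw [huv.eLpNorm_eq_integral_rpow_norm hP0 hPt, ENNReal.toReal_ofReal (by positivity), hPtoReal]
  have eNuv' : (eLpNorm (fun ω => u ω - v ω) (ENNReal.ofReal p) μ).toReal
      = (∫ ω, ‖u ω - v ω‖ ^ p ∂μ) ^ p⁻¹ := by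
    rw [huv'.eLpNorm_eq_integral_rpow_norm hP0 hPt, ENNReal.toReal_ofReal (by positivity), hPtoReal]
  -- squares of norms
  have hsq : ∀ x : ℝ, 0 ≤ x → (x ^ p⁻¹) ^ 2 = x ^ (p/2)⁻¹ := by
    intro x hx
    rw [← Real.rpow_natCast (x ^ p⁻¹) 2, ← Real.rpow_mul hx]
    congr 1
    push_cast
    rw [inv_div]
    ring
  -- apply reverse Minkowski with F = ‖u‖², G = (p-1)‖v‖², s = p/2
  have hs0 : (0:ℝ) < p / 2 := by linarith
  have hs1 : p / 2 ≤ 1 := by linarith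
  have hFeq : ∀ ω : Ω, (‖u ω‖ ^ 2) ^ (p/2) = ‖u ω‖ ^ p := fun ω => by
    rw [bcl_rpow_sq (norm_nonneg _)]; congr 1; ring
  have hGeq : ∀ ω : Ω, ((p - 1) * ‖v ω‖ ^ 2) ^ (p/2) = (p-1) ^ (p/2) * ‖v ω‖ ^ p := fun ω => by
    rw [Real.mul_rpow (by linarith) (by positivity), bcl_rpow_sq (norm_nonneg _)]
    congr 1; ring
  have hFs : Integrable (fun ω => (‖u ω‖ ^ 2) ^ (p/2)) μ := by
    simpa only [hFeq] using iu
  have hGs : Integrable (fun ω => ((p - 1) * ‖v ω‖ ^ 2) ^ (p/2)) μ := by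
    simp only [hGeq]
    exact iv.const_mul _
  have hdom : Integrable (fun ω => (‖u ω + v ω‖ ^ p + ‖u ω - v ω‖ ^ p) / 2) μ :=
    (iuv.add iuv').div_const 2
  have hptw : ∀ ω : Ω, (‖u ω‖ ^ 2 + (p - 1) * ‖v ω‖ ^ 2) ^ (p/2)
      ≤ (‖u ω + v ω‖ ^ p + ‖u ω - v ω‖ ^ p) / 2 := fun ω =>
    bcl_complex_twopoint hp1 hp2 (u ω) (v ω)
  have hWmeas : AEStronglyMeasurable
      (fun ω => (‖u ω‖ ^ 2 + (p - 1) * ‖v ω‖ ^ 2) ^ (p/2)) μ := by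
    have hcont : Continuous fun x : ℝ => x ^ (p/2) := by
      rw [continuous_iff_continuousAt]
      exact fun x => Real.continuousAt_rpow_const _ _ (Or.inr hs0.le)
    exact hcont.comp_aestronglyMeasurable
      (((hu.aestronglyMeasurable.norm.aemeasurable.pow_const 2).add
        (((hv.aestronglyMeasurable.norm.aemeasurable.pow_const 2)).const_mul
          (p-1))).aestronglyMeasurable)
  have hFGs : Integrable (fun ω => (‖u ω‖ ^ 2 + (p - 1) * ‖v ω‖ ^ 2) ^ (p/2)) μ := by
    apply hdom.mono' hWmeas
    filter_upwards with ω
    rw [Real.norm_eq_abs, abs_of_nonneg (Real.rpow_nonneg (add_nonneg (by positivity) (mul_nonneg (by linarith) (by positivity))) _)]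
    exact hptw ω
  have hRM := bcl_revMink hs0 hs1 (fun ω => by positivity : ∀ ω : Ω, (0:ℝ) ≤ ‖u ω‖ ^ 2)
    (fun ω => mul_nonneg (by linarith) (by positivity) : ∀ ω : Ω, (0:ℝ) ≤ (p - 1) * ‖v ω‖ ^ 2) hFs hGs hFGs
  -- rewrite the three integrals in hRM
  rw [show (∫ ω, (‖u ω‖ ^ 2) ^ (p/2) ∂μ) = ∫ ω, ‖u ω‖ ^ p ∂μ from integral_congr_ae
      (Filter.Eventually.of_forall fun ω => hFeq ω),
    show (∫ ω, ((p - 1) * ‖v ω‖ ^ 2) ^ (p/2) ∂μ) = (p-1) ^ (p/2) * ∫ ω, ‖v ω‖ ^ p ∂μ from by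
      rw [← integral_const_mul]
      exact integral_congr_ae (Filter.Eventually.of_forall fun ω => hGeq ω)] at hRM
  have hRM2 : (∫ ω, ‖u ω‖ ^ p ∂μ) ^ (p/2)⁻¹
      + (p - 1) * (∫ ω, ‖v ω‖ ^ p ∂μ) ^ (p/2)⁻¹
      ≤ (∫ ω, (‖u ω‖ ^ 2 + (p - 1) * ‖v ω‖ ^ 2) ^ (p/2) ∂μ) ^ (p/2)⁻¹ := by
    have e : ((p-1) ^ (p/2) * ∫ ω, ‖v ω‖ ^ p ∂μ) ^ (p/2)⁻¹
        = (p - 1) * (∫ ω, ‖v ω‖ ^ p ∂μ) ^ (p/2)⁻¹ := by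
      rw [Real.mul_rpow (Real.rpow_nonneg (by linarith) _) hβ0,
        ← Real.rpow_mul (by linarith : (0:ℝ) ≤ p - 1),
        mul_inv_cancel₀ hs0.ne', Real.rpow_one]
    rw [← e]
    exact hRM
  -- upper bound for the middle integral
  have hmid : (∫ ω, (‖u ω‖ ^ 2 + (p - 1) * ‖v ω‖ ^ 2) ^ (p/2) ∂μ)
      ≤ ((∫ ω, ‖u ω + v ω‖ ^ p ∂μ) + ∫ ω, ‖u ω - v ω‖ ^ p ∂μ) / 2 := by
    have := integral_mono hFGs hdom hptw
    rwa [integral_div, integral_add iuv iuv'] at this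
  have hmid0 : 0 ≤ ∫ ω, (‖u ω‖ ^ 2 + (p - 1) * ‖v ω‖ ^ 2) ^ (p/2) ∂μ :=
    integral_nonneg fun ω => Real.rpow_nonneg (add_nonneg (by positivity) (mul_nonneg (by linarith) (by positivity))) _
  -- power mean step
  have hpm : (((∫ ω, ‖u ω + v ω‖ ^ p ∂μ) + ∫ ω, ‖u ω - v ω‖ ^ p ∂μ) / 2) ^ (p/2)⁻¹
      ≤ ((∫ ω, ‖u ω + v ω‖ ^ p ∂μ) ^ (p/2)⁻¹
        + (∫ ω, ‖u ω - v ω‖ ^ p ∂μ) ^ (p/2)⁻¹) / 2 := by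
    have hcvx := convexOn_rpow (show (1:ℝ) ≤ (p/2)⁻¹ by
      rw [le_inv_comm₀ one_pos hs0]; simpa using hs1)
    have := hcvx.2 (mem_Ici.2 ha0) (mem_Ici.2 hb0)
      (by norm_num : (0:ℝ) ≤ 1/2) (by norm_num : (0:ℝ) ≤ 1/2) (by norm_num)
    simp only [smul_eq_mul] at this
    calc (((∫ ω, ‖u ω + v ω‖ ^ p ∂μ) + ∫ ω, ‖u ω - v ω‖ ^ p ∂μ) / 2) ^ (p/2)⁻¹
        = (1/2 * (∫ ω, ‖u ω + v ω‖ ^ p ∂μ) + 1/2 * ∫ ω, ‖u ω - v ω‖ ^ p ∂μ) ^ (p/2)⁻¹ := by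
          congr 1; ring
      _ ≤ 1/2 * (∫ ω, ‖u ω + v ω‖ ^ p ∂μ) ^ (p/2)⁻¹
          + 1/2 * (∫ ω, ‖u ω - v ω‖ ^ p ∂μ) ^ (p/2)⁻¹ := this
      _ = ((∫ ω, ‖u ω + v ω‖ ^ p ∂μ) ^ (p/2)⁻¹
          + (∫ ω, ‖u ω - v ω‖ ^ p ∂μ) ^ (p/2)⁻¹) / 2 := by ring
  -- put everything together
  rw [eNu, eNv, eNuv, eNuv', hsq _ hα0, hsq _ hβ0, hsq _ ha0, hsq _ hb0]
  calc (∫ ω, ‖u ω‖ ^ p ∂μ) ^ (p/2)⁻¹ + (p - 1) * (∫ ω, ‖v ω‖ ^ p ∂μ) ^ (p/2)⁻¹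
      ≤ (∫ ω, (‖u ω‖ ^ 2 + (p - 1) * ‖v ω‖ ^ 2) ^ (p/2) ∂μ) ^ (p/2)⁻¹ := hRM2
    _ ≤ (((∫ ω, ‖u ω + v ω‖ ^ p ∂μ) + ∫ ω, ‖u ω - v ω‖ ^ p ∂μ) / 2) ^ (p/2)⁻¹ :=
        Real.rpow_le_rpow hmid0 hmid (by positivity)
    _ ≤ ((∫ ω, ‖u ω + v ω‖ ^ p ∂μ) ^ (p/2)⁻¹
        + (∫ ω, ‖u ω - v ω‖ ^ p ∂μ) ^ (p/2)⁻¹) / 2 := hpm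

end

/-- a continuous midpoint-convex function on `ℝ` is convex. -/
lemma bcl_convexOn_of_midpoint {φ : ℝ → ℝ} (hc : Continuous φ)
    (hm : ∀ x y : ℝ, φ ((x + y) / 2) ≤ (φ x + φ y) / 2) :
    ConvexOn ℝ Set.univ φ := by
  constructor
  · exact convex_univ
  intro x _ y _ a b ha hb hab
  -- reduce to t ∈ [0,1] with the segment parametrization
  suffices h : ∀ t ∈ Icc (0:ℝ) 1, φ (x + t * (y - x)) ≤ φ x + t * (φ y - φ x) by
    have := h b ⟨hb, by linarith⟩
    have hx : a • x + b • y = x + b * (y - x) := by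
      simp only [smul_eq_mul]
      have : a = 1 - b := by linarith
      rw [this]; ring
    rw [hx]
    calc φ (x + b * (y - x)) ≤ φ x + b * (φ y - φ x) := this
      _ = a * φ x + b * φ y := by
          have : a = 1 - b := by linarith
          rw [this]; ring
  -- the set of good parameters
  set S : Set ℝ := {t | t ∈ Icc (0:ℝ) 1 ∧ φ (x + t * (y - x)) ≤ φ x + t * (φ y - φ x)}
    with hS
  have hclosed : IsClosed S := by
    apply IsClosed.inter isClosed_Icc
    exact isClosed_le (hc.comp (by continuity)) (by continuity)
  have h0 : (0:ℝ) ∈ S := by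
    constructor
    · exact ⟨le_refl 0, zero_le_one⟩
    · simp
  have h1 : (1:ℝ) ∈ S := by
    constructor
    · exact ⟨zero_le_one, le_refl 1⟩
    · simp
  have hmidS : ∀ s t, s ∈ S → t ∈ S → (s + t) / 2 ∈ S := by
    rintro s t ⟨hs1, hs2⟩ ⟨ht1, ht2⟩
    refine ⟨⟨by cases hs1; cases ht1; linarith, by cases hs1; cases ht1; linarith⟩, ?_⟩
    have e : x + (s + t) / 2 * (y - x)
        = ((x + s * (y - x)) + (x + t * (y - x))) / 2 := by ring
    rw [e]
    calc φ (((x + s * (y - x)) + (x + t * (y - x))) / 2)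
        ≤ (φ (x + s * (y - x)) + φ (x + t * (y - x))) / 2 := hm _ _
      _ ≤ ((φ x + s * (φ y - φ x)) + (φ x + t * (φ y - φ x))) / 2 := by linarith
      _ = φ x + (s + t) / 2 * (φ y - φ x) := by ring
  -- dyadic rationals are in S
  have hdyadic : ∀ n : ℕ, ∀ k : ℕ, k ≤ 2 ^ n → ((k : ℝ) / 2 ^ n) ∈ S := by
    intro n
    induction n with
    | zero =>
      intro k hk
      interval_cases k
      · simpa using h0
      · simpa using h1
    | succ n ih =>
      intro k hk
      rcases Nat.even_or_odd k with ⟨j, hj⟩ | ⟨j, hj⟩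
      · have hj2 : j ≤ 2 ^ n := by omega
        have := ih j hj2
        have e : ((k : ℝ) / 2 ^ (n+1)) = (j : ℝ) / 2 ^ n := by
          subst hj; push_cast; ring
        rwa [e]
      · have hj2 : j ≤ 2 ^ n - 1 := by omega
        have hjn : j ≤ 2 ^ n := by omega
        have hjn' : j + 1 ≤ 2 ^ n := by omega
        have t1 := ih j hjn
        have t2 := ih (j+1) hjn'
        have := hmidS _ _ t1 t2
        have e : ((j:ℝ) / 2 ^ n + ((j:ℕ) + 1 : ℝ) / 2 ^ n) / 2 = (k : ℝ) / 2 ^ (n+1) := by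
          subst hj; push_cast; ring
        rw [← e]
        push_cast at this ⊢
        convert this using 2
  -- density: every t ∈ [0,1] is a limit of dyadics
  intro t ht
  have hmem : t ∈ closure S := by
    have htd : Filter.Tendsto (fun n : ℕ => ((⌊t * 2 ^ n⌋₊ : ℝ) / 2 ^ n)) Filter.atTop
        (nhds t) := by
      rw [tendsto_iff_dist_tendsto_zero]
      have hg : Filter.Tendsto (fun n : ℕ => (1:ℝ) / 2 ^ n) Filter.atTop (nhds 0) := by
        have := tendsto_pow_atTop_nhds_zero_of_lt_one (by norm_num : (0:ℝ) ≤ 1/2)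
          (by norm_num : (1:ℝ)/2 < 1)
        simpa [div_pow] using this
      apply squeeze_zero (fun n => dist_nonneg) _ hg
      intro n
      have h2n : (0:ℝ) < 2 ^ n := by positivity
      have hfl : (⌊t * 2 ^ n⌋₊ : ℝ) ≤ t * 2 ^ n := Nat.floor_le (mul_nonneg ht.1 h2n.le)
      have hfl2 : t * 2 ^ n - 1 < (⌊t * 2 ^ n⌋₊ : ℝ) := by
        have := Nat.lt_floor_add_one (t * 2 ^ n)
        linarith
      rw [Real.dist_eq]
      have e : (⌊t * 2 ^ n⌋₊ : ℝ) / 2 ^ n - t = ((⌊t * 2 ^ n⌋₊ : ℝ) - t * 2 ^ n) / 2 ^ n := by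
        field_simp
      rw [e, abs_div, abs_of_pos h2n, div_le_div_iff_of_pos_right h2n]
      rw [abs_le]
      constructor <;> linarith
    apply mem_closure_of_tendsto htd
    filter_upwards with n
    apply hdyadic n
    have : t * 2 ^ n ≤ ((2 ^ n : ℕ) : ℝ) := by
      push_cast
      nlinarith [ht.2, (by positivity : (0:ℝ) < 2 ^ n)]
    calc ⌊t * 2 ^ n⌋₊ ≤ ⌊((2 ^ n : ℕ) : ℝ)⌋₊ := Nat.floor_le_floor this
      _ = 2 ^ n := Nat.floor_natCast _
  rw [hclosed.closure_eq] at hmem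
  exact hmem.2

/-- Commutative case of the convexity statement in the proof of the Ball–Carlen–Lieb
inequality: for `1 < p ≤ 2` and `f, g ∈ L^p(μ)`, the function
`t ↦ ‖f + t·g‖_p² − (p−1)·t²·‖g‖_p²` is convex on `ℝ`. -/
theorem bcl_auxiliary_convexity {Ω : Type*} [MeasurableSpace Ω] (μ : Measure Ω)
    (p : ℝ) (hp1 : 1 < p) (hp2 : p ≤ 2) (f g : Ω → ℂ)
    (hf : MemLp f (ENNReal.ofReal p) μ) (hg : MemLp g (ENNReal.ofReal p) μ) :
    ConvexOn ℝ Set.univ (fun t : ℝ =>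
      (eLpNorm (fun ω => f ω + (t : ℂ) * g ω) (ENNReal.ofReal p) μ).toReal ^ 2
        - (p - 1) * t ^ 2 * (eLpNorm g (ENNReal.ofReal p) μ).toReal ^ 2) := by
  have hp0 : 0 < p := by linarith
  have hP1 : 1 ≤ ENNReal.ofReal p := by
    rw [← ENNReal.ofReal_one]
    exact ENNReal.ofReal_le_ofReal (by linarith)
  have hmem : ∀ t : ℝ, MemLp (fun ω => f ω + (t:ℂ) * g ω) (ENNReal.ofReal p) μ :=
    fun t => hf.add (hg.const_mul _)
  have hNfin : ∀ t : ℝ,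
      eLpNorm (fun ω => f ω + (t:ℂ) * g ω) (ENNReal.ofReal p) μ ≠ ⊤ :=
    fun t => (hmem t).2.ne
  have hgfin : eLpNorm g (ENNReal.ofReal p) μ ≠ ⊤ := hg.2.ne
  have hscale : ∀ c : ℝ, eLpNorm (fun ω => (c:ℂ) * g ω) (ENNReal.ofReal p) μ
      = ENNReal.ofReal |c| * eLpNorm g (ENNReal.ofReal p) μ := by
    intro c
    have e : (fun ω => (c:ℂ) * g ω) = (c:ℂ) • g := by
      funext ω; simp [Pi.smul_apply, smul_eq_mul]
    rw [e, eLpNorm_const_smul]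
    congr 1
    rw [← ofReal_norm_eq_enorm, Complex.norm_real, Real.norm_eq_abs]
  have htri : ∀ t s : ℝ,
      (eLpNorm (fun ω => f ω + (t:ℂ) * g ω) (ENNReal.ofReal p) μ).toReal
      ≤ (eLpNorm (fun ω => f ω + (s:ℂ) * g ω) (ENNReal.ofReal p) μ).toReal
        + |t - s| * (eLpNorm g (ENNReal.ofReal p) μ).toReal := by
    intro t s
    have hdecomp : (fun ω => f ω + (t:ℂ) * g ω)
        = fun ω => (f ω + (s:ℂ) * g ω) + ((t - s : ℝ):ℂ) * g ω := by
      funext ω; push_cast; ring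
    have hle : eLpNorm (fun ω => f ω + (t:ℂ) * g ω) (ENNReal.ofReal p) μ
        ≤ eLpNorm (fun ω => f ω + (s:ℂ) * g ω) (ENNReal.ofReal p) μ
          + ENNReal.ofReal |t - s| * eLpNorm g (ENNReal.ofReal p) μ := by
      rw [hdecomp, ← hscale]
      exact eLpNorm_add_le (hmem s).1 ((hg.const_mul _).1) hP1
    have hfin : eLpNorm (fun ω => f ω + (s:ℂ) * g ω) (ENNReal.ofReal p) μ
        + ENNReal.ofReal |t - s| * eLpNorm g (ENNReal.ofReal p) μ ≠ ⊤ :=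
      ENNReal.add_ne_top.2 ⟨hNfin s, ENNReal.mul_ne_top ENNReal.ofReal_ne_top hgfin⟩
    have := ENNReal.toReal_mono hfin hle
    rwa [ENNReal.toReal_add (hNfin s) (ENNReal.mul_ne_top ENNReal.ofReal_ne_top hgfin),
      ENNReal.toReal_mul, ENNReal.toReal_ofReal (abs_nonneg _)] at this
  have hNcont : Continuous (fun t : ℝ =>
      (eLpNorm (fun ω => f ω + (t:ℂ) * g ω) (ENNReal.ofReal p) μ).toReal) := by
    have hLip : LipschitzWith ((eLpNorm g (ENNReal.ofReal p) μ).toReal.toNNReal)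
        (fun t : ℝ =>
          (eLpNorm (fun ω => f ω + (t:ℂ) * g ω) (ENNReal.ofReal p) μ).toReal) := by
      apply LipschitzWith.of_dist_le_mul
      intro t s
      rw [Real.dist_eq, Real.dist_eq,
        Real.coe_toNNReal _ ENNReal.toReal_nonneg]
      have h1 := htri t s
      have h2 := htri s t
      rw [abs_sub_comm s t] at h2
      rw [abs_le]
      constructor <;> nlinarith [abs_nonneg (t - s), ENNReal.toReal_nonneg
        (a := eLpNorm g (ENNReal.ofReal p) μ)]
    exact hLip.continuous
  apply bcl_convexOn_of_midpoint
  · apply Continuous.sub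
    · exact hNcont.pow 2
    · continuity
  · intro x y
    have hu : MemLp (fun ω => f ω + (((x + y)/2 : ℝ):ℂ) * g ω) (ENNReal.ofReal p) μ :=
      hmem _
    have hv : MemLp (fun ω => (((x - y)/2 : ℝ):ℂ) * g ω) (ENNReal.ofReal p) μ :=
      hg.const_mul _
    have hk := bcl_key hp1 hp2 hu hv
    have e1 : (fun ω => (f ω + (((x + y)/2 : ℝ):ℂ) * g ω) + (((x - y)/2 : ℝ):ℂ) * g ω)
        = fun ω => f ω + (x:ℂ) * g ω := by
      funext ω; push_cast; ring
    have e2 : (fun ω => (f ω + (((x + y)/2 : ℝ):ℂ) * g ω) - (((x - y)/2 : ℝ):ℂ) * g ω)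
        = fun ω => f ω + (y:ℂ) * g ω := by
      funext ω; push_cast; ring
    have e3 : (eLpNorm (fun ω => (((x - y)/2 : ℝ):ℂ) * g ω) (ENNReal.ofReal p) μ).toReal
        = |(x - y)/2| * (eLpNorm g (ENNReal.ofReal p) μ).toReal := by
      rw [hscale, ENNReal.toReal_mul, ENNReal.toReal_ofReal (abs_nonneg _)]
    rw [e1, e2, e3] at hk
    have habs : (|(x - y)/2| * (eLpNorm g (ENNReal.ofReal p) μ).toReal) ^ 2
        = ((x - y)/2) ^ 2 * (eLpNorm g (ENNReal.ofReal p) μ).toReal ^ 2 := by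
      rw [mul_pow, sq_abs]
    rw [habs] at hk
    beta_reduce
    linear_combination hk
end

section
/- Let n ≥ 1, let a, b be Hermitian n×n complex matrices, and let s > 0. Set R := (s·I + a²)⁻¹ and let |a| denote the positive semidefinite square root of a². Then Re tr((a R b)²) ≤ Re tr((|a| R b)²), i.e. Re tr[a(s+a²)⁻¹ b a(s+a²)⁻¹ b] ≤ Re tr[|a|(s+a²)⁻¹ b |a|(s+a²)⁻¹ b]. -/
open Matrix
open scoped ComplexOrder


-- auxiliary: real part of trace of (diag g) c (diag g) c for hermitian c
lemma trace_re_diag_form {n : ℕ} (g : Fin n → ℝ) (c : Matrix (Fin n) (Fin n) ℂ)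
    (hc : c.IsHermitian) :
    ((diagonal (fun i => (g i : ℂ)) * c * diagonal (fun i => (g i : ℂ)) * c).trace).re
      = ∑ i, ∑ j, g i * g j * Complex.normSq (c i j) := by
  rw [Matrix.trace, Complex.re_sum]
  apply Finset.sum_congr rfl
  intro i _
  rw [Matrix.diag_apply, Matrix.mul_apply, Complex.re_sum]
  apply Finset.sum_congr rfl
  intro j _
  have hcji : c j i = (starRingEnd ℂ) (c i j) := (hc.apply j i).symm
  have : ∀ k, (diagonal (fun i => (g i : ℂ)) * c * diagonal (fun i => (g i : ℂ))) i k
      = (g i : ℂ) * c i k * (g k : ℂ) := by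
    intro k
    rw [Matrix.mul_diagonal, Matrix.mul_apply]
    congr 1
    rw [Finset.sum_eq_single i]
    · rw [diagonal_apply_eq]
    · intro b _ hb; rw [diagonal_apply_ne' _ hb, zero_mul]
    · intro h; exact absurd (Finset.mem_univ i) h
  rw [this j, hcji]
  have h2 : (g i : ℂ) * c i j * (g j : ℂ) * (starRingEnd ℂ) (c i j)
      = (g i : ℂ) * (g j : ℂ) * (c i j * (starRingEnd ℂ) (c i j)) := by ring
  rw [h2, Complex.mul_conj, ← Complex.ofReal_mul, ← Complex.ofReal_mul, Complex.ofReal_re]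

set_option maxHeartbeats 1600000 in
/-- Key monotonicity claim in the proof of Lemma 2.1: for Hermitian `a, b`, `s > 0`,
`R = (s·I + a²)⁻¹` and `|a|` the positive semidefinite square root of `a²` (given here as
any positive semidefinite matrix `absa` with `absa * absa = a * a`),
`Re tr((a R b)²) ≤ Re tr((|a| R b)²)`. -/
theorem trace_mono_abs {n : ℕ} (hn : 1 ≤ n) (a b : Matrix (Fin n) (Fin n) ℂ)
    (ha : a.IsHermitian) (hb : b.IsHermitian) (s : ℝ) (hs : 0 < s)
    (absa : Matrix (Fin n) (Fin n) ℂ) (habs_pos : absa.PosSemidef)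
    (habs_sq : absa * absa = a * a) :
    (((a * ((s : ℂ) • (1 : Matrix (Fin n) (Fin n) ℂ) + a * a)⁻¹ * b)
        * (a * ((s : ℂ) • (1 : Matrix (Fin n) (Fin n) ℂ) + a * a)⁻¹ * b)).trace).re
    ≤ (((absa * ((s : ℂ) • (1 : Matrix (Fin n) (Fin n) ℂ) + a * a)⁻¹ * b)
        * (absa * ((s : ℂ) • (1 : Matrix (Fin n) (Fin n) ℂ) + a * a)⁻¹ * b)).trace).re := by
  set U := (ha.eigenvectorUnitary : Matrix (Fin n) (Fin n) ℂ) with hUdef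
  have hUV : U * star U = 1 := (Matrix.mem_unitaryGroup_iff).mp (ha.eigenvectorUnitary).2
  have hVU : star U * U = 1 := (Matrix.mem_unitaryGroup_iff').mp (ha.eigenvectorUnitary).2
  set ev := ha.eigenvalues with hev
  set D : Matrix (Fin n) (Fin n) ℂ := diagonal (fun i => (ev i : ℂ)) with hD
  have hspec : a = U * D * star U := ha.spectral_theorem
  have hpos : ∀ i, (0:ℝ) < s + ev i ^ 2 := fun i => by positivity
  -- the resolvent
  set r : Fin n → ℝ := fun i => (s + ev i ^ 2)⁻¹ with hr
  set E : Matrix (Fin n) (Fin n) ℂ := diagonal (fun i => ((s + ev i ^ 2 : ℝ) : ℂ)) with hE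
  set E' : Matrix (Fin n) (Fin n) ℂ := diagonal (fun i => (r i : ℂ)) with hE'
  have hDD : D * D = diagonal (fun i => ((ev i ^ 2 : ℝ) : ℂ)) := by
    rw [hD, diagonal_mul_diagonal]
    congr 1; funext i; push_cast; ring
  have haa : a * a = U * (D * D) * star U := by
    rw [hspec]
    have h1 : U * D * star U * (U * D * star U) = U * (D * (star U * U) * D) * star U := by
      simp only [Matrix.mul_assoc]
    rw [h1, hVU, Matrix.mul_one]
  have hsum : (s : ℂ) • (1 : Matrix (Fin n) (Fin n) ℂ) + a * a = U * E * star U := by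
    have hs1 : (s:ℂ) • (1 : Matrix (Fin n) (Fin n) ℂ)
        = U * ((s:ℂ) • (1 : Matrix (Fin n) (Fin n) ℂ)) * star U := by
      rw [Matrix.mul_smul, Matrix.mul_one, Matrix.smul_mul, hUV]
    have h2 : (s:ℂ) • (1 : Matrix (Fin n) (Fin n) ℂ) + D * D = E := by
      rw [hDD, hE]
      ext i j
      rcases eq_or_ne i j with h | h
      · subst h
        simp only [Matrix.add_apply, Matrix.smul_apply, Matrix.one_apply_eq,
          diagonal_apply_eq, smul_eq_mul, mul_one]
        push_cast; ring
      · simp [Matrix.one_apply_ne h, diagonal_apply_ne _ h]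
    rw [haa, hs1, ← Matrix.add_mul, ← Matrix.mul_add, h2]
  have hEE' : E * E' = 1 := by
    rw [hE, hE', diagonal_mul_diagonal]
    have : (fun i => ((s + ev i ^ 2 : ℝ) : ℂ) * ((r i : ℝ) : ℂ)) = fun _ => (1:ℂ) := by
      funext i
      rw [hr, ← Complex.ofReal_mul, mul_inv_cancel₀ (ne_of_gt (hpos i)), Complex.ofReal_one]
    rw [this, diagonal_one]
  have hinv : ((s : ℂ) • (1 : Matrix (Fin n) (Fin n) ℂ) + a * a)⁻¹ = U * E' * star U := by
    apply Matrix.inv_eq_right_inv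
    rw [hsum]
    have h1 : U * E * star U * (U * E' * star U) = U * (E * (star U * U) * E') * star U := by
      simp only [Matrix.mul_assoc]
    rw [h1, hVU, Matrix.mul_one, hEE', Matrix.mul_one, hUV]
  -- absa = U * |D| * star U
  have habs : absa = U * diagonal (fun i => ((|ev i| : ℝ) : ℂ)) * star U := by
    set M : Matrix (Fin n) (Fin n) ℂ := U * diagonal (fun i => ((|ev i| : ℝ) : ℂ)) * star U with hM
    have hMpsd : M.PosSemidef := by
      rw [hM, Matrix.star_eq_conjTranspose]
      exact (Matrix.posSemidef_diagonal_iff.mpr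
        (fun i => Complex.zero_le_real.mpr (abs_nonneg _))).mul_mul_conjTranspose_same U
    have hMsq : M * M = a * a := by
      have h1 : M * M = U * (diagonal (fun i => ((|ev i| : ℝ) : ℂ)) * (star U * U)
          * diagonal (fun i => ((|ev i| : ℝ) : ℂ))) * star U := by
        rw [hM]; simp only [Matrix.mul_assoc]
      rw [h1, hVU, Matrix.mul_one, diagonal_mul_diagonal, haa, hDD]
      have h2 : (fun i => ((|ev i| : ℝ) : ℂ) * ((|ev i| : ℝ) : ℂ))
          = fun i => ((ev i ^ 2 : ℝ) : ℂ) := by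
        funext i
        rw [← Complex.ofReal_mul, ← abs_mul, abs_mul_self, ← sq]
      rw [h2]
    open scoped MatrixOrder in
    exact (CFC.mul_self_eq_mul_self_iff absa M habs_pos.nonneg hMpsd.nonneg).mp (by rw [habs_sq, hMsq])
  -- reduce to diagonal form
  set c : Matrix (Fin n) (Fin n) ℂ := star U * b * U with hc
  have hcherm : c.IsHermitian := by
    rw [hc, Matrix.IsHermitian, Matrix.star_eq_conjTranspose]
    simp only [Matrix.conjTranspose_mul, Matrix.conjTranspose_conjTranspose, hb.eq,
      Matrix.mul_assoc]
  have key : ∀ (g : Fin n → ℝ),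
      (U * diagonal (fun i => (g i : ℂ)) * star U * (U * E' * star U) * b
        * (U * diagonal (fun i => (g i : ℂ)) * star U * (U * E' * star U) * b)).trace
      = (diagonal (fun i => ((g i * r i : ℝ) : ℂ)) * c
          * diagonal (fun i => ((g i * r i : ℝ) : ℂ)) * c).trace := by
    intro g
    set F : Matrix (Fin n) (Fin n) ℂ := diagonal (fun i => ((g i * r i : ℝ) : ℂ)) with hF
    have hgE : U * diagonal (fun i => (g i : ℂ)) * star U * (U * E' * star U)
        = U * F * star U := by
      have h1 : U * diagonal (fun i => (g i : ℂ)) * star U * (U * E' * star U)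
          = U * (diagonal (fun i => (g i : ℂ)) * (star U * U) * E') * star U := by
        simp only [Matrix.mul_assoc]
      rw [h1, hVU, Matrix.mul_one, hE', diagonal_mul_diagonal, hF]
      congr 2
      funext i
      push_cast
      ring
    rw [hgE]
    have e1 : U * F * star U * b * (U * F * star U * b)
        = U * (F * star U * b * (U * F * star U * b)) := by
      simp only [Matrix.mul_assoc]
    rw [e1, Matrix.trace_mul_comm]
    congr 1
    rw [hc]
    simp only [Matrix.mul_assoc]
  rw [hinv, hspec, habs]
  rw [key (fun i => ev i), key (fun i => |ev i|)]
  rw [trace_re_diag_form _ _ hcherm, trace_re_diag_form _ _ hcherm]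
  apply Finset.sum_le_sum
  intro i _
  apply Finset.sum_le_sum
  intro j _
  have h1 : ev i * ev j ≤ |ev i| * |ev j| := by
    rw [← abs_mul]; exact le_abs_self _
  have hr0 : ∀ k, 0 ≤ r k := fun k => le_of_lt (by rw [hr]; exact inv_pos.mpr (hpos k))
  calc ev i * r i * (ev j * r j) * Complex.normSq (c i j)
      = (ev i * ev j) * (r i * r j * Complex.normSq (c i j)) := by ring
    _ ≤ (|ev i| * |ev j|) * (r i * r j * Complex.normSq (c i j)) := by
        apply mul_le_mul_of_nonneg_right h1
        have := Complex.normSq_nonneg (c i j)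
        positivity
    _ = |ev i| * r i * (|ev j| * r j) * Complex.normSq (c i j) := by ring
end

section
/- Let α be a type and let x be an element of the group algebra ℂ[F], where F is the free group on α, i.e. x is a finitely supported function x : F → ℂ with convolution product. Fix k ≥ 0 and suppose that every g in the support of x has reduced word length exactly k. Then ∑_{g ∈ F} |(x* · x)(g)|² ≤ (k+1) · (∑_{g ∈ F} |x(g)|²)², where x* is the adjoint defined by x*(g) = conj(x(g⁻¹)) and · is the convolution product of the group algebra. -/
open List

namespace FGK
set_option linter.unusedSectionVars false



variable {α : Type*} [DecidableEq α]

/-- The "no adjacent cancelling pair" relation. -/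
def R : (α × Bool) → (α × Bool) → Prop := fun a b => a ≠ (b.1, !b.2)

lemma exists_bad : ∀ {L : List (α × Bool)}, ¬ List.Chain' (R (α := α)) L →
    ∃ L₂ u v L₃, L = L₂ ++ u :: v :: L₃ ∧ ¬ R u v := by
  intro L
  induction L with
  | nil => intro h; exact absurd List.isChain_nil h
  | cons a l ih =>
    intro h
    match l, h with
    | [], h => exact absurd (List.isChain_singleton a) h
    | b :: l, h =>
      simp only [List.Chain', List.isChain_cons_cons] at h
      by_cases hab : R a b
      · have : ¬ List.Chain' (R (α := α)) (b :: l) := fun hc => h ⟨hab, hc⟩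
        obtain ⟨L₂, u, v, L₃, heq, huv⟩ := ih this
        exact ⟨a :: L₂, u, v, L₃, by rw [List.cons_append, ← heq], huv⟩
      · exact ⟨[], a, b, l, rfl, hab⟩

lemma chain'_of_reduce_eq {L : List (α × Bool)} (h : FreeGroup.reduce L = L) :
    List.Chain' (R (α := α)) L := by
  by_contra hc
  obtain ⟨L₂, u, v, L₃, hL, huv⟩ := exists_bad hc
  have hu : u = (v.1, !v.2) := not_not.1 huv
  have : FreeGroup.reduce L = L₂ ++ (v.1, !v.2) :: (v.1, !(!v.2)) :: L₃ := by
    rw [h, hL, hu]; simp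
  exact FreeGroup.reduce.not this

lemma reduce_eq_of_chain' {L : List (α × Bool)} (h : List.Chain' (R (α := α)) L) :
    FreeGroup.reduce L = L := by
  by_contra hne
  have hred : FreeGroup.Red L (FreeGroup.reduce L) := FreeGroup.reduce.red
  rcases Relation.ReflTransGen.cases_head hred with h' | ⟨L', hstep, -⟩
  · exact hne h'.symm
  · cases hstep with
    | not =>
      rename_i L₁ L₂ x b
      have h2 := (List.isChain_append.1 h).2.1
      have h3 := (List.isChain_cons_cons.1 h2).1
      exact h3 (by simp [R])


set_option linter.unusedSectionVars false

lemma invRev_cons (v : α × Bool) (B : List (α × Bool)) :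
    FreeGroup.invRev (v :: B) = FreeGroup.invRev B ++ [(v.1, !v.2)] := by
  simp [FreeGroup.invRev]

lemma cancel_core : ∀ (n : ℕ) (U V : List (α × Bool)), U.length ≤ n →
    List.Chain' (R (α := α)) U → List.Chain' (R (α := α)) V →
    ∃ A B C, U = A ++ FreeGroup.invRev B ∧ V = B ++ C ∧
      FreeGroup.reduce (U ++ V) = A ++ C ∧ List.Chain' (R (α := α)) (A ++ C) := by
  intro n
  induction n with
  | zero =>
    intro U V hlen hU hV
    have : U = [] := List.eq_nil_of_length_eq_zero (Nat.le_zero.1 hlen)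
    subst this
    exact ⟨[], [], V, by simp [FreeGroup.invRev], rfl,
      by simpa using reduce_eq_of_chain' hV, by simpa using hV⟩
  | succ n ih =>
    intro U V hlen hU hV
    obtain rfl | ⟨U', u, rfl⟩ := U.eq_nil_or_concat
    · exact ⟨[], [], V, by simp [FreeGroup.invRev], rfl,
        by simpa using reduce_eq_of_chain' hV, by simpa using hV⟩
    simp only [List.concat_eq_append] at hU hlen ⊢
    rcases V with _ | ⟨v, V'⟩
    · exact ⟨U' ++ [u], [], [], by simp [FreeGroup.invRev], rfl,
        by simpa using reduce_eq_of_chain' hU, by simpa using hU⟩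
    by_cases h : u = (v.1, !v.2)
    · have hU' : List.Chain' (R (α := α)) U' := (List.isChain_append.1 hU).1
      have hV' : List.Chain' (R (α := α)) V' := hV.tail
      have hlen' : U'.length ≤ n := by
        have := hlen; simp at this; omega
      obtain ⟨A, B, C, h1, h2, h3, h4⟩ := ih U' V' hlen' hU' hV'
      refine ⟨A, v :: B, C, ?_, ?_, ?_, h4⟩
      · rw [invRev_cons, h, h1, List.append_assoc]
      · rw [List.cons_append, h2]
      · have hstep : FreeGroup.Red.Step (U' ++ (v.1, !v.2) :: (v.1, !(!v.2)) :: V')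
            (U' ++ V') := FreeGroup.Red.Step.not
        have heq : (U' ++ [u]) ++ v :: V' = U' ++ (v.1, !v.2) :: (v.1, !(!v.2)) :: V' := by
          rw [h]; simp
        rw [heq, FreeGroup.reduce.Step.eq hstep, h3]
    · refine ⟨U' ++ [u], [], v :: V', by simp [FreeGroup.invRev], rfl, ?_, ?_⟩
      · apply reduce_eq_of_chain'
        apply List.isChain_append.2
        refine ⟨hU, hV, ?_⟩
        intro a ha b hb
        simp at ha hb
        subst ha; subst hb; exact h
      · apply List.isChain_append.2
        refine ⟨hU, hV, ?_⟩
        intro a ha b hb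
        simp at ha hb
        subst ha; subst hb; exact h



lemma invRev_append (L₁ L₂ : List (α × Bool)) :
    FreeGroup.invRev (L₁ ++ L₂) = FreeGroup.invRev L₂ ++ FreeGroup.invRev L₁ := by
  simp [FreeGroup.invRev]

lemma toWord_mul (p g : FreeGroup α) :
    (p * g).toWord = FreeGroup.reduce (p.toWord ++ g.toWord) := by
  have : p * g = FreeGroup.mk (p.toWord ++ g.toWord) := by
    rw [← FreeGroup.mul_mk, FreeGroup.mk_toWord, FreeGroup.mk_toWord]
  rw [this, FreeGroup.toWord_mk]

/-- Cancellation triple for a product in the free group. -/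
lemma triple (p g : FreeGroup α) :
    ∃ A B C : List (α × Bool), p.toWord = A ++ FreeGroup.invRev B ∧ g.toWord = B ++ C ∧
      (p * g).toWord = A ++ C := by
  obtain ⟨A, B, C, h1, h2, h3, -⟩ := cancel_core p.toWord.length p.toWord g.toWord le_rfl
    (chain'_of_reduce_eq (FreeGroup.reduce_toWord p))
    (chain'_of_reduce_eq (FreeGroup.reduce_toWord g))
  exact ⟨A, B, C, h1, h2, by rw [toWord_mul, h3]⟩

/-- Key determination: if multiplying by `g` preserves the norm of `p` and multiplying by `g⁻¹`
preserves the norm of `q`, then `g` is determined by `p`, `q` and `g.norm`. -/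
lemma key_det (p q g : FreeGroup α) (hp : (p * g).norm = p.norm)
    (hq : (q * g⁻¹).norm = q.norm) :
    2 * (g.norm / 2) = g.norm ∧
    g.toWord = FreeGroup.invRev (p.toWord.drop (p.norm - g.norm / 2)) ++
      q.toWord.drop (q.norm - g.norm / 2) := by
  obtain ⟨A, B, C, h1, h2, h3⟩ := triple p g
  obtain ⟨A₂, B₂, C₂, k1, k2, k3⟩ := triple q g⁻¹
  have hnp : p.norm = A.length + B.length := by
    rw [FreeGroup.norm, h1]; simp
  have hnpg : (p * g).norm = A.length + C.length := by
    rw [FreeGroup.norm, h3]; simp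
  have hBC : B.length = C.length := by omega
  have hng : g.norm = B.length + C.length := by
    rw [FreeGroup.norm, h2]; simp
  have hj : g.norm / 2 = B.length := by omega
  have heven : 2 * (g.norm / 2) = g.norm := by omega
  refine ⟨heven, ?_⟩
  -- q side
  have hnq : q.norm = A₂.length + B₂.length := by
    rw [FreeGroup.norm, k1]; simp
  have hnqg : (q * g⁻¹).norm = A₂.length + C₂.length := by
    rw [FreeGroup.norm, k3]; simp
  have hB2C2 : B₂.length = C₂.length := by omega
  have hng' : g⁻¹.norm = B₂.length + C₂.length := by
    rw [FreeGroup.norm, k2]; simp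
  have hnginv : g⁻¹.norm = g.norm := FreeGroup.norm_inv_eq
  have hB2 : B₂.length = B.length := by omega
  -- identify B₂ and C
  have hwinv : B₂ ++ C₂ = FreeGroup.invRev C ++ FreeGroup.invRev B := by
    rw [← k2, FreeGroup.toWord_inv, h2, invRev_append]
  have hlen2 : B₂.length = (FreeGroup.invRev C).length := by
    rw [FreeGroup.invRev_length]; omega
  obtain ⟨hB₂, -⟩ := List.append_inj hwinv hlen2
  -- compute the drops
  have hdp : p.toWord.drop (p.norm - g.norm / 2) = FreeGroup.invRev B := by
    rw [hj, h1]
    have : p.norm - B.length = A.length := by omega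
    rw [this]
    exact List.drop_left (l₁ := A) (l₂ := FreeGroup.invRev B)
  have hdq : q.toWord.drop (q.norm - g.norm / 2) = C := by
    rw [hj, k1]
    have : q.norm - B.length = A₂.length := by omega
    rw [this, List.drop_left (l₁ := A₂) (l₂ := FreeGroup.invRev B₂), hB₂, FreeGroup.invRev_invRev]
  rw [hdp, hdq, FreeGroup.invRev_invRev, h2]



/-- At most `k+1` group elements `g` can have a given cancellation pattern with `p` and `q`. -/
lemma card_filter_le (S T : Finset (FreeGroup α)) (k : ℕ)
    (hS : ∀ g ∈ S, FreeGroup.norm g = k) (p q : FreeGroup α) (hp : p ∈ S) (hq : q ∈ S) :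
    (T.filter (fun g => p * g ∈ S ∧ q * g⁻¹ ∈ S)).card ≤ k + 1 := by
  have hcard := Finset.card_range (k + 1)
  rw [← hcard]
  apply Finset.card_le_card_of_injOn (fun g => g.norm / 2)
  · intro g hg
    simp only [Finset.mem_coe, Finset.mem_filter] at hg
    obtain ⟨-, hpg, hqg⟩ := hg
    obtain ⟨heven, hword⟩ := key_det p q g (by rw [hS _ hpg, hS _ hp]) (by rw [hS _ hqg, hS _ hq])
    have hh := congrArg List.length hword
    simp only [List.length_append, FreeGroup.invRev_length, List.length_drop] at hh
    have e1 : g.norm = g.toWord.length := rfl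
    have e2 : p.norm = p.toWord.length := rfl
    have e3 : q.norm = q.toWord.length := rfl
    have e4 : p.norm = k := hS _ hp
    have e5 : q.norm = k := hS _ hq
    simp only [Finset.mem_coe, Finset.mem_range]
    omega
  · intro g hg g' hg' hnorm
    simp only [Finset.mem_coe, Finset.mem_filter] at hg hg'
    obtain ⟨-, hpg, hqg⟩ := hg
    obtain ⟨-, hpg', hqg'⟩ := hg'
    obtain ⟨heven, hword⟩ := key_det p q g (by rw [hS _ hpg, hS _ hp]) (by rw [hS _ hqg, hS _ hq])
    obtain ⟨heven', hword'⟩ :=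
      key_det p q g' (by rw [hS _ hpg', hS _ hp]) (by rw [hS _ hqg', hS _ hq])
    have hnorm' : g.norm / 2 = g'.norm / 2 := hnorm
    have hn : g.norm = g'.norm := by omega
    apply FreeGroup.toWord_injective
    rw [hword, hword', hn]

/-- The convolution formula for `xs * x` where `xs.coeff g = conj (x.coeff g⁻¹)`. -/
lemma conv_formula (x xs : MonoidAlgebra ℂ (FreeGroup α))
    (hxs : ∀ g : FreeGroup α, xs.coeff g = (starRingEnd ℂ) (x.coeff g⁻¹)) (g : FreeGroup α) :
    (xs * x).coeff g = ∑ p ∈ x.coeff.support, (starRingEnd ℂ) (x.coeff p) * x.coeff (p * g) := by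
  rw [MonoidAlgebra.mul_apply]
  rw [Finsupp.sum]
  have step1 : ∀ a₁ ∈ xs.coeff.support,
      (x.coeff.sum fun a₂ b₂ => if a₁ * a₂ = g then xs.coeff a₁ * b₂ else 0) = xs.coeff a₁ * x.coeff (a₁⁻¹ * g) := by
    intro a₁ _
    rw [Finsupp.sum]
    have : ∀ a₂ ∈ x.coeff.support, (if a₁ * a₂ = g then xs.coeff a₁ * x.coeff a₂ else 0)
        = if a₂ = a₁⁻¹ * g then xs.coeff a₁ * x.coeff a₂ else 0 := by
      intro a₂ _
      congr 1
      simp only [eq_iff_iff]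
      exact ⟨fun h => by rw [← h]; group, fun h => by rw [h]; group⟩
    rw [Finset.sum_congr rfl this, Finset.sum_ite_eq' x.coeff.support (a₁⁻¹ * g)]
    by_cases hmem : a₁⁻¹ * g ∈ x.coeff.support
    · simp [hmem]
    · simp [hmem, Finsupp.notMem_support_iff.1 hmem]
  rw [Finset.sum_congr rfl step1]
  refine Finset.sum_nbij' (fun a => a⁻¹) (fun p => p⁻¹) ?_ ?_ ?_ ?_ ?_
  · intro a ha
    rw [Finsupp.mem_support_iff] at ha ⊢
    rw [hxs a] at ha
    exact fun h0 => ha (by rw [h0, map_zero])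
  · intro p hp
    rw [Finsupp.mem_support_iff] at hp ⊢
    rw [hxs p⁻¹, inv_inv]
    exact fun h0 => hp (by simpa using h0)
  · intro a _; simp
  · intro p _; simp
  · intro a _
    rw [hxs a]


set_option maxHeartbeats 1000000

theorem main' {α : Type*} [DecidableEq α] (k : ℕ)
    (x xs : MonoidAlgebra ℂ (FreeGroup α))
    (hxs : ∀ g : FreeGroup α, xs.coeff g = (starRingEnd ℂ) (x.coeff g⁻¹))
    (hsupp : ∀ g ∈ x.coeff.support, FreeGroup.norm g = k) :
    ∑' g : FreeGroup α, ‖(xs * x).coeff g‖ ^ 2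
    ≤ ((k : ℝ) + 1) * (∑' g : FreeGroup α, ‖x.coeff g‖ ^ 2) ^ 2 := by
  classical
  set S := x.coeff.support with hS
  set T := (xs * x).coeff.support with hT
  set f : FreeGroup α → ℝ := fun g => ‖x.coeff g‖ ^ 2 with hf
  -- rewrite the tsums as finite sums
  have htsum1 : ∑' g : FreeGroup α, ‖(xs * x).coeff g‖ ^ 2
      = ∑ g ∈ T, ‖(xs * x).coeff g‖ ^ 2 := by
    apply tsum_eq_sum
    intro g hg
    rw [Finsupp.notMem_support_iff.1 hg]
    simp
  have htsum2 : ∑' g : FreeGroup α, ‖x.coeff g‖ ^ 2 = ∑ g ∈ S, f g := by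
    apply tsum_eq_sum
    intro g hg
    rw [Finsupp.notMem_support_iff.1 hg]
    simp
  rw [htsum1, htsum2]
  -- per-g Cauchy-Schwarz
  have key : ∀ g : FreeGroup α, ‖(xs * x).coeff g‖ ^ 2 ≤
      (∑ p ∈ S.filter (fun p => p * g ∈ S), f p) *
        (∑ p ∈ S.filter (fun p => p * g ∈ S), f (p * g)) := by
    intro g
    rw [conv_formula x xs hxs g]
    have hsum_filter : ∑ p ∈ S, (starRingEnd ℂ) (x.coeff p) * x.coeff (p * g)
        = ∑ p ∈ S.filter (fun p => p * g ∈ S), (starRingEnd ℂ) (x.coeff p) * x.coeff (p * g) := by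
      symm
      apply Finset.sum_filter_of_ne
      intro p _ hne
      rw [Finsupp.mem_support_iff]
      intro h0
      apply hne
      rw [h0, mul_zero]
    rw [hsum_filter]
    calc ‖∑ p ∈ S.filter (fun p => p * g ∈ S), (starRingEnd ℂ) (x.coeff p) * x.coeff (p * g)‖ ^ 2
        ≤ (∑ p ∈ S.filter (fun p => p * g ∈ S), ‖x.coeff p‖ * ‖x.coeff (p * g)‖) ^ 2 := by
          apply pow_le_pow_left₀ (norm_nonneg _)
          refine le_trans (norm_sum_le _ _) (le_of_eq ?_)
          apply Finset.sum_congr rfl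
          intro p _
          rw [norm_mul, Complex.norm_conj]
      _ ≤ (∑ p ∈ S.filter (fun p => p * g ∈ S), ‖x.coeff p‖ ^ 2) *
            (∑ p ∈ S.filter (fun p => p * g ∈ S), ‖x.coeff (p * g)‖ ^ 2) :=
          Finset.sum_mul_sq_le_sq_mul_sq _ _ _
  -- reindex the second factor
  have reix : ∀ g : FreeGroup α, ∑ p ∈ S.filter (fun p => p * g ∈ S), f (p * g)
      = ∑ r ∈ S.filter (fun r => r * g⁻¹ ∈ S), f r := by
    intro g
    refine Finset.sum_nbij' (fun p => p * g) (fun r => r * g⁻¹) ?_ ?_ ?_ ?_ ?_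
    · intro p hp
      simp only [Finset.mem_filter] at hp ⊢
      refine ⟨hp.2, ?_⟩
      simpa using hp.1
    · intro r hr
      simp only [Finset.mem_filter] at hr ⊢
      refine ⟨hr.2, ?_⟩
      simpa using hr.1
    · intro p _; simp
    · intro r _; simp
    · intro p _; rfl
  -- expand the product of sums as a double sum with indicators
  have expand : ∀ g : FreeGroup α,
      (∑ p ∈ S.filter (fun p => p * g ∈ S), f p) *
        (∑ r ∈ S.filter (fun r => r * g⁻¹ ∈ S), f r)
      = ∑ p ∈ S, ∑ r ∈ S, (if p * g ∈ S ∧ r * g⁻¹ ∈ S then f p * f r else 0) := by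
    intro g
    rw [Finset.sum_mul_sum]
    rw [Finset.sum_filter]
    apply Finset.sum_congr rfl
    intro p _
    rw [Finset.sum_filter]
    by_cases h1 : p * g ∈ S
    · simp only [h1, if_true, true_and]
    · simp [h1]
  -- put it together
  have step1 : ∑ g ∈ T, ‖(xs * x).coeff g‖ ^ 2
      ≤ ∑ g ∈ T, ∑ p ∈ S, ∑ r ∈ S, (if p * g ∈ S ∧ r * g⁻¹ ∈ S then f p * f r else 0) := by
    apply Finset.sum_le_sum
    intro g _
    calc ‖(xs * x).coeff g‖ ^ 2
        ≤ (∑ p ∈ S.filter (fun p => p * g ∈ S), f p) *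
            (∑ p ∈ S.filter (fun p => p * g ∈ S), f (p * g)) := key g
      _ = _ := by rw [reix g, expand g]
  -- swap summation order and count
  have step2 : ∑ g ∈ T, ∑ p ∈ S, ∑ r ∈ S, (if p * g ∈ S ∧ r * g⁻¹ ∈ S then f p * f r else 0)
      = ∑ p ∈ S, ∑ r ∈ S, ((T.filter (fun g => p * g ∈ S ∧ r * g⁻¹ ∈ S)).card : ℝ) * (f p * f r) := by
    rw [Finset.sum_comm]
    apply Finset.sum_congr rfl
    intro p _
    rw [Finset.sum_comm]
    apply Finset.sum_congr rfl
    intro r _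
    rw [← Finset.sum_filter, Finset.sum_const, nsmul_eq_mul]
  have fnonneg : ∀ p, 0 ≤ f p := fun p => sq_nonneg _
  have step3 : ∑ p ∈ S, ∑ r ∈ S, ((T.filter (fun g => p * g ∈ S ∧ r * g⁻¹ ∈ S)).card : ℝ) * (f p * f r)
      ≤ ∑ p ∈ S, ∑ r ∈ S, ((k : ℝ) + 1) * (f p * f r) := by
    apply Finset.sum_le_sum
    intro p hp
    apply Finset.sum_le_sum
    intro r hr
    apply mul_le_mul_of_nonneg_right _ (mul_nonneg (fnonneg p) (fnonneg r))
    have := card_filter_le S T k hsupp p r hp hr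
    exact_mod_cast this
  have step4 : ∑ p ∈ S, ∑ r ∈ S, ((k : ℝ) + 1) * (f p * f r)
      = ((k : ℝ) + 1) * (∑ g ∈ S, f g) ^ 2 := by
    rw [sq, Finset.sum_mul_sum, Finset.mul_sum]
    apply Finset.sum_congr rfl
    intro p _
    rw [Finset.mul_sum]
  calc ∑ g ∈ T, ‖(xs * x).coeff g‖ ^ 2
      ≤ _ := step1
    _ = _ := step2
    _ ≤ _ := step3
    _ = ((k : ℝ) + 1) * (∑ g ∈ S, f g) ^ 2 := step4


end FGK

/-- Lemma 3.1 of the paper (`K_{k,4} ≤ (k+1)^{1/4}`): if `x` is an element of the group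
algebra `ℂ[F]` of a free group `F` supported on words of reduced length exactly `k`, and
`xs = x*` is its adjoint (`x*(g) = conj (x.coeff g⁻¹)`), then
`∑_g |(x* · x)(g)|² ≤ (k+1) · (∑_g |x.coeff g|²)²`. -/
theorem freeGroup_khintchine_four {α : Type*} [DecidableEq α] (k : ℕ)
    (x xs : MonoidAlgebra ℂ (FreeGroup α))
    (hxs : ∀ g : FreeGroup α, xs.coeff g = (starRingEnd ℂ) (x.coeff g⁻¹))
    (hsupp : ∀ g ∈ x.coeff.support, FreeGroup.norm g = k) :
    ∑' g : FreeGroup α, ‖(xs * x).coeff g‖ ^ 2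
    ≤ ((k : ℝ) + 1) * (∑' g : FreeGroup α, ‖x.coeff g‖ ^ 2) ^ 2 :=
  FGK.main' k x xs hxs hsupp
end

section
/- Let u > 0 and define f : (0,1) → ℝ by f(θ) = (1 + u − u^θ − u^{1−θ}) / (θ(1−θ)). Then f is convex on the open interval (0,1). -/
open Real Set

lemma cubic_le_exp (x : ℝ) : 1 + x + x ^ 2 / 2 + x ^ 3 / 6 ≤ Real.exp x := by
  -- g' y = exp y - (1 + y + y^2/2) ; g'' y = exp y - (1 + y) ≥ 0
  set g : ℝ → ℝ := fun y => Real.exp y - (1 + y + y ^ 2 / 2 + y ^ 3 / 6) with hg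
  set g1 : ℝ → ℝ := fun y => Real.exp y - (1 + y + y ^ 2 / 2) with hg1
  have hder1 : ∀ y : ℝ, HasDerivAt g (g1 y) y := by
    intro y
    have hp : HasDerivAt (fun t : ℝ => 1 + t + t ^ 2 / 2 + t ^ 3 / 6)
        (1 + y + y ^ 2 / 2) y := by
      have h2 := (hasDerivAt_pow 2 y).div_const 2
      have h3 := (hasDerivAt_pow 3 y).div_const 6
      have hid := hasDerivAt_id y
      have := ((hid.const_add 1).add h2).add h3
      exact this.congr_deriv (by push_cast; ring)
    exact (Real.hasDerivAt_exp y).sub hp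
  have hder2 : ∀ y : ℝ, HasDerivAt g1 (Real.exp y - (1 + y)) y := by
    intro y
    have hp : HasDerivAt (fun t : ℝ => 1 + t + t ^ 2 / 2) (1 + y) y := by
      have h2 := (hasDerivAt_pow 2 y).div_const 2
      have hid := hasDerivAt_id y
      have := (hid.const_add 1).add h2
      exact this.congr_deriv (by push_cast; ring)
    exact (Real.hasDerivAt_exp y).sub hp
  have hg1mono : Monotone g1 := by
    apply monotone_of_deriv_nonneg (fun y => (hder2 y).differentiableAt)
    intro y
    rw [(hder2 y).deriv]
    have := Real.add_one_le_exp y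
    linarith
  have hg10 : g1 0 = 0 := by simp [hg1]
  have hg0 : g 0 = 0 := by simp [hg]
  have key : 0 ≤ g x := by
    rcases le_total 0 x with hx | hx
    · have hmono : MonotoneOn g (Ici (0:ℝ)) := by
        apply monotoneOn_of_deriv_nonneg (convex_Ici 0)
          (fun y _ => (hder1 y).differentiableAt.continuousAt.continuousWithinAt)
          (fun y _ => (hder1 y).differentiableAt.differentiableWithinAt)
        intro y hy
        rw [(hder1 y).deriv]
        rw [interior_Ici] at hy
        have := hg1mono (le_of_lt hy)
        rw [hg10] at this
        linarith
      have := hmono (self_mem_Ici) hx hx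
      linarith [hg0]
    · have hmono : AntitoneOn g (Iic (0:ℝ)) := by
        apply antitoneOn_of_deriv_nonpos (convex_Iic 0)
          (fun y _ => (hder1 y).differentiableAt.continuousAt.continuousWithinAt)
          (fun y _ => (hder1 y).differentiableAt.differentiableWithinAt)
        intro y hy
        rw [(hder1 y).deriv]
        rw [interior_Iic] at hy
        have := hg1mono (le_of_lt hy)
        rw [hg10] at this
        linarith
      have := hmono (mem_Iic.2 hx) self_mem_Iic hx
      linarith [hg0]
  simp only [hg] at key
  linarith

lemma key_ineq (L s : ℝ) (hs : 0 < s) (hs1 : s < 1) :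
    0 ≤ -(L^2*s^2*(1-s)^2) + 2*L*s*(1-s)*((1-s)-s) - 2*(s^3+(1-s)^3)
      + 2*s^3*Real.exp ((1-s)*L) + 2*(1-s)^3*Real.exp (-(s*L)) := by
  have e1 := cubic_le_exp ((1-s)*L)
  have e2 := cubic_le_exp (-(s*L))
  have h1 : (0:ℝ) ≤ 2*s^3 := by positivity
  have hw : (0:ℝ) < 1 - s := by linarith
  have h2 : (0:ℝ) ≤ 2*(1-s)^3 := by
    have := pow_nonneg hw.le 3; linarith
  nlinarith [mul_le_mul_of_nonneg_left e1 h1, mul_le_mul_of_nonneg_left e2 h2]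

lemma convexOn_h (L : ℝ) : ConvexOn ℝ (Set.Ioo (0:ℝ) 1)
    (fun θ : ℝ => (Real.exp L - Real.exp (L*θ))/(1-θ) + (1 - Real.exp (L*θ))/θ) := by
  set h : ℝ → ℝ := fun θ => (Real.exp L - Real.exp (L*θ))/(1-θ) + (1 - Real.exp (L*θ))/θ
    with hh
  set g1 : ℝ → ℝ := fun θ =>
      ((-(L * Real.exp (L*θ))) * (1-θ) + (Real.exp L - Real.exp (L*θ))) / (1-θ)^2
      + ((-(L * Real.exp (L*θ))) * θ - (1 - Real.exp (L*θ))) / θ^2 with hg1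
  set g2 : ℝ → ℝ := fun θ =>
      (-(L^2 * Real.exp (L*θ)) * (1-θ)^2
        + 2*((-(L * Real.exp (L*θ))) * (1-θ) + (Real.exp L - Real.exp (L*θ)))) / (1-θ)^3
      + (-(L^2 * Real.exp (L*θ)) * θ^2
        - 2*((-(L * Real.exp (L*θ))) * θ - (1 - Real.exp (L*θ)))) / θ^3 with hg2
  have hV : ∀ θ : ℝ, HasDerivAt (fun t : ℝ => Real.exp (L*t)) (L * Real.exp (L*θ)) θ := by
    intro θ
    have h1 : HasDerivAt (fun t : ℝ => L * t) L θ := by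
      simpa using (hasDerivAt_id θ).const_mul L
    simpa [mul_comm, Function.comp_def] using (Real.hasDerivAt_exp (L*θ)).comp θ h1
  have hder1 : ∀ θ ∈ Ioo (0:ℝ) 1, HasDerivAt h (g1 θ) θ := by
    intro θ hθ
    have h0 : θ ≠ 0 := ne_of_gt hθ.1
    have h1 : (1:ℝ) - θ ≠ 0 := sub_ne_zero.mpr (ne_of_gt hθ.2)
    have hn1 : HasDerivAt (fun t : ℝ => Real.exp L - Real.exp (L*t))
        (-(L * Real.exp (L*θ))) θ := (hV θ).const_sub _
    have hd1 : HasDerivAt (fun t : ℝ => 1 - t) (-1 : ℝ) θ := by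
      simpa using (hasDerivAt_id θ).const_sub 1
    have hn2 : HasDerivAt (fun t : ℝ => 1 - Real.exp (L*t))
        (-(L * Real.exp (L*θ))) θ := (hV θ).const_sub _
    have hq1 := hn1.div hd1 h1
    have hq2 := hn2.div (hasDerivAt_id θ) h0
    have htot := hq1.add hq2
    refine htot.congr_deriv ?_
    simp only [hg1, id]
    field_simp
    ring
  have hder2 : ∀ θ ∈ Ioo (0:ℝ) 1, HasDerivAt g1 (g2 θ) θ := by
    intro θ hθ
    have h0 : θ ≠ 0 := ne_of_gt hθ.1
    have h1 : (1:ℝ) - θ ≠ 0 := sub_ne_zero.mpr (ne_of_gt hθ.2)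
    have hd1 : HasDerivAt (fun t : ℝ => 1 - t) (-1 : ℝ) θ := by
      simpa using (hasDerivAt_id θ).const_sub 1
    have ha : HasDerivAt (fun t : ℝ => -(L * Real.exp (L*t))) (-(L * (L * Real.exp (L*θ)))) θ :=
      ((hV θ).const_mul L).neg
    have hn1 : HasDerivAt (fun t : ℝ => Real.exp L - Real.exp (L*t))
        (-(L * Real.exp (L*θ))) θ := (hV θ).const_sub _
    have hn2 : HasDerivAt (fun t : ℝ => 1 - Real.exp (L*t))
        (-(L * Real.exp (L*θ))) θ := (hV θ).const_sub _
    have hN1 := (ha.mul hd1).add hn1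
    have hN2 := (ha.mul (hasDerivAt_id θ)).sub hn2
    have hq1 := hN1.div (hd1.pow 2) (pow_ne_zero 2 h1)
    have hq2 := hN2.div (hasDerivAt_pow 2 θ) (pow_ne_zero 2 h0)
    have htot := hq1.add hq2
    refine htot.congr_deriv ?_
    simp only [hg2, id, Pi.add_apply, Pi.sub_apply, Pi.mul_apply, Pi.pow_apply]
    field_simp
    ring
  have hnonneg : ∀ θ ∈ Ioo (0:ℝ) 1, 0 ≤ g2 θ := by
    intro θ hθ
    have h0 : (0:ℝ) < θ := hθ.1
    have h1 : (0:ℝ) < 1 - θ := by linarith [hθ.2]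
    have hkey := key_ineq L θ hθ.1 hθ.2
    have hE1 : Real.exp ((1-θ)*L) = Real.exp L / Real.exp (L*θ) := by
      rw [eq_div_iff (Real.exp_ne_zero _), ← Real.exp_add]
      congr 1; ring
    have hE2 : Real.exp (-(θ*L)) = 1 / Real.exp (L*θ) := by
      rw [show -(θ*L) = -(L*θ) by ring, Real.exp_neg, inv_eq_one_div]
    rw [hE1, hE2] at hkey
    have hfac : (0:ℝ) < Real.exp (L*θ) / (θ^3 * (1-θ)^3) :=
      div_pos (Real.exp_pos _) (mul_pos (pow_pos h0 3) (pow_pos h1 3))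
    have hprod := mul_nonneg hkey hfac.le
    have heq : g2 θ = (-(L^2*θ^2*(1-θ)^2) + 2*L*θ*(1-θ)*((1-θ)-θ) - 2*(θ^3+(1-θ)^3)
        + 2*θ^3*(Real.exp L / Real.exp (L*θ)) + 2*(1-θ)^3*(1 / Real.exp (L*θ)))
        * (Real.exp (L*θ) / (θ^3 * (1-θ)^3)) := by
      simp only [hg2]
      field_simp
      ring
    rw [heq]
    exact hprod
  have hev : ∀ x ∈ Ioo (0:ℝ) 1, deriv h =ᶠ[nhds x] g1 := fun x hx =>
    Filter.eventuallyEq_of_mem (isOpen_Ioo.mem_nhds hx) (fun y hy => (hder1 y hy).deriv)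
  apply convexOn_of_deriv2_nonneg (convex_Ioo 0 1)
  · exact fun x hx => (hder1 x hx).differentiableAt.continuousAt.continuousWithinAt
  · rw [interior_Ioo]
    exact fun x hx => (hder1 x hx).differentiableAt.differentiableWithinAt
  · rw [interior_Ioo]
    intro x hx
    exact (((hev x hx).differentiableAt_iff).mpr (hder2 x hx).differentiableAt).differentiableWithinAt
  · rw [interior_Ioo]
    intro x hx
    have h2eq : deriv^[2] h x = deriv (deriv h) x := by
      rw [Function.iterate_succ_apply', Function.iterate_one]
    rw [h2eq, (hev x hx).deriv_eq, (hder2 x hx).deriv]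
    exact hnonneg x hx

/-- For `u > 0`, the function `θ ↦ (1 + u − u^θ − u^{1−θ}) / (θ(1−θ))` is convex
on the open interval `(0,1)`. -/
theorem convexOn_logSobolev_aux (u : ℝ) (hu : 0 < u) :
    ConvexOn ℝ (Set.Ioo (0 : ℝ) 1)
      (fun θ : ℝ => (1 + u - u ^ θ - u ^ (1 - θ)) / (θ * (1 - θ))) := by
  set L := Real.log u with hL
  have hc1 := convexOn_h L
  set h : ℝ → ℝ := fun θ : ℝ => (Real.exp L - Real.exp (L*θ))/(1-θ) + (1 - Real.exp (L*θ))/θ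
    with hh
  have hc2 : ConvexOn ℝ (Set.Ioo (0:ℝ) 1) (fun θ : ℝ => h (1 - θ)) := by
    constructor
    · exact convex_Ioo 0 1
    · intro x hx y hy a b ha hb hab
      have hx' : 1 - x ∈ Ioo (0:ℝ) 1 := ⟨by linarith [hx.2], by linarith [hx.1]⟩
      have hy' : 1 - y ∈ Ioo (0:ℝ) 1 := ⟨by linarith [hy.2], by linarith [hy.1]⟩
      have hthis := hc1.2 hx' hy' ha hb hab
      have harg : a • (1 - x) + b • (1 - y) = 1 - (a • x + b • y) := by
        simp only [smul_eq_mul]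
        linear_combination hab
      rw [harg] at hthis
      exact hthis
  have hsum := hc1.add hc2
  have heq : ∀ z ∈ Ioo (0:ℝ) 1,
      h z + h (1 - z) = (1 + u - u ^ z - u ^ (1 - z)) / (z * (1 - z)) := by
    intro z hz
    have h0 : z ≠ 0 := ne_of_gt hz.1
    have h1 : (1:ℝ) - z ≠ 0 := sub_ne_zero.mpr (ne_of_gt hz.2)
    have hu1 : u ^ z = Real.exp (L * z) := by
      rw [hL, Real.rpow_def_of_pos hu]
    have hu2 : u ^ (1 - z) = Real.exp (L * (1 - z)) := by
      rw [hL, Real.rpow_def_of_pos hu]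
    have hu3 : u = Real.exp L := (Real.exp_log hu).symm
    simp only [hh]
    rw [hu1, hu2, hu3]
    have h1z : (1:ℝ) - (1 - z) = z := by ring
    rw [h1z]
    field_simp
    ring
  constructor
  · exact convex_Ioo 0 1
  · intro x hx y hy a b ha hb hab
    have hmem : a • x + b • y ∈ Ioo (0:ℝ) 1 := (convex_Ioo 0 1) hx hy ha hb hab
    have key := hsum.2 hx hy ha hb hab
    simp only [Pi.add_apply, smul_eq_mul] at key ⊢
    simp only [smul_eq_mul] at hmem
    rw [← heq _ hmem, ← heq _ hx, ← heq _ hy]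
    linarith [key]
end

section
/- Let u > 0. Then the function q ↦ (q²/(q−1)) · (1 + u − u^{1/q} − u^{1−1/q}) is monotone nondecreasing on the interval [2, ∞). -/
section LogSobolevAux
open Real Set

noncomputable def phiLS (x : ℝ) : ℝ := Real.log (Real.exp x - 1) - Real.log x

lemma exp_sub_one_pos_LS {x : ℝ} (hx : 0 < x) : 0 < Real.exp x - 1 := by
  rw [sub_pos]
  exact Real.one_lt_exp_iff.mpr hx

lemma hasDerivAt_phiLS {x : ℝ} (hx : 0 < x) :
    HasDerivAt phiLS (exp x / (exp x - 1) - x⁻¹) x := by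
  have h1 : HasDerivAt (fun y => Real.log (Real.exp y - 1)) (exp x / (exp x - 1)) x := by
    have := ((Real.hasDerivAt_exp x).sub_const 1).log (exp_sub_one_pos_LS hx).ne'
    simpa using this
  exact h1.sub (Real.hasDerivAt_log hx.ne')

noncomputable def phiLS' (x : ℝ) : ℝ := exp x / (exp x - 1) - x⁻¹

lemma hasDerivAt_phiLS' {x : ℝ} (hx : 0 < x) :
    HasDerivAt phiLS' (-(exp x / (exp x - 1) ^ 2) + (x ^ 2)⁻¹) x := by
  have h1 : HasDerivAt (fun y => exp y / (exp y - 1)) (-(exp x / (exp x - 1) ^ 2)) x := by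
    have := (Real.hasDerivAt_exp x).div ((Real.hasDerivAt_exp x).sub_const 1)
      (exp_sub_one_pos_LS hx).ne'
    rw [show (-(exp x / (exp x - 1) ^ 2)) = ((exp x * (exp x - 1) - exp x * exp x) / (exp x - 1) ^ 2) by ring]
    exact this
  have h2 : HasDerivAt (fun y : ℝ => y⁻¹) (-(x ^ 2)⁻¹) x := hasDerivAt_inv hx.ne'
  have := h1.sub h2
  rw [sub_neg_eq_add] at this
  exact this

lemma sq_exp_le_LS {x : ℝ} (hx : 0 < x) : exp x * x ^ 2 ≤ (exp x - 1) ^ 2 := by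
  have hs : x / 2 < Real.sinh (x / 2) := Real.self_lt_sinh_iff.mpr (by linarith)
  rw [Real.sinh_eq] at hs
  have h1 : x * exp (x / 2) ≤ exp x - 1 := by
    have h2 : x ≤ exp (x / 2) - exp (-(x / 2)) := by linarith
    have h3 : x * exp (x / 2) ≤ (exp (x / 2) - exp (-(x / 2))) * exp (x / 2) :=
      mul_le_mul_of_nonneg_right h2 (exp_pos _).le
    calc x * exp (x / 2) ≤ (exp (x / 2) - exp (-(x / 2))) * exp (x / 2) := h3
      _ = exp x - 1 := by rw [sub_mul, ← Real.exp_add, ← Real.exp_add]; norm_num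
  have h0 : 0 ≤ x * exp (x / 2) := by positivity
  have := mul_self_le_mul_self h0 h1
  have hxx : exp (x / 2) * exp (x / 2) = exp x := by rw [← Real.exp_add]; ring_nf
  nlinarith [this]

lemma convexOn_phiLS : ConvexOn ℝ (Ioi 0) phiLS := by
  have hO : interior (Ioi (0:ℝ)) = Ioi 0 := interior_Ioi
  have hderiv : ∀ x ∈ Ioi (0:ℝ), deriv phiLS x = phiLS' x := fun x hx =>
    (hasDerivAt_phiLS hx).deriv
  refine convexOn_of_deriv2_nonneg (convex_Ioi 0)
    (fun x hx => (hasDerivAt_phiLS hx).continuousAt.continuousWithinAt) ?_ ?_ ?_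
  · rw [hO]
    exact fun x hx => (hasDerivAt_phiLS hx).differentiableAt.differentiableWithinAt
  · rw [hO]
    intro x hx
    have hev : deriv phiLS =ᶠ[nhds x] phiLS' :=
      Filter.eventuallyEq_of_mem (isOpen_Ioi.mem_nhds hx) hderiv
    exact (hev.differentiableAt_iff.mpr (hasDerivAt_phiLS' hx).differentiableAt).differentiableWithinAt
  · rw [hO]
    intro x hx
    have hev : deriv phiLS =ᶠ[nhds x] phiLS' :=
      Filter.eventuallyEq_of_mem (isOpen_Ioi.mem_nhds hx) hderiv
    have : deriv (deriv phiLS) x = -(exp x / (exp x - 1) ^ 2) + (x ^ 2)⁻¹ := by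
      rw [hev.deriv_eq]
      exact (hasDerivAt_phiLS' hx).deriv
    simp only [Function.iterate_succ, Function.iterate_zero, Function.comp_apply, id_eq]
    rw [this]
    have hx' : (0:ℝ) < x := hx
    have hd : (0:ℝ) < (exp x - 1) ^ 2 := pow_pos (exp_sub_one_pos_LS hx) 2
    have : exp x / (exp x - 1) ^ 2 ≤ (x ^ 2)⁻¹ := by
      rw [div_le_iff₀ hd, inv_mul_eq_div, le_div_iff₀ (by positivity : (0:ℝ) < x ^ 2)]
      linarith [sq_exp_le_LS hx']
    linarith

lemma four_point_LS {S : Set ℝ} {f : ℝ → ℝ} (hf : ConvexOn ℝ S f)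
    {x₁ x₂ y₂ y₁ : ℝ} (hx₁ : x₁ ∈ S) (hy₁ : y₁ ∈ S)
    (h12 : x₁ ≤ x₂) (h2 : x₂ ≤ y₂) (hy : y₂ ≤ y₁) (hsum : x₁ + y₁ = x₂ + y₂) :
    f x₂ + f y₂ ≤ f x₁ + f y₁ := by
  rcases eq_or_lt_of_le (h12.trans (h2.trans hy)) with heq | hlt
  · have e1 : x₂ = x₁ := le_antisymm (by linarith) h12
    have e2 : y₂ = y₁ := by linarith
    rw [e1, e2]
  · set d := y₁ - x₁ with hd
    have hd0 : 0 < d := by simp only [hd]; linarith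
    set l := (y₁ - x₂) / d with hl
    set m := (x₂ - x₁) / d with hm
    have hl0 : 0 ≤ l := div_nonneg (by linarith) hd0.le
    have hm0 : 0 ≤ m := div_nonneg (by linarith) hd0.le
    have hlm : l + m = 1 := by rw [hl, hm, ← add_div, div_eq_one_iff_eq hd0.ne', hd]; ring
    have e2 : x₂ = l * x₁ + m * y₁ := by rw [hl, hm, div_mul_eq_mul_div, div_mul_eq_mul_div, ← add_div, eq_div_iff hd0.ne', hd]; ring
    have e2' : y₂ = m * x₁ + l * y₁ := by
      have : y₂ = x₁ + y₁ - x₂ := by linarith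
      rw [this, e2]
      have : l * x₁ + m * x₁ = x₁ := by rw [← add_mul, hlm, one_mul]
      have h' : l * y₁ + m * y₁ = y₁ := by rw [← add_mul, hlm, one_mul]
      linarith
    have i1 := hf.2 hx₁ hy₁ hl0 hm0 hlm
    have i2 := hf.2 hx₁ hy₁ hm0 hl0 (by linarith)
    simp only [smul_eq_mul] at i1 i2
    rw [← e2] at i1
    rw [← e2'] at i2
    have hfx : l * f x₁ + m * f y₁ + (m * f x₁ + l * f y₁) = f x₁ + f y₁ := by
      have a1 : l * f x₁ + m * f x₁ = f x₁ := by rw [← add_mul, hlm, one_mul]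
      have a2 : l * f y₁ + m * f y₁ = f y₁ := by rw [← add_mul, hlm, one_mul]
      linarith
    linarith

lemma exp_phiLS {x : ℝ} (hx : 0 < x) : exp (phiLS x) = (exp x - 1) / x := by
  rw [phiLS, Real.exp_sub, Real.exp_log (exp_sub_one_pos_LS hx), Real.exp_log hx]

lemma convexOn_psiLS : ConvexOn ℝ (Iio 0) (fun x => x + phiLS (-x)) := by
  refine ⟨convex_Iio 0, ?_⟩
  intro x hx y hy p q hp hq hpq
  simp only [smul_eq_mul]
  have hx' : -x ∈ Ioi (0:ℝ) := by simp only [mem_Ioi]; simpa using hx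
  have hy' : -y ∈ Ioi (0:ℝ) := by simp only [mem_Ioi]; simpa using hy
  have := convexOn_phiLS.2 hx' hy' hp hq hpq
  simp only [smul_eq_mul] at this
  have h2 : phiLS (-(p * x + q * y)) ≤ p * phiLS (-x) + q * phiLS (-y) := by
    rw [show -(p * x + q * y) = p * -x + q * -y by ring]; exact this
  have expand : p * (x + phiLS (-x)) + q * (y + phiLS (-y))
      = (p * x + q * y) + (p * phiLS (-x) + q * phiLS (-y)) := by ring
  rw [expand]
  linarith

lemma exp_psiLS {x : ℝ} (hx : x < 0) : exp (x + phiLS (-x)) = (exp x - 1) / x := by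
  have hx0 : x ≠ 0 := ne_of_lt hx
  rw [Real.exp_add, exp_phiLS (by linarith : (0:ℝ) < -x)]
  have h1 : exp x * (exp (-x) - 1) = 1 - exp x := by
    rw [mul_sub, ← Real.exp_add]; simp
  calc exp x * ((exp (-x) - 1) / -x) = (exp x * (exp (-x) - 1)) / -x := by ring
    _ = (1 - exp x) / -x := by rw [h1]
    _ = (exp x - 1) / x := by
        rw [div_eq_div_iff (neg_ne_zero.mpr hx0) hx0]; ring

lemma Gprod_le_LS {a t t' : ℝ} (ha : a ≠ 0) (ht' : 0 < t') (htt' : t' ≤ t) (ht : t ≤ 1/2) :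
    (exp (a * t) - 1) / (a * t) * ((exp (a * (1 - t)) - 1) / (a * (1 - t)))
      ≤ (exp (a * t') - 1) / (a * t') * ((exp (a * (1 - t')) - 1) / (a * (1 - t'))) := by
  have ht0 : 0 < t := lt_of_lt_of_le ht' htt'
  have h1t : t ≤ 1 - t := by linarith
  have h1t' : 0 < 1 - t' := by linarith
  rcases ha.lt_or_gt with hneg | hpos
  · -- a < 0 : all four points negative, use psi on Iio 0
    have key := four_point_LS convexOn_psiLS
      (x₁ := a * (1 - t')) (x₂ := a * (1 - t)) (y₂ := a * t) (y₁ := a * t')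
      (by simp only [Set.mem_Iio]; exact mul_neg_of_neg_of_pos hneg h1t')
      (by simp only [Set.mem_Iio]; exact mul_neg_of_neg_of_pos hneg ht')
      (by nlinarith) (by nlinarith) (by nlinarith) (by ring)
    have e1 := exp_psiLS (mul_neg_of_neg_of_pos hneg ht0)
    have e2 := exp_psiLS (mul_neg_of_neg_of_pos hneg (by linarith : (0:ℝ) < 1 - t))
    have e3 := exp_psiLS (mul_neg_of_neg_of_pos hneg ht')
    have e4 := exp_psiLS (mul_neg_of_neg_of_pos hneg h1t')
    have L : (exp (a * t) - 1) / (a * t) * ((exp (a * (1 - t)) - 1) / (a * (1 - t)))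
        = exp ((a * (1 - t) + phiLS (-(a * (1 - t)))) + (a * t + phiLS (-(a * t)))) := by
      rw [Real.exp_add, e1, e2]; ring
    have R : (exp (a * t') - 1) / (a * t') * ((exp (a * (1 - t')) - 1) / (a * (1 - t')))
        = exp ((a * (1 - t') + phiLS (-(a * (1 - t')))) + (a * t' + phiLS (-(a * t')))) := by
      rw [Real.exp_add, e3, e4]; ring
    rw [L, R]
    exact Real.exp_le_exp.mpr key
  · -- a > 0 : all four points positive, use phi on Ioi 0
    have key := four_point_LS convexOn_phiLS
      (x₁ := a * t') (x₂ := a * t) (y₂ := a * (1 - t)) (y₁ := a * (1 - t'))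
      (by simp only [Set.mem_Ioi]; exact mul_pos hpos ht')
      (by simp only [Set.mem_Ioi]; exact mul_pos hpos h1t')
      (by nlinarith) (by nlinarith) (by nlinarith) (by ring)
    have e1 := exp_phiLS (mul_pos hpos ht0)
    have e2 := exp_phiLS (mul_pos hpos (by linarith : (0:ℝ) < 1 - t))
    have e3 := exp_phiLS (mul_pos hpos ht')
    have e4 := exp_phiLS (mul_pos hpos h1t')
    have L : (exp (a * t) - 1) / (a * t) * ((exp (a * (1 - t)) - 1) / (a * (1 - t)))
        = exp (phiLS (a * t) + phiLS (a * (1 - t))) := by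
      rw [Real.exp_add, e1, e2]
    have R : (exp (a * t') - 1) / (a * t') * ((exp (a * (1 - t')) - 1) / (a * (1 - t')))
        = exp (phiLS (a * t') + phiLS (a * (1 - t'))) := by
      rw [Real.exp_add, e3, e4]
    rw [L, R]
    exact Real.exp_le_exp.mpr key

lemma identity_LS {u : ℝ} (hu : 0 < u) (hu1 : u ≠ 1) {r : ℝ} (hr : 2 ≤ r) :
    r ^ 2 / (r - 1) * (1 + u - u ^ (1 / r) - u ^ (1 - 1 / r))
      = Real.log u ^ 2 * ((exp (Real.log u * (1 / r)) - 1) / (Real.log u * (1 / r))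
          * ((exp (Real.log u * (1 - 1 / r)) - 1) / (Real.log u * (1 - 1 / r)))) := by
  set a := Real.log u with ha
  have ha0 : a ≠ 0 := by
    intro h
    rcases Real.log_eq_zero.mp h with h' | h' | h' <;> simp_all <;> linarith
  have hr0 : r ≠ 0 := by linarith
  have hr1 : r - 1 ≠ 0 := by intro h; nlinarith
  have hr1' : 1 - 1 / r ≠ 0 := by
    rw [sub_ne_zero]
    intro h
    have : r = 1 := by field_simp at h; linarith
    linarith
  have hrw1 : u ^ (1 / r) = exp (a * (1 / r)) := by
    rw [Real.rpow_def_of_pos hu, ← ha, mul_comm]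
  have hrw2 : u ^ (1 - 1 / r) = exp (a * (1 - 1 / r)) := by
    rw [Real.rpow_def_of_pos hu, ← ha, mul_comm]
  have hue : u = exp a := (Real.exp_log hu).symm
  have hAB : exp (a * (1 / r)) * exp (a * (1 - 1 / r)) = exp a := by
    rw [← Real.exp_add]; congr 1; field_simp; ring
  rw [hrw1, hrw2]
  conv_lhs => rw [hue]
  set A := exp (a * (1 / r)) with hA
  set B := exp (a * (1 - 1 / r)) with hB
  rw [← hAB]
  have h1 : a * (1 / r) ≠ 0 := by
    apply mul_ne_zero ha0; simpa using hr0
  have h2 : a * (1 - 1 / r) ≠ 0 := mul_ne_zero ha0 hr1'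
  field_simp
  ring

end LogSobolevAux



/-- For `u > 0`, the function `q ↦ (q²/(q−1)) · (1 + u − u^{1/q} − u^{1−1/q})` is
monotone nondecreasing on `[2, ∞)`. -/
theorem monotoneOn_logSobolev_aux (u : ℝ) (hu : 0 < u) :
    MonotoneOn
      (fun q : ℝ => q ^ 2 / (q - 1) * (1 + u - u ^ (1 / q) - u ^ (1 - 1 / q)))
      (Set.Ici (2 : ℝ)) := by
  rcases eq_or_ne u 1 with rfl | hu1
  · intro q hq q' hq' hqq'
    simp [Real.one_rpow]
  · intro q hq q' hq' hqq'
    simp only [Set.mem_Ici] at hq hq'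
    simp only
    rw [identity_LS hu hu1 hq, identity_LS hu hu1 hq']
    set a := Real.log u with ha
    have ha0 : a ≠ 0 := by
      intro h
      rcases Real.log_eq_zero.mp h with h' | h' | h' <;> simp_all <;> linarith
    have hq0 : 0 < q := by linarith
    have hq'0 : 0 < q' := by linarith
    have h1 : 0 < 1 / q' := by positivity
    have h2 : 1 / q' ≤ 1 / q := by
      apply div_le_div_of_nonneg_left (by norm_num) hq0 hqq'
    have h3 : 1 / q ≤ 1 / 2 := by
      rw [div_le_div_iff₀ hq0 (by norm_num)]; linarith
    have := Gprod_le_LS ha0 h1 h2 h3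
    have ha2 : 0 ≤ a ^ 2 := sq_nonneg a
    exact mul_le_mul_of_nonneg_left this ha2
end

section
/- Let G be a type with a distinguished element e, let ψ : G → ℝ satisfy ψ(e) = 0 and ψ(g) ≥ 1 for all g ≠ e, and suppose there exist constants C > 0 and ρ > 1 such that for every R > 0 the set {g ∈ G : ψ(g) ≤ R} is finite with cardinality at most C·ρ^R. Then for every t ≥ log ρ, one has ∑_{g ≠ e} exp(−2t·ψ(g)) ≤ 2C·exp(−(2t − log ρ)). -/
open MeasureTheory Set Filter
open scoped ENNReal

lemma exp_tail_lintegral {s : ℝ} (hs : 0 < s) (a : ℝ) :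
    ∫⁻ u in Set.Ioi a, ENNReal.ofReal (s * Real.exp (-(s * u)))
      = ENNReal.ofReal (Real.exp (-(s * a))) := by
  have hint : IntegrableOn (fun u : ℝ => s * Real.exp (-(s * u))) (Set.Ioi a) := by
    simpa [neg_mul, IntegrableOn] using (exp_neg_integrableOn_Ioi a hs).const_mul s
  rw [← MeasureTheory.ofReal_integral_eq_lintegral_ofReal hint
    (ae_of_all _ fun u => by positivity)]
  congr 1
  have hderiv : ∀ x ∈ Set.Ici a, HasDerivAt (fun u : ℝ => -Real.exp (-(s * u)))
      (s * Real.exp (-(s * x))) x := by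
    intro x _
    have h1 : HasDerivAt (fun u : ℝ => -(s * u)) (-s) x := by
      exact ((hasDerivAt_id x).const_mul s).neg.congr_deriv (by ring)
    have h2 := h1.exp.neg
    exact h2.congr_deriv (by ring)
  have htend : Tendsto (fun u : ℝ => -Real.exp (-(s * u))) atTop (nhds 0) := by
    rw [show (0:ℝ) = -0 by ring]
    refine Tendsto.neg ?_
    refine Real.tendsto_exp_atBot.comp ?_
    simpa [neg_mul] using tendsto_id.const_mul_atTop_of_neg (neg_neg_iff_pos.2 hs)
  have := MeasureTheory.integral_Ioi_of_hasDerivAt_of_tendsto' hderiv hint htend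
  rw [this]; ring

/-- Combinatorial core of the final Proposition: if `ψ e = 0`, `ψ g ≥ 1` for `g ≠ e`, and
`|{g : ψ g ≤ R}| ≤ C ρ^R` for all `R > 0`, then for `t ≥ log ρ`,
`∑_{g ≠ e} exp(−2t·ψ(g)) ≤ 2C·exp(−(2t − log ρ))` (the possibly infinite sum taken
in `ℝ≥0∞`). -/
theorem exp_growth_summation_estimate {G : Type*} (e : G) (ψ : G → ℝ)
    (hψe : ψ e = 0) (hψ : ∀ g : G, g ≠ e → 1 ≤ ψ g)
    (C ρ : ℝ) (hC : 0 < C) (hρ : 1 < ρ)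
    (hgrowth : ∀ R : ℝ, 0 < R →
      {g : G | ψ g ≤ R}.Finite ∧ ({g : G | ψ g ≤ R}.ncard : ℝ) ≤ C * ρ ^ R)
    (t : ℝ) (ht : Real.log ρ ≤ t) :
    ∑' g : {g : G // g ≠ e}, ENNReal.ofReal (Real.exp (-(2 * t * ψ g)))
    ≤ ENNReal.ofReal (2 * C * Real.exp (-(2 * t - Real.log ρ))) := by
  set s : ℝ := 2 * t with hs_def
  have hρ0 : (0:ℝ) < ρ := lt_trans one_pos hρ
  have hlogρ : 0 < Real.log ρ := Real.log_pos hρ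
  have hslog : Real.log ρ < s := by simp only [hs_def]; nlinarith
  have hs : 0 < s := lt_trans hlogρ hslog
  set x : ℝ := s - Real.log ρ with hx_def
  have hx : 0 < x := by simp only [hx_def]; linarith
  -- countability of the index type
  have hcnt : {g : G | g ≠ e}.Countable := by
    have hsub : {g : G | g ≠ e} ⊆ ⋃ n : ℕ, {g : G | ψ g ≤ (n : ℝ) + 1} := by
      intro g _
      obtain ⟨n, hn⟩ := exists_nat_ge (ψ g)
      exact Set.mem_iUnion.2 ⟨n, by simpa using le_trans hn (by linarith)⟩
    exact ((Set.countable_iUnion fun n =>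
      ((hgrowth _ (by positivity)).1).countable).mono hsub)
  haveI : Countable {g : G // g ≠ e} := hcnt.to_subtype
  set f : ℝ → ℝ≥0∞ := fun u => ENNReal.ofReal (s * Real.exp (-(s * u))) with hf_def
  have hfm : Measurable f := by
    apply ENNReal.measurable_ofReal.comp
    fun_prop
  -- each term as a tail integral
  have key1 : ∀ g : {g : G // g ≠ e},
      ENNReal.ofReal (Real.exp (-(s * ψ g.1)))
        = ∫⁻ u, (Set.Ioi (ψ g.1)).indicator f u := by
    intro g
    rw [lintegral_indicator measurableSet_Ioi _, exp_tail_lintegral hs]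
  -- pointwise bound for the swapped sum
  have pointwise : ∀ u : ℝ, (∑' g : {g : G // g ≠ e}, (Set.Ioi (ψ g.1)).indicator f u)
      ≤ (Set.Ioi (1:ℝ)).indicator (fun u => ENNReal.ofReal (C * ρ ^ u) * f u) u := by
    intro u
    by_cases hu : 1 < u
    · rw [Set.indicator_of_mem (Set.mem_Ioi.2 hu)]
      have hfin := (hgrowth u (by linarith)).1
      have hncard := (hgrowth u (by linarith)).2
      set A : Set {g : G // g ≠ e} := {g | ψ g.1 < u} with hA_def
      have hAfin : A.Finite := by
        have hsub2 : A ⊆ Subtype.val ⁻¹' {g : G | ψ g ≤ u} := by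
          intro g hg
          simp only [Set.mem_preimage, Set.mem_setOf_eq] at *
          exact le_of_lt hg
        exact ((hfin.preimage Subtype.val_injective.injOn).subset hsub2)
      have hrw : ∀ g : {g : G // g ≠ e},
          (Set.Ioi (ψ g.1)).indicator f u = A.indicator (fun _ => f u) g := by
        intro g
        by_cases hg : ψ g.1 < u
        · rw [Set.indicator_of_mem (Set.mem_Ioi.2 hg),
            Set.indicator_of_mem (show g ∈ A from hg)]
        · rw [Set.indicator_of_notMem (by simpa using hg),
            Set.indicator_of_notMem (by simpa [hA_def] using hg)]
      calc (∑' g : {g : G // g ≠ e}, (Set.Ioi (ψ g.1)).indicator f u)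
          = ∑' g : {g : G // g ≠ e}, A.indicator (fun _ => f u) g := tsum_congr hrw
        _ = ∑ g ∈ hAfin.toFinset, A.indicator (fun _ => f u) g := by
            refine tsum_eq_sum ?_
            intro g hg
            exact Set.indicator_of_notMem (by simpa using hg) _
        _ = hAfin.toFinset.card • f u := by
            rw [← Finset.sum_const]
            refine Finset.sum_congr rfl fun g hg => ?_
            exact Set.indicator_of_mem (hAfin.mem_toFinset.1 hg) _
        _ = (A.ncard : ℝ≥0∞) * f u := by
            rw [nsmul_eq_mul, Set.ncard_eq_toFinset_card _ hAfin]
        _ ≤ ENNReal.ofReal (C * ρ ^ u) * f u := by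
            refine mul_le_mul_left ?_ _
            have h1 : (A.ncard : ℝ) ≤ ({g : G | ψ g ≤ u}.ncard : ℝ) := by
              have : A.ncard ≤ {g : G | ψ g ≤ u}.ncard := by
                have himg : A.ncard = (Subtype.val '' A).ncard :=
                  (Set.ncard_image_of_injective A Subtype.val_injective).symm
                rw [himg]
                refine Set.ncard_le_ncard ?_ hfin
                rintro _ ⟨g, hg, rfl⟩
                simp only [Set.mem_setOf_eq] at *
                exact le_of_lt hg
              exact_mod_cast this
            calc ((A.ncard : ℝ≥0∞)) = ENNReal.ofReal (A.ncard : ℝ) := by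
                  simp [ENNReal.ofReal_natCast]
              _ ≤ ENNReal.ofReal (C * ρ ^ u) :=
                  ENNReal.ofReal_le_ofReal (le_trans h1 hncard)
    · have hz : ∀ g : {g : G // g ≠ e}, (Set.Ioi (ψ g.1)).indicator f u = 0 := by
        intro g
        refine Set.indicator_of_notMem ?_ _
        simp only [Set.mem_Ioi, not_lt]
        linarith [hψ g.1 g.2]
      simp only [hz, tsum_zero]
      exact bot_le
  -- main calculation
  calc (∑' g : {g : G // g ≠ e}, ENNReal.ofReal (Real.exp (-(2 * t * ψ g.1))))
      = ∑' g : {g : G // g ≠ e}, ∫⁻ u, (Set.Ioi (ψ g.1)).indicator f u := by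
        refine tsum_congr fun g => ?_
        rw [← key1 g, hs_def]
    _ = ∫⁻ u, ∑' g : {g : G // g ≠ e}, (Set.Ioi (ψ g.1)).indicator f u :=
        (lintegral_tsum fun g => (hfm.indicator measurableSet_Ioi).aemeasurable).symm
    _ ≤ ∫⁻ u, (Set.Ioi (1:ℝ)).indicator (fun u => ENNReal.ofReal (C * ρ ^ u) * f u) u :=
        lintegral_mono pointwise
    _ = ∫⁻ u in Set.Ioi (1:ℝ), ENNReal.ofReal (C * ρ ^ u) * f u :=
        lintegral_indicator measurableSet_Ioi _
    _ = ∫⁻ u in Set.Ioi (1:ℝ),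
          ENNReal.ofReal (C * s / x) * ENNReal.ofReal (x * Real.exp (-(x * u))) := by
        refine lintegral_congr fun u => ?_
        rw [hf_def, ← ENNReal.ofReal_mul (by positivity), ← ENNReal.ofReal_mul (by positivity)]
        congr 1
        rw [Real.rpow_def_of_pos hρ0]
        have hE : Real.exp (Real.log ρ * u) * Real.exp (-(s * u))
            = Real.exp (-(x * u)) := by
          rw [← Real.exp_add]; congr 1; simp only [hx_def]; ring
        have h3 : C * s / x * (x * Real.exp (-(x * u))) = C * s * Real.exp (-(x * u)) := by
          field_simp
        rw [h3, ← hE]; ring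
    _ = ENNReal.ofReal (C * s / x) * ENNReal.ofReal (Real.exp (-(x * 1))) := by
        rw [lintegral_const_mul' _ _ ENNReal.ofReal_ne_top, exp_tail_lintegral hx]
    _ ≤ ENNReal.ofReal (2 * C * Real.exp (-(2 * t - Real.log ρ))) := by
        rw [← ENNReal.ofReal_mul (by positivity)]
        refine ENNReal.ofReal_le_ofReal ?_
        have hxe : -(x * 1) = -(2 * t - Real.log ρ) := by rw [hx_def, hs_def]; ring
        rw [hxe]
        have h2 : C * s / x ≤ 2 * C := by
          rw [div_le_iff₀ hx]
          simp only [hx_def, hs_def]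
          nlinarith
        have := Real.exp_pos (-(2 * t - Real.log ρ))
        nlinarith
end
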